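/- arXiv:2111.07111 — 6 statements merged into one kernel-verified Lean document; each statement's English description precedes it below -/
import Mathlib

section
/- For every complex-valued function g that is twice continuously differentiable on the closed interval [0,1], one has ∫₀¹ |g(r)|²·r dr ≤ ∫₀¹ |(d/dr)(r·g(r))|²·(1/r) dr, where the right-hand side is allowed to be +∞. (Lemma A.1, first part.) -/
open MeasureTheory Filter Topology

/-- One-sided derivative on `(0,1]`. -/
noncomputable def dz (g : ℝ → ℂ) : ℝ → ℂ := derivWithin g (Set.Ioc 0 1)

/-- Weighted integral over `(0,1)` with values in `[0,∞]`. -/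
noncomputable def wInt (h : ℝ → ℝ) : ENNReal :=
  ∫⁻ r in Set.Ioo (0 : ℝ) 1, ENNReal.ofReal (h r)

/-- Lemma A.1, first part: for `g` twice continuously differentiable on `[0,1]`,
`∫₀¹ |g|² r dr ≤ ∫₀¹ |(d/dr)(r g)|² (1/r) dr`, the right-hand side possibly `+∞`. -/
theorem poincare_weighted (g : ℝ → ℂ) (hg : ContDiffOn ℝ 2 g (Set.Icc 0 1)) :
    wInt (fun r => ‖g r‖ ^ 2 * r)
      ≤ wInt (fun r => ‖dz (fun s => (s : ℂ) * g s) r‖ ^ 2 / r) := by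
  set u : ℝ → ℂ := fun s => (s : ℂ) * g s with hu_def
  have hu : ContDiffOn ℝ 2 u (Set.Icc 0 1) :=
    ((Complex.ofRealCLM.contDiff.of_le le_top).contDiffOn).mul hg
  set w : ℝ → ℂ := derivWithin u (Set.Icc 0 1) with hw_def
  have huniq : UniqueDiffOn ℝ (Set.Icc (0:ℝ) 1) := uniqueDiffOn_Icc one_pos
  have hwcont : ContinuousOn w (Set.Icc 0 1) :=
    (ContDiffOn.derivWithin (m := 1) hu huniq (by norm_num)).continuousOn
  have hderiv : ∀ x ∈ Set.Ioo (0:ℝ) 1, HasDerivAt u (w x) x := by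
    intro x hx
    have h1 : Set.Icc (0:ℝ) 1 ∈ 𝓝 x := Icc_mem_nhds hx.1 hx.2
    exact ((hu.differentiableOn (by norm_num) x
      (Set.Ioo_subset_Icc_self hx)).hasDerivWithinAt).hasDerivAt h1
  have hdz : ∀ x ∈ Set.Ioo (0:ℝ) 1, dz u x = w x := by
    intro x hx
    have h1 : Set.Ioc (0:ℝ) 1 ∈ 𝓝 x :=
      mem_nhds_iff.2 ⟨Set.Ioo 0 1, Set.Ioo_subset_Ioc_self, isOpen_Ioo, hx⟩
    have h2 : Set.Icc (0:ℝ) 1 ∈ 𝓝 x := Icc_mem_nhds hx.1 hx.2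
    rw [dz, derivWithin_of_mem_nhds h1, hw_def, derivWithin_of_mem_nhds h2]
  set A : ENNReal := wInt (fun r => ‖dz u r‖ ^ 2 / r) with hA
  have hFTC : ∀ r ∈ Set.Ioo (0:ℝ) 1, u r = ∫ s in (0:ℝ)..r, w s := by
    intro r hr
    have h0r : (0:ℝ) ≤ r := hr.1.le
    have hsub : Set.Icc (0:ℝ) r ⊆ Set.Icc 0 1 := Set.Icc_subset_Icc le_rfl hr.2.le
    have hint : IntervalIntegrable w volume 0 r := by
      rw [intervalIntegrable_iff_integrableOn_Icc_of_le h0r]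
      exact (hwcont.mono hsub).integrableOn_compact isCompact_Icc
    have := intervalIntegral.integral_eq_sub_of_hasDeriv_right_of_le h0r
      (hu.continuousOn.mono hsub)
      (fun x hx => ((hderiv x ⟨hx.1, hx.2.trans hr.2⟩).hasDerivWithinAt)) hint
    have hu0 : u 0 = 0 := by simp [hu_def]
    rw [this, hu0, sub_zero]
  have key : ∀ r ∈ Set.Ioo (0:ℝ) 1,
      ENNReal.ofReal (‖g r‖ ^ 2 * r) ≤ ENNReal.ofReal r * A := by
    intro r hr
    have hr0 : 0 < r := hr.1
    have hsub1 : Set.Ioc (0:ℝ) r ⊆ Set.Ioo 0 1 :=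
      fun x hx => ⟨hx.1, lt_of_le_of_lt hx.2 hr.2⟩
    have hsubIcc : Set.Ioc (0:ℝ) r ⊆ Set.Icc 0 1 :=
      fun x hx => ⟨(hsub1 hx).1.le, (hsub1 hx).2.le⟩
    -- step 1
    have hwn_int : IntegrableOn (fun s => ‖w s‖) (Set.Ioc 0 r) := by
      have : IntegrableOn (fun s => ‖w s‖) (Set.Icc 0 r) :=
        ((hwcont.mono (Set.Icc_subset_Icc le_rfl hr.2.le)).norm).integrableOn_compact
          isCompact_Icc
      exact this.mono_set Set.Ioc_subset_Icc_self
    have h1 : ENNReal.ofReal ‖u r‖ ≤ ∫⁻ s in Set.Ioc 0 r, ENNReal.ofReal ‖w s‖ := by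
      have hle : ‖u r‖ ≤ ∫ s in Set.Ioc 0 r, ‖w s‖ := by
        rw [hFTC r hr]
        calc ‖∫ s in (0:ℝ)..r, w s‖ ≤ ∫ s in (0:ℝ)..r, ‖w s‖ :=
              intervalIntegral.norm_integral_le_integral_norm hr.1.le
          _ = ∫ s in Set.Ioc 0 r, ‖w s‖ := intervalIntegral.integral_of_le hr.1.le
      calc ENNReal.ofReal ‖u r‖ ≤ ENNReal.ofReal (∫ s in Set.Ioc 0 r, ‖w s‖) :=
            ENNReal.ofReal_le_ofReal hle
        _ = ∫⁻ s in Set.Ioc 0 r, ENNReal.ofReal ‖w s‖ :=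
            ofReal_integral_eq_lintegral_ofReal hwn_int
              (Filter.Eventually.of_forall fun s => norm_nonneg _)
    -- step 2 : Hölder
    set f1 : ℝ → ENNReal := fun s => ENNReal.ofReal (Real.sqrt s) with hf1_def
    set f2 : ℝ → ENNReal := fun s => ENNReal.ofReal (‖w s‖ / Real.sqrt s) with hf2_def
    have hf1 : AEMeasurable f1 (volume.restrict (Set.Ioc 0 r)) :=
      (ENNReal.measurable_ofReal.comp Real.continuous_sqrt.measurable).aemeasurable
    have hf2 : AEMeasurable f2 (volume.restrict (Set.Ioc 0 r)) := by
      have hc : ContinuousOn (fun s => ‖w s‖ / Real.sqrt s) (Set.Ioc 0 r) :=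
        ((hwcont.mono hsubIcc).norm).div (Real.continuous_sqrt.continuousOn)
          (fun x hx => (Real.sqrt_pos.2 hx.1).ne')
      exact (ENNReal.continuous_ofReal.comp_continuousOn hc).aemeasurable measurableSet_Ioc
    have hpq : Real.HolderConjugate 2 2 := Real.HolderConjugate.two_two
    have holder := ENNReal.lintegral_mul_le_Lp_mul_Lq
      (volume.restrict (Set.Ioc 0 r)) hpq hf1 hf2
    have heq1 : ∫⁻ s in Set.Ioc 0 r, ENNReal.ofReal ‖w s‖
        = ∫⁻ s in Set.Ioc 0 r, (f1 * f2) s := by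
      refine setLIntegral_congr_fun measurableSet_Ioc
        (fun s hs => ?_)
      have hs0 : (0:ℝ) < Real.sqrt s := Real.sqrt_pos.2 hs.1
      simp only [hf1_def, hf2_def, Pi.mul_apply]
      rw [← ENNReal.ofReal_mul (Real.sqrt_nonneg s)]
      congr 1
      field_simp
    have heq2 : ∫⁻ s in Set.Ioc 0 r, f1 s ^ (2:ℝ) ≤ ENNReal.ofReal r * ENNReal.ofReal r := by
      have hb : ∀ s ∈ Set.Ioc (0:ℝ) r, f1 s ^ (2:ℝ) ≤ ENNReal.ofReal r := by
        intro s hs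
        rw [hf1_def]
        rw [ENNReal.ofReal_rpow_of_nonneg (Real.sqrt_nonneg s) (by norm_num)]
        apply ENNReal.ofReal_le_ofReal
        rw [show ((2:ℝ)) = ((2:ℕ):ℝ) by norm_num, Real.rpow_natCast,
          Real.sq_sqrt hs.1.le]
        exact hs.2
      calc ∫⁻ s in Set.Ioc 0 r, f1 s ^ (2:ℝ)
          ≤ ∫⁻ _ in Set.Ioc 0 r, ENNReal.ofReal r := setLIntegral_mono' measurableSet_Ioc hb
        _ = ENNReal.ofReal r * volume (Set.Ioc (0:ℝ) r) := by
            rw [setLIntegral_const]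
        _ = ENNReal.ofReal r * ENNReal.ofReal r := by
            rw [Real.volume_Ioc, sub_zero]
    have heq3 : ∫⁻ s in Set.Ioc 0 r, f2 s ^ (2:ℝ) ≤ A := by
      have hcong : ∫⁻ s in Set.Ioc 0 r, f2 s ^ (2:ℝ)
          = ∫⁻ s in Set.Ioc 0 r, ENNReal.ofReal (‖dz u s‖ ^ 2 / s) := by
        refine setLIntegral_congr_fun measurableSet_Ioc
          (fun s hs => ?_)
        rw [hf2_def, hdz s (hsub1 hs)]
        rw [ENNReal.ofReal_rpow_of_nonneg (by positivity) (by norm_num)]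
        congr 1
        rw [show ((2:ℝ)) = ((2:ℕ):ℝ) by norm_num, Real.rpow_natCast, div_pow,
          Real.sq_sqrt hs.1.le]
      rw [hcong, hA, wInt]
      exact lintegral_mono_set hsub1
    have hX : ENNReal.ofReal ‖u r‖
        ≤ (ENNReal.ofReal r * ENNReal.ofReal r) ^ (1/2 : ℝ) * A ^ (1/2 : ℝ) := by
      refine h1.trans ?_
      rw [heq1]
      refine holder.trans ?_
      rw [one_div]  -- ?
      exact mul_le_mul' (ENNReal.rpow_le_rpow heq2 (by norm_num))
        (ENNReal.rpow_le_rpow heq3 (by norm_num))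
    have hX2 : ENNReal.ofReal (‖u r‖ ^ 2) ≤ ENNReal.ofReal r * ENNReal.ofReal r * A := by
      have := pow_le_pow_left₀ zero_le hX 2
      rw [← ENNReal.ofReal_pow (norm_nonneg _)] at this
      refine le_trans this ?_
      rw [mul_pow, ← ENNReal.rpow_natCast (_ ^ (1/2:ℝ)) 2, ← ENNReal.rpow_natCast (A ^ (1/2:ℝ)) 2,
        ← ENNReal.rpow_mul, ← ENNReal.rpow_mul]
      norm_num
    -- conclude
    have hnorm : ‖u r‖ = r * ‖g r‖ := by
      rw [hu_def]
      simp [Complex.norm_real, abs_of_pos hr0, norm_mul]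
    have hval : ‖g r‖ ^ 2 * r = ‖u r‖ ^ 2 / r := by
      rw [hnorm]
      field_simp
    rw [hval, ENNReal.ofReal_div_of_pos hr0]
    calc ENNReal.ofReal (‖u r‖ ^ 2) / ENNReal.ofReal r
        ≤ ENNReal.ofReal r * ENNReal.ofReal r * A / ENNReal.ofReal r :=
          ENNReal.div_le_div_right hX2 _
      _ = ENNReal.ofReal r * A := by
          rw [mul_assoc, mul_comm (ENNReal.ofReal r) (ENNReal.ofReal r * A),
            mul_div_assoc, ENNReal.div_self (ENNReal.ofReal_pos.2 hr0).ne'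
              ENNReal.ofReal_ne_top, mul_one]
  -- final assembly
  rw [wInt]
  calc ∫⁻ r in Set.Ioo (0:ℝ) 1, ENNReal.ofReal (‖g r‖ ^ 2 * r)
      ≤ ∫⁻ r in Set.Ioo (0:ℝ) 1, ENNReal.ofReal r * A :=
        setLIntegral_mono' measurableSet_Ioo key
    _ = (∫⁻ r in Set.Ioo (0:ℝ) 1, ENNReal.ofReal r) * A :=
        lintegral_mul_const A ENNReal.measurable_ofReal
    _ ≤ 1 * A := by
        refine mul_le_mul_left ?_ A
        calc ∫⁻ r in Set.Ioo (0:ℝ) 1, ENNReal.ofReal r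
            ≤ ∫⁻ _ in Set.Ioo (0:ℝ) 1, 1 :=
              setLIntegral_mono' measurableSet_Ioo
                (fun x hx => by simpa using ENNReal.ofReal_le_one.2 hx.2.le)
          _ = volume (Set.Ioo (0:ℝ) 1) := by rw [setLIntegral_one]
          _ = 1 := by rw [Real.volume_Ioo]; norm_num
    _ = A := one_mul A
end

section
/- Let g be a complex-valued function, twice continuously differentiable on [0,1], with g(0) = g(1) = 0. Then ∫₀¹ |(d/dr)(r·g(r))|²·(1/r) dr ≤ (∫₀¹ |(𝓛g)(r)|²·r dr)^{1/2}·(∫₀¹ |g(r)|²·r dr)^{1/2} ≤ ∫₀¹ |(𝓛g)(r)|²·r dr, where all quantities are interpreted in [0,+∞]. (Lemma A.1, second part.) -/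
open MeasureTheory Filter Set Topology
open scoped ENNReal NNReal

namespace PAux


lemma rpow_half_sq (x : ℝ≥0∞) : x ^ ((1:ℝ)/2) * x ^ ((1:ℝ)/2) = x := by
  rw [← pow_two, ← ENNReal.rpow_natCast (x ^ ((1:ℝ)/2)) 2, ← ENNReal.rpow_mul]
  norm_num

lemma sq_rpow_half (x : ℝ≥0∞) : (x * x) ^ ((1:ℝ)/2) = x := by
  rw [← pow_two, ← ENNReal.rpow_natCast x 2, ← ENNReal.rpow_mul]
  norm_num

lemma holder2 {μ : Measure ℝ} (f h : ℝ → ℝ≥0∞) (hf : AEMeasurable f μ)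
    (hh : AEMeasurable h μ) :
    ∫⁻ r, f r * h r ∂μ
      ≤ (∫⁻ r, f r ^ 2 ∂μ) ^ ((1:ℝ)/2) * (∫⁻ r, h r ^ 2 ∂μ) ^ ((1:ℝ)/2) := by
  have hpq : Real.HolderConjugate 2 2 := Real.HolderConjugate.two_two
  have H := ENNReal.lintegral_mul_le_Lp_mul_Lq μ hpq hf hh
  have e : ∀ (k : ℝ → ℝ≥0∞), ∫⁻ r, k r ^ (2:ℝ) ∂μ = ∫⁻ r, k r ^ 2 ∂μ := by
    intro k
    refine lintegral_congr fun r => ?_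
    rw [show (2:ℝ) = ((2:ℕ):ℝ) by norm_num, ENNReal.rpow_natCast]
  simpa [e] using H

lemma ofReal_intervalIntegral {a b : ℝ} (f : ℝ → ℝ) (hab : a ≤ b)
    (hf : ContinuousOn f (Icc a b)) (h0 : ∀ x ∈ Ioo a b, 0 ≤ f x) :
    ENNReal.ofReal (∫ x in a..b, f x) = ∫⁻ x in Ioo a b, ENNReal.ofReal (f x) := by
  rw [intervalIntegral.integral_of_le hab, integral_Ioc_eq_integral_Ioo,
    ofReal_integral_eq_lintegral_ofReal
      ((hf.integrableOn_Icc).mono_set Ioo_subset_Icc_self)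
      ((ae_restrict_iff' measurableSet_Ioo).2 (ae_of_all _ h0))]

/-- Hardy-type inequality: `∫ r |g|² ≤ ∫ |(rg)'|²/r`. -/
lemma key2 (g G1 : ℝ → ℂ)
    (hgc : ContinuousOn g (Icc 0 1))
    (hU1c : ContinuousOn (fun s : ℝ => g s + (s:ℂ) * G1 s) (Icc 0 1))
    (hdu : ∀ r ∈ Ioo (0:ℝ) 1,
      HasDerivAt (fun s : ℝ => (s:ℂ) * g s) (g r + (r:ℂ) * G1 r) r) :
    (∫⁻ r in Ioo (0:ℝ) 1, ENNReal.ofReal (‖g r‖^2 * r))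
      ≤ ∫⁻ r in Ioo (0:ℝ) 1, ENNReal.ofReal (‖g r + (r:ℂ) * G1 r‖^2 / r) := by
  set U1 : ℝ → ℂ := fun s : ℝ => g s + (s:ℂ) * G1 s with hU1def
  set C : ℝ≥0∞ := ∫⁻ r in Ioo (0:ℝ) 1, ENNReal.ofReal (‖U1 r‖^2 / r) with hCdef
  have key : ∀ r ∈ Ioo (0:ℝ) 1, ENNReal.ofReal (‖g r‖^2 * r) ≤ C := by
    intro r hr
    have hr0 : (0:ℝ) < r := hr.1
    have hsub : Icc (0:ℝ) r ⊆ Icc 0 1 := Icc_subset_Icc le_rfl hr.2.le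
    have hU1cr : ContinuousOn U1 (Icc 0 r) := hU1c.mono hsub
    -- FTC : r * g r = ∫ 0..r U1
    have hftc : (∫ s in (0:ℝ)..r, U1 s) = (r:ℂ) * g r := by
      have hcont : ContinuousOn (fun s : ℝ => (s:ℂ) * g s) (Icc 0 r) :=
        (Complex.continuous_ofReal.continuousOn).mul (hgc.mono hsub)
      have hint : IntervalIntegrable U1 volume 0 r := by
        apply ContinuousOn.intervalIntegrable
        rwa [uIcc_of_le hr0.le]
      have := intervalIntegral.integral_eq_sub_of_hasDerivAt_of_le hr0.le hcont
        (fun x hx => hdu x ⟨hx.1, hx.2.trans hr.2⟩) hint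
      simpa using this
    have hnorm : ‖(r:ℂ) * g r‖ ≤ ∫ s in (0:ℝ)..r, ‖U1 s‖ := by
      rw [← hftc]
      exact intervalIntegral.norm_integral_le_integral_norm hr0.le
    have hnn : ∀ x ∈ Ioo (0:ℝ) r, 0 ≤ ‖U1 x‖ := fun x _ => norm_nonneg _
    have h1 : ENNReal.ofReal (∫ s in (0:ℝ)..r, ‖U1 s‖)
        = ∫⁻ s in Ioo (0:ℝ) r, ENNReal.ofReal ‖U1 s‖ :=
      ofReal_intervalIntegral _ hr0.le hU1cr.norm hnn
    -- Hölder on (0, r)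
    have h2 : (∫⁻ s in Ioo (0:ℝ) r, ENNReal.ofReal ‖U1 s‖)
        ≤ C ^ ((1:ℝ)/2) * ENNReal.ofReal r := by
      set f : ℝ → ℝ≥0∞ := fun s => ENNReal.ofReal (‖U1 s‖ / Real.sqrt s) with hfdef
      set h : ℝ → ℝ≥0∞ := fun s => ENNReal.ofReal (Real.sqrt s) with hhdef
      have hfm : AEMeasurable f (volume.restrict (Ioo (0:ℝ) r)) := by
        apply ENNReal.measurable_ofReal.comp_aemeasurable
        apply ContinuousOn.aemeasurable _ measurableSet_Ioo
        exact ((hU1cr.mono Ioo_subset_Icc_self).norm).div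
          (Real.continuous_sqrt.continuousOn)
          (fun s hs => (Real.sqrt_pos.2 hs.1).ne')
      have hhm : AEMeasurable h (volume.restrict (Ioo (0:ℝ) r)) :=
        ENNReal.measurable_ofReal.comp_aemeasurable
          Real.continuous_sqrt.aemeasurable
      have hpt : ∀ s ∈ Ioo (0:ℝ) r, ENNReal.ofReal ‖U1 s‖ = f s * h s := by
        intro s hs
        have hs0 : (0:ℝ) < s := hs.1
        rw [hfdef, hhdef, ← ENNReal.ofReal_mul (by positivity),
          div_mul_cancel₀ _ (Real.sqrt_pos.2 hs0).ne']
      have hf2 : ∀ s ∈ Ioo (0:ℝ) r, f s ^ 2 = ENNReal.ofReal (‖U1 s‖^2 / s) := by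
        intro s hs
        rw [hfdef, ← ENNReal.ofReal_pow (by positivity), div_pow,
          Real.sq_sqrt hs.1.le]
      have hh2 : ∀ s ∈ Ioo (0:ℝ) r, h s ^ 2 = ENNReal.ofReal s := by
        intro s hs
        rw [hhdef, ← ENNReal.ofReal_pow (Real.sqrt_nonneg _), Real.sq_sqrt hs.1.le]
      calc (∫⁻ s in Ioo (0:ℝ) r, ENNReal.ofReal ‖U1 s‖)
          = ∫⁻ s in Ioo (0:ℝ) r, f s * h s :=
            setLIntegral_congr_fun measurableSet_Ioo hpt
        _ ≤ (∫⁻ s in Ioo (0:ℝ) r, f s ^ 2) ^ ((1:ℝ)/2)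
            * (∫⁻ s in Ioo (0:ℝ) r, h s ^ 2) ^ ((1:ℝ)/2) := holder2 f h hfm hhm
        _ ≤ C ^ ((1:ℝ)/2) * ENNReal.ofReal r := by
            gcongr
            · -- ∫ f^2 ≤ C
              calc (∫⁻ s in Ioo (0:ℝ) r, f s ^ 2)
                  = ∫⁻ s in Ioo (0:ℝ) r, ENNReal.ofReal (‖U1 s‖^2 / s) :=
                    setLIntegral_congr_fun measurableSet_Ioo hf2
                _ ≤ C := lintegral_mono_set (Ioo_subset_Ioo le_rfl hr.2.le)
            · -- (∫ h^2)^(1/2) ≤ ofReal r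
              have : (∫⁻ s in Ioo (0:ℝ) r, h s ^ 2)
                  ≤ ENNReal.ofReal r * ENNReal.ofReal r := by
                calc (∫⁻ s in Ioo (0:ℝ) r, h s ^ 2)
                    = ∫⁻ s in Ioo (0:ℝ) r, ENNReal.ofReal s :=
                      setLIntegral_congr_fun measurableSet_Ioo hh2
                  _ ≤ ∫⁻ _ in Ioo (0:ℝ) r, ENNReal.ofReal r := by
                      apply lintegral_mono_ae
                      rw [ae_restrict_iff' measurableSet_Ioo]
                      exact ae_of_all _ fun s hs =>
                        ENNReal.ofReal_le_ofReal hs.2.le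
                  _ = ENNReal.ofReal r * volume (Ioo (0:ℝ) r) :=
                      setLIntegral_const _ _
                  _ = ENNReal.ofReal r * ENNReal.ofReal r := by
                      rw [Real.volume_Ioo, sub_zero]
              calc (∫⁻ s in Ioo (0:ℝ) r, h s ^ 2) ^ ((1:ℝ)/2)
                  ≤ (ENNReal.ofReal r * ENNReal.ofReal r) ^ ((1:ℝ)/2) := by gcongr
                _ = ENNReal.ofReal r := sq_rpow_half _
    -- combine
    have hur : ENNReal.ofReal ‖(r:ℂ) * g r‖ ≤ C ^ ((1:ℝ)/2) * ENNReal.ofReal r := by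
      calc ENNReal.ofReal ‖(r:ℂ) * g r‖
          ≤ ENNReal.ofReal (∫ s in (0:ℝ)..r, ‖U1 s‖) := ENNReal.ofReal_le_ofReal hnorm
        _ = ∫⁻ s in Ioo (0:ℝ) r, ENNReal.ofReal ‖U1 s‖ := h1
        _ ≤ C ^ ((1:ℝ)/2) * ENNReal.ofReal r := h2
    have e1 : ENNReal.ofReal (‖g r‖^2 * r)
        = (ENNReal.ofReal ‖(r:ℂ) * g r‖)^2 * ENNReal.ofReal r⁻¹ := by
      rw [← ENNReal.ofReal_pow (norm_nonneg _), ← ENNReal.ofReal_mul (by positivity)]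
      congr 1
      rw [norm_mul, Complex.norm_real, Real.norm_eq_abs, abs_of_pos hr0]
      field_simp
    calc ENNReal.ofReal (‖g r‖^2 * r)
        = (ENNReal.ofReal ‖(r:ℂ) * g r‖)^2 * ENNReal.ofReal r⁻¹ := e1
      _ ≤ (C ^ ((1:ℝ)/2) * ENNReal.ofReal r)^2 * ENNReal.ofReal r⁻¹ := by gcongr
      _ = C * (ENNReal.ofReal r * (ENNReal.ofReal r * ENNReal.ofReal r⁻¹)) := by
          rw [mul_pow, pow_two, pow_two, rpow_half_sq]; ring
      _ = C * ENNReal.ofReal r := by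
          rw [← ENNReal.ofReal_mul hr0.le, mul_inv_cancel₀ hr0.ne', ENNReal.ofReal_one,
            mul_one]
      _ ≤ C * 1 := by gcongr; exact ENNReal.ofReal_le_one.2 hr.2.le
      _ = C := mul_one _
  calc (∫⁻ r in Ioo (0:ℝ) 1, ENNReal.ofReal (‖g r‖^2 * r))
      ≤ ∫⁻ _ in Ioo (0:ℝ) 1, C := by
        apply lintegral_mono_ae
        rw [ae_restrict_iff' measurableSet_Ioo]
        exact ae_of_all _ key
    _ = C * volume (Ioo (0:ℝ) 1) := setLIntegral_const _ _
    _ = C := by rw [Real.volume_Ioo, sub_zero, ENNReal.ofReal_one, mul_one]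


/-- Integration by parts + Cauchy–Schwarz:
`∫ |(rg)'|²/r ≤ (∫ |L g|² r)^{1/2} (∫ |g|² r)^{1/2}`. -/
lemma key1 (g G1 G2 : ℝ → ℂ) (K M : ℝ)
    (hgc : ContinuousOn g (Icc 0 1))
    (hG1c : ContinuousOn G1 (Icc 0 1))
    (hG2c : ContinuousOn G2 (Icc 0 1))
    (hdg : ∀ r ∈ Ioo (0:ℝ) 1, HasDerivAt g (G1 r) r)
    (hdG1 : ∀ r ∈ Ioo (0:ℝ) 1, HasDerivAt G1 (G2 r) r)
    (h1 : g 1 = 0)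
    (hK : ∀ s ∈ Icc (0:ℝ) 1, ‖g s‖ ≤ K)
    (hM : ∀ s ∈ Icc (0:ℝ) 1, ‖g s + (s:ℂ) * G1 s‖ ≤ M * s) :
    (∫⁻ r in Ioo (0:ℝ) 1, ENNReal.ofReal (‖g r + (r:ℂ) * G1 r‖^2 / r))
      ≤ (∫⁻ r in Ioo (0:ℝ) 1,
            ENNReal.ofReal (‖G2 r + ((r:ℂ))⁻¹ * G1 r - (((r:ℂ))^2)⁻¹ * g r‖^2 * r))
              ^ ((1:ℝ)/2)
        * (∫⁻ r in Ioo (0:ℝ) 1, ENNReal.ofReal (‖g r‖^2 * r)) ^ ((1:ℝ)/2) := by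
  set U1 : ℝ → ℂ := fun s : ℝ => g s + (s:ℂ) * G1 s with hU1def
  set L0 : ℝ → ℂ := fun r : ℝ => G2 r + ((r:ℂ))⁻¹ * G1 r - (((r:ℂ))^2)⁻¹ * g r
    with hL0def
  set u : ℝ → ℂ := fun r : ℝ => (r:ℂ) * g r with hudef
  set Atot : ℝ≥0∞ := ∫⁻ r in Ioo (0:ℝ) 1, ENNReal.ofReal (‖L0 r‖^2 * r) with hAdef
  set Btot : ℝ≥0∞ := ∫⁻ r in Ioo (0:ℝ) 1, ENNReal.ofReal (‖g r‖^2 * r) with hBdef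
  -- Continuity facts
  have hcoe : Continuous fun s : ℝ => (s:ℂ) := Complex.continuous_ofReal
  have hU1c : ContinuousOn U1 (Icc 0 1) := hgc.add (hcoe.continuousOn.mul hG1c)
  have huc : ContinuousOn u (Icc 0 1) := hcoe.continuousOn.mul hgc
  have hS : (Icc (0:ℝ) 1 ∩ Ioi 0) = Ioc (0:ℝ) 1 := by
    ext x; simp only [mem_inter_iff, mem_Icc, mem_Ioi, mem_Ioc]; constructor
    · rintro ⟨⟨_, h2⟩, h3⟩; exact ⟨h3, h2⟩
    · rintro ⟨h3, h2⟩; exact ⟨⟨h3.le, h2⟩, h3⟩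
  have hinvc : ContinuousOn (fun r : ℝ => ((r:ℂ))⁻¹) (Ioc (0:ℝ) 1) :=
    ContinuousOn.inv₀ hcoe.continuousOn
      (fun r hr => Complex.ofReal_ne_zero.2 hr.1.ne')
  have hL0c : ContinuousOn L0 (Ioc (0:ℝ) 1) := by
    have h2 : ContinuousOn (fun r : ℝ => (((r:ℂ))^2)⁻¹) (Ioc (0:ℝ) 1) :=
      ContinuousOn.inv₀ (hcoe.continuousOn.pow 2)
        (fun r hr => pow_ne_zero _ (Complex.ofReal_ne_zero.2 hr.1.ne'))
    exact ((hG2c.mono Ioc_subset_Icc_self).add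
      (hinvc.mul (hG1c.mono Ioc_subset_Icc_self))).sub
      (h2.mul (hgc.mono Ioc_subset_Icc_self))
  -- Cauchy–Schwarz for the cross term
  have hCS : (∫⁻ r in Ioo (0:ℝ) 1, ENNReal.ofReal (‖u r‖ * ‖L0 r‖))
      ≤ Atot ^ ((1:ℝ)/2) * Btot ^ ((1:ℝ)/2) := by
    set f : ℝ → ℝ≥0∞ := fun r => ENNReal.ofReal (‖L0 r‖ * Real.sqrt r) with hfdef
    set h : ℝ → ℝ≥0∞ := fun r => ENNReal.ofReal (‖g r‖ * Real.sqrt r) with hhdef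
    have hfm : AEMeasurable f (volume.restrict (Ioo (0:ℝ) 1)) := by
      apply ENNReal.measurable_ofReal.comp_aemeasurable
      apply ContinuousOn.aemeasurable _ measurableSet_Ioo
      exact ((hL0c.mono Ioo_subset_Ioc_self).norm).mul Real.continuous_sqrt.continuousOn
    have hhm : AEMeasurable h (volume.restrict (Ioo (0:ℝ) 1)) := by
      apply ENNReal.measurable_ofReal.comp_aemeasurable
      apply ContinuousOn.aemeasurable _ measurableSet_Ioo
      exact ((hgc.mono Ioo_subset_Icc_self).norm).mul Real.continuous_sqrt.continuousOn
    have hpt : ∀ r ∈ Ioo (0:ℝ) 1,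
        ENNReal.ofReal (‖u r‖ * ‖L0 r‖) = f r * h r := by
      intro r hr
      have hs : Real.sqrt r * Real.sqrt r = r := Real.mul_self_sqrt hr.1.le
      rw [hfdef, hhdef, ← ENNReal.ofReal_mul (by positivity)]
      congr 1
      have : ‖u r‖ = r * ‖g r‖ := by
        rw [hudef, norm_mul, Complex.norm_real, Real.norm_eq_abs, abs_of_pos hr.1]
      rw [this]
      have hs2 : Real.sqrt r ^ 2 = r := Real.sq_sqrt hr.1.le
      linear_combination (-(‖g r‖ * ‖L0 r‖)) * hs2
    have hf2 : ∀ r ∈ Ioo (0:ℝ) 1, f r ^ 2 = ENNReal.ofReal (‖L0 r‖^2 * r) := by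
      intro r hr
      rw [hfdef, ← ENNReal.ofReal_pow (by positivity), mul_pow, Real.sq_sqrt hr.1.le]
    have hh2 : ∀ r ∈ Ioo (0:ℝ) 1, h r ^ 2 = ENNReal.ofReal (‖g r‖^2 * r) := by
      intro r hr
      rw [hhdef, ← ENNReal.ofReal_pow (by positivity), mul_pow, Real.sq_sqrt hr.1.le]
    calc (∫⁻ r in Ioo (0:ℝ) 1, ENNReal.ofReal (‖u r‖ * ‖L0 r‖))
        = ∫⁻ r in Ioo (0:ℝ) 1, f r * h r :=
          setLIntegral_congr_fun measurableSet_Ioo hpt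
      _ ≤ (∫⁻ r in Ioo (0:ℝ) 1, f r ^ 2) ^ ((1:ℝ)/2)
          * (∫⁻ r in Ioo (0:ℝ) 1, h r ^ 2) ^ ((1:ℝ)/2) := holder2 f h hfm hhm
      _ = Atot ^ ((1:ℝ)/2) * Btot ^ ((1:ℝ)/2) := by
          rw [setLIntegral_congr_fun measurableSet_Ioo hf2,
            setLIntegral_congr_fun measurableSet_Ioo hh2]
  -- The FTC step, for each ε ∈ (0, 1]
  have hstep : ∀ ε : ℝ, 0 < ε → ε ≤ 1 →
      (∫⁻ r in Ioo ε 1, ENNReal.ofReal (‖U1 r‖^2 / r))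
        ≤ ENNReal.ofReal (K * M * ε)
          + ∫⁻ r in Ioo (0:ℝ) 1, ENNReal.ofReal (‖u r‖ * ‖L0 r‖) := by
    intro ε hε hε1
    have hIccsub : Icc ε 1 ⊆ Icc (0:ℝ) 1 := Icc_subset_Icc hε.le le_rfl
    have hIccsub' : Icc ε 1 ⊆ Ioc (0:ℝ) 1 := fun x hx => ⟨hε.trans_le hx.1, hx.2⟩
    -- the primitive and its derivative
    set φ : ℝ → ℂ := fun r => u r * star (U1 r) * ((r:ℂ))⁻¹ with hφdef
    set F : ℝ → ℂ := fun r => ((‖U1 r‖^2 / r : ℝ) : ℂ) + u r * star (L0 r) with hFdef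
    have hφd : ∀ r ∈ Ioo (0:ℝ) 1, HasDerivAt φ (F r) r := by
      intro r hr
      have hr0 : (0:ℝ) < r := hr.1
      have hrC : ((r:ℂ)) ≠ 0 := Complex.ofReal_ne_zero.2 hr0.ne'
      have hcoed : HasDerivAt (fun s : ℝ => (s:ℂ)) 1 r := by
        simpa using (hasDerivAt_id r).ofReal_comp
      have hud : HasDerivAt u (U1 r) r := by
        have := hcoed.mul (hdg r hr)
        simp only [one_mul] at this
        exact this
      have hU1d : HasDerivAt U1 (G1 r + ((1:ℂ) * G1 r + (r:ℂ) * G2 r)) r :=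
        (hdg r hr).add (hcoed.mul (hdG1 r hr))
      have hstard : HasDerivAt (fun s => star (U1 s))
          (star (G1 r + ((1:ℂ) * G1 r + (r:ℂ) * G2 r))) r := hU1d.star
      have hinvd : HasDerivAt (fun s : ℝ => ((s:ℂ))⁻¹) (-(((r:ℂ))^2)⁻¹) r :=
        (hasDerivAt_inv hrC).comp_ofReal
      have hmul : HasDerivAt φ _ r := (hud.mul hstard).mul hinvd
      convert hmul using 1
      -- algebraic identity
      have hU1conj : U1 r * (starRingEnd ℂ) (U1 r) = ((‖U1 r‖^2 : ℝ) : ℂ) := by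
        rw [RCLike.mul_conj]
        norm_cast
      rw [hFdef]
      simp only [RCLike.star_def]
      rw [hU1conj]
      simp only [hL0def, hU1def, hudef, map_add, map_mul, map_sub, Complex.conj_ofReal,
        map_inv₀, map_pow, one_mul, Complex.ofReal_div, Pi.mul_apply]
      have hne2 : ((r:ℂ))^2 ≠ 0 := pow_ne_zero _ hrC
      field_simp
      ring
    -- continuity of φ and F on [ε,1]
    have hφc : ContinuousOn φ (Icc ε 1) := by
      apply ContinuousOn.mul
      · exact (huc.mono hIccsub).mul
          ((continuous_star.comp_continuousOn (hU1c.mono hIccsub)))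
      · exact hinvc.mono hIccsub'
    have hnormc : ContinuousOn (fun r : ℝ => ‖U1 r‖^2 / r) (Icc ε 1) := by
      apply ContinuousOn.div
      · exact ((hU1c.mono hIccsub).norm).pow 2
      · exact continuousOn_id
      · intro x hx; exact (hε.trans_le hx.1).ne'
    have hFc : ContinuousOn F (Icc ε 1) := by
      apply ContinuousOn.add
      · exact Complex.continuous_ofReal.comp_continuousOn hnormc
      · exact (huc.mono hIccsub).mul
          (continuous_star.comp_continuousOn (hL0c.mono hIccsub'))
    have hFint : IntervalIntegrable F volume ε 1 := by
      apply ContinuousOn.intervalIntegrable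
      rwa [uIcc_of_le hε1]
    -- FTC
    have hFTC : ∫ r in ε..1, F r = -φ ε := by
      rw [intervalIntegral.integral_eq_sub_of_hasDerivAt_of_le hε1 hφc
        (fun x hx => hφd x ⟨hε.trans hx.1, hx.2⟩) hFint]
      have : φ 1 = 0 := by simp [hφdef, hudef, h1]
      rw [this, zero_sub]
    -- split the integral
    have hi1 : IntervalIntegrable (fun r : ℝ => ((‖U1 r‖^2 / r : ℝ) : ℂ)) volume ε 1 := by
      apply ContinuousOn.intervalIntegrable
      rw [uIcc_of_le hε1]
      exact Complex.continuous_ofReal.comp_continuousOn hnormc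
    have hi2 : IntervalIntegrable (fun r : ℝ => u r * star (L0 r)) volume ε 1 := by
      apply ContinuousOn.intervalIntegrable
      rw [uIcc_of_le hε1]
      exact (huc.mono hIccsub).mul
        (continuous_star.comp_continuousOn (hL0c.mono hIccsub'))
    have hsplit : (((∫ r in ε..1, ‖U1 r‖^2 / r : ℝ)) : ℂ)
        = -φ ε - ∫ r in ε..1, u r * star (L0 r) := by
      rw [← intervalIntegral.integral_ofReal (f := fun r : ℝ => ‖U1 r‖^2 / r)]
      rw [eq_sub_iff_add_eq, ← intervalIntegral.integral_add hi1 hi2]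
      exact hFTC
    -- real inequality
    have hφε : ‖φ ε‖ ≤ K * M * ε := by
      have hεI : ε ∈ Icc (0:ℝ) 1 := ⟨hε.le, hε1⟩
      have h1' : ‖φ ε‖ = ‖g ε‖ * ‖U1 ε‖ := by
        rw [hφdef]
        simp only [norm_mul, norm_star, norm_inv, hudef, Complex.norm_real,
          Real.norm_eq_abs, abs_of_pos hε]
        field_simp
      have hK0 : 0 ≤ K := le_trans (norm_nonneg _) (hK 0 ⟨le_rfl, zero_le_one⟩)
      calc ‖φ ε‖ = ‖g ε‖ * ‖U1 ε‖ := h1'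
        _ ≤ K * (M * ε) :=
            mul_le_mul (hK ε hεI) (hM ε hεI) (norm_nonneg _) hK0
        _ = K * M * ε := by ring
    have hI2 : ‖∫ r in ε..1, u r * star (L0 r)‖ ≤ ∫ r in ε..1, ‖u r‖ * ‖L0 r‖ := by
      calc ‖∫ r in ε..1, u r * star (L0 r)‖
          ≤ ∫ r in ε..1, ‖u r * star (L0 r)‖ :=
            intervalIntegral.norm_integral_le_integral_norm hε1
        _ = ∫ r in ε..1, ‖u r‖ * ‖L0 r‖ := by
            apply intervalIntegral.integral_congr
            intro x _
            show ‖u x * star (L0 x)‖ = ‖u x‖ * ‖L0 x‖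
            rw [norm_mul, norm_star]
    have hreal : (∫ r in ε..1, ‖U1 r‖^2 / r)
        ≤ K * M * ε + ∫ r in ε..1, ‖u r‖ * ‖L0 r‖ := by
      have := congrArg Complex.re hsplit
      rw [Complex.ofReal_re] at this
      rw [this]
      calc (-φ ε - ∫ r in ε..1, u r * star (L0 r)).re
          ≤ ‖-φ ε - ∫ r in ε..1, u r * star (L0 r)‖ := Complex.re_le_norm _
        _ = ‖-φ ε - ∫ r in ε..1, u r * star (L0 r)‖ := rfl
        _ ≤ ‖φ ε‖ + ‖∫ r in ε..1, u r * star (L0 r)‖ := by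
            rw [← norm_neg (φ ε)]
            exact norm_sub_le _ _
        _ ≤ K * M * ε + ∫ r in ε..1, ‖u r‖ * ‖L0 r‖ := add_le_add hφε hI2
    -- pass to lintegral
    have he1 : (∫⁻ r in Ioo ε 1, ENNReal.ofReal (‖U1 r‖^2 / r))
        = ENNReal.ofReal (∫ r in ε..1, ‖U1 r‖^2 / r) :=
      (ofReal_intervalIntegral _ hε1 hnormc
        (fun x hx => div_nonneg (by positivity) (hε.trans hx.1).le)).symm
    have he2 : ENNReal.ofReal (∫ r in ε..1, ‖u r‖ * ‖L0 r‖)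
        = ∫⁻ r in Ioo ε 1, ENNReal.ofReal (‖u r‖ * ‖L0 r‖) :=
      ofReal_intervalIntegral _ hε1
        ((huc.mono hIccsub).norm.mul ((hL0c.mono hIccsub').norm))
        (fun x hx => by positivity)
    calc (∫⁻ r in Ioo ε 1, ENNReal.ofReal (‖U1 r‖^2 / r))
        = ENNReal.ofReal (∫ r in ε..1, ‖U1 r‖^2 / r) := he1
      _ ≤ ENNReal.ofReal (K * M * ε + ∫ r in ε..1, ‖u r‖ * ‖L0 r‖) :=
          ENNReal.ofReal_le_ofReal hreal
      _ ≤ ENNReal.ofReal (K * M * ε) + ENNReal.ofReal (∫ r in ε..1, ‖u r‖ * ‖L0 r‖) :=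
          ENNReal.ofReal_add_le
      _ = ENNReal.ofReal (K * M * ε) + ∫⁻ r in Ioo ε 1, ENNReal.ofReal (‖u r‖ * ‖L0 r‖) := by
          rw [he2]
      _ ≤ ENNReal.ofReal (K * M * ε)
          + ∫⁻ r in Ioo (0:ℝ) 1, ENNReal.ofReal (‖u r‖ * ‖L0 r‖) := by
          gcongr
  -- limit ε → 0 along εₙ = 1/(n+1)
  have hmono : Monotone (fun n : ℕ => Ioo (1/((n:ℝ)+1)) 1) := by
    intro n m hnm
    apply Ioo_subset_Ioo _ le_rfl
    apply one_div_le_one_div_of_le (by positivity)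
    exact_mod_cast Nat.add_le_add_right hnm 1
  have hUnion : (⋃ n : ℕ, Ioo (1/((n:ℝ)+1)) 1) = Ioo (0:ℝ) 1 := by
    ext r
    simp only [mem_iUnion, mem_Ioo]
    constructor
    · rintro ⟨n, h1', h2'⟩
      exact ⟨lt_trans (by positivity) h1', h2'⟩
    · rintro ⟨hr0, hr1⟩
      obtain ⟨n, hn⟩ := exists_nat_one_div_lt hr0
      exact ⟨n, hn, hr1⟩
  have ha : Tendsto (fun n : ℕ => ∫⁻ r in Ioo (1/((n:ℝ)+1)) 1,
      ENNReal.ofReal (‖U1 r‖^2 / r)) atTop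
      (𝓝 (∫⁻ r in Ioo (0:ℝ) 1, ENNReal.ofReal (‖U1 r‖^2 / r))) := by
    have h := tendsto_measure_iUnion_atTop
      (μ := volume.withDensity (fun r => ENNReal.ofReal (‖U1 r‖^2 / r))) hmono
    rw [hUnion] at h
    simpa only [Function.comp_def, withDensity_apply, measurableSet_Ioo] using h
  have hb : Tendsto (fun n : ℕ => ENNReal.ofReal (K * M * (1/((n:ℝ)+1)))
      + ∫⁻ r in Ioo (0:ℝ) 1, ENNReal.ofReal (‖u r‖ * ‖L0 r‖)) atTop
      (𝓝 (0 + ∫⁻ r in Ioo (0:ℝ) 1, ENNReal.ofReal (‖u r‖ * ‖L0 r‖))) := by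
    apply Tendsto.add _ tendsto_const_nhds
    have h0 : Tendsto (fun n : ℕ => K * M * (1/((n:ℝ)+1))) atTop (𝓝 (K * M * 0)) :=
      (tendsto_one_div_add_atTop_nhds_zero_nat).const_mul (K*M)
    rw [mul_zero] at h0
    simpa using ENNReal.tendsto_ofReal h0
  have hlim : (∫⁻ r in Ioo (0:ℝ) 1, ENNReal.ofReal (‖U1 r‖^2 / r))
      ≤ 0 + ∫⁻ r in Ioo (0:ℝ) 1, ENNReal.ofReal (‖u r‖ * ‖L0 r‖) := by
    apply le_of_tendsto_of_tendsto' ha hb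
    intro n
    exact hstep _ (by positivity) (by
      rw [div_le_one (by positivity)]
      exact le_add_of_nonneg_left (Nat.cast_nonneg n))
  rw [zero_add] at hlim
  exact hlim.trans hCS


end PAux

open MeasureTheory Filter

/-- The operator `(𝓛 g)(r) = g''(r) + (1/r) g'(r) − (1/r²) g(r)`. -/
noncomputable def Lop (g : ℝ → ℂ) : ℝ → ℂ := fun r =>
  dz (dz g) r + ((r : ℂ))⁻¹ * dz g r - (((r : ℂ)) ^ 2)⁻¹ * g r

/-- Lemma A.1, second part: for `g` twice continuously differentiable on `[0,1]`
with `g(0) = g(1) = 0`,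
`∫₀¹ |(d/dr)(r g)|² (1/r) dr ≤ (∫₀¹ |𝓛g|² r dr)^{1/2} (∫₀¹ |g|² r dr)^{1/2}
  ≤ ∫₀¹ |𝓛g|² r dr`, with all quantities in `[0,∞]`. -/
theorem poincare_weighted_L (g : ℝ → ℂ) (hg : ContDiffOn ℝ 2 g (Set.Icc 0 1))
    (h0 : g 0 = 0) (h1 : g 1 = 0) :
    wInt (fun r => ‖dz (fun s => (s : ℂ) * g s) r‖ ^ 2 / r)
        ≤ (wInt (fun r => ‖Lop g r‖ ^ 2 * r)) ^ ((1 : ℝ) / 2)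
            * (wInt (fun r => ‖g r‖ ^ 2 * r)) ^ ((1 : ℝ) / 2)
      ∧ (wInt (fun r => ‖Lop g r‖ ^ 2 * r)) ^ ((1 : ℝ) / 2)
            * (wInt (fun r => ‖g r‖ ^ 2 * r)) ^ ((1 : ℝ) / 2)
        ≤ wInt (fun r => ‖Lop g r‖ ^ 2 * r) := by
  have hUD : UniqueDiffOn ℝ (Set.Icc (0:ℝ) 1) := uniqueDiffOn_Icc one_pos
  set G1 : ℝ → ℂ := derivWithin g (Set.Icc 0 1) with hG1def
  set G2 : ℝ → ℂ := derivWithin G1 (Set.Icc 0 1) with hG2def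
  have hgc : ContinuousOn g (Set.Icc 0 1) := hg.continuousOn
  have hG1cd : ContDiffOn ℝ 1 G1 (Set.Icc 0 1) := hg.derivWithin hUD (by norm_num)
  have hG1c : ContinuousOn G1 (Set.Icc 0 1) := hG1cd.continuousOn
  have hG2cd : ContDiffOn ℝ 0 G2 (Set.Icc 0 1) := hG1cd.derivWithin hUD (by norm_num)
  have hG2c : ContinuousOn G2 (Set.Icc 0 1) := hG2cd.continuousOn
  have hgW : ∀ s ∈ Set.Icc (0:ℝ) 1, HasDerivWithinAt g (G1 s) (Set.Icc 0 1) s :=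
    fun s hs => ((hg.differentiableOn (by norm_num)) s hs).hasDerivWithinAt
  have hG1W : ∀ s ∈ Set.Icc (0:ℝ) 1, HasDerivWithinAt G1 (G2 s) (Set.Icc 0 1) s :=
    fun s hs => ((hG1cd.differentiableOn (by norm_num)) s hs).hasDerivWithinAt
  have hdg : ∀ r ∈ Set.Ioo (0:ℝ) 1, HasDerivAt g (G1 r) r := fun r hr =>
    (hgW r (Set.Ioo_subset_Icc_self hr)).hasDerivAt (Icc_mem_nhds hr.1 hr.2)
  have hdG1 : ∀ r ∈ Set.Ioo (0:ℝ) 1, HasDerivAt G1 (G2 r) r := fun r hr =>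
    (hG1W r (Set.Ioo_subset_Icc_self hr)).hasDerivAt (Icc_mem_nhds hr.1 hr.2)
  have hIocn : ∀ r ∈ Set.Ioo (0:ℝ) 1, Set.Ioc (0:ℝ) 1 ∈ nhds r := fun r hr =>
    mem_nhds_iff.2 ⟨Set.Ioo 0 1, Set.Ioo_subset_Ioc_self, isOpen_Ioo, hr⟩
  have hdzg : ∀ r ∈ Set.Ioo (0:ℝ) 1, dz g r = G1 r := fun r hr => by
    rw [dz, derivWithin_of_mem_nhds (hIocn r hr)]; exact (hdg r hr).deriv
  have hcoed : ∀ r : ℝ, HasDerivAt (fun s : ℝ => (s:ℂ)) 1 r := fun r => by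
    simpa using (hasDerivAt_id r).ofReal_comp
  have hdu : ∀ r ∈ Set.Ioo (0:ℝ) 1,
      HasDerivAt (fun s : ℝ => (s:ℂ) * g s) (g r + (r:ℂ) * G1 r) r := by
    intro r hr
    have := (hcoed r).mul (hdg r hr)
    simp only [one_mul] at this
    exact this
  have hdzu : ∀ r ∈ Set.Ioo (0:ℝ) 1,
      dz (fun s => (s:ℂ) * g s) r = g r + (r:ℂ) * G1 r := by
    intro r hr
    rw [dz, derivWithin_of_mem_nhds (hIocn r hr)]
    exact (hdu r hr).deriv
  have hdz2 : ∀ r ∈ Set.Ioo (0:ℝ) 1, dz (dz g) r = G2 r := by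
    intro r hr
    rw [dz, derivWithin_of_mem_nhds (hIocn r hr)]
    have heq : dz g =ᶠ[nhds r] G1 :=
      Filter.eventuallyEq_of_mem (isOpen_Ioo.mem_nhds hr) hdzg
    rw [heq.deriv_eq]; exact (hdG1 r hr).deriv
  have hLop : ∀ r ∈ Set.Ioo (0:ℝ) 1,
      Lop g r = G2 r + ((r:ℂ))⁻¹ * G1 r - (((r:ℂ))^2)⁻¹ * g r := by
    intro r hr
    simp only [Lop]
    rw [hdz2 r hr, hdzg r hr]
  -- bounds
  obtain ⟨K, hK⟩ := isCompact_Icc.exists_bound_of_continuousOn hgc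
  have hU1W : ∀ s ∈ Set.Icc (0:ℝ) 1,
      HasDerivWithinAt (fun s : ℝ => g s + (s:ℂ) * G1 s)
        (G1 s + ((1:ℂ) * G1 s + (s:ℂ) * G2 s)) (Set.Icc 0 1) s := by
    intro s hs
    exact (hgW s hs).add (((hcoed s).hasDerivWithinAt).mul (hG1W s hs))
  obtain ⟨M, hMb⟩ := isCompact_Icc.exists_bound_of_continuousOn
    (hG1c.add ((continuousOn_const.mul hG1c).add
      (Complex.continuous_ofReal.continuousOn.mul hG2c)))
  have hM : ∀ s ∈ Set.Icc (0:ℝ) 1, ‖g s + (s:ℂ) * G1 s‖ ≤ M * s := by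
    intro s hs
    have h00 : (0:ℝ) ∈ Set.Icc (0:ℝ) 1 := ⟨le_rfl, zero_le_one⟩
    have hcv := (convex_Icc (0:ℝ) 1).norm_image_sub_le_of_norm_hasDerivWithin_le
      hU1W hMb h00 hs
    simpa [h0, Real.norm_eq_abs, abs_of_nonneg hs.1] using hcv
  -- main estimates
  have hkey1 := PAux.key1 g G1 G2 K M hgc hG1c hG2c hdg hdG1 h1 hK hM
  have hkey2 := PAux.key2 g G1 hgc
    (hgc.add (Complex.continuous_ofReal.continuousOn.mul hG1c)) hdu
  -- rewrite the statement integrals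
  have eC : wInt (fun r => ‖dz (fun s => (s : ℂ) * g s) r‖ ^ 2 / r)
      = ∫⁻ r in Set.Ioo (0:ℝ) 1, ENNReal.ofReal (‖g r + (r:ℂ) * G1 r‖^2 / r) := by
    rw [wInt]
    exact setLIntegral_congr_fun measurableSet_Ioo
      (fun r hr => by beta_reduce; rw [hdzu r hr])
  have eA : wInt (fun r => ‖Lop g r‖ ^ 2 * r)
      = ∫⁻ r in Set.Ioo (0:ℝ) 1, ENNReal.ofReal
          (‖G2 r + ((r:ℂ))⁻¹ * G1 r - (((r:ℂ))^2)⁻¹ * g r‖^2 * r) := by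
    rw [wInt]
    exact setLIntegral_congr_fun measurableSet_Ioo
      (fun r hr => by beta_reduce; rw [hLop r hr])
  have eB : wInt (fun r => ‖g r‖ ^ 2 * r)
      = ∫⁻ r in Set.Ioo (0:ℝ) 1, ENNReal.ofReal (‖g r‖^2 * r) := rfl
  constructor
  · rw [eC, eA, eB]
    exact hkey1
  · rw [eA, eB]
    set A : ℝ≥0∞ := ∫⁻ r in Set.Ioo (0:ℝ) 1, ENNReal.ofReal
      (‖G2 r + ((r:ℂ))⁻¹ * G1 r - (((r:ℂ))^2)⁻¹ * g r‖^2 * r) with hAd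
    set B : ℝ≥0∞ := ∫⁻ r in Set.Ioo (0:ℝ) 1, ENNReal.ofReal (‖g r‖^2 * r) with hBd
    have hBA : B ≤ A ^ ((1:ℝ)/2) * B ^ ((1:ℝ)/2) := hkey2.trans hkey1
    rcases eq_or_ne B 0 with hB0 | hB0
    · rw [hB0, ENNReal.zero_rpow_of_pos (by norm_num), mul_zero]
      exact zero_le
    · have hBtop : B ≠ ⊤ := by
        have hle : B ≤ ENNReal.ofReal (K*K) * volume (Set.Ioo (0:ℝ) 1) := by
          rw [hBd, ← setLIntegral_const]
          apply lintegral_mono_ae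
          rw [ae_restrict_iff' measurableSet_Ioo]
          refine ae_of_all _ fun r hr => ENNReal.ofReal_le_ofReal ?_
          have hKr := hK r (Set.Ioo_subset_Icc_self hr)
          nlinarith [norm_nonneg (g r), hr.1, hr.2]
        exact ne_top_of_le_ne_top (by simp [Real.volume_Ioo]) hle
      have hBh0 : B ^ ((1:ℝ)/2) ≠ 0 := by
        simp [ENNReal.rpow_eq_zero_iff, hB0, hBtop]
      have hBht : B ^ ((1:ℝ)/2) ≠ ⊤ := by
        simp [ENNReal.rpow_eq_top_iff, hB0, hBtop]
      have h2 : B ^ ((1:ℝ)/2) * B ^ ((1:ℝ)/2) ≤ A ^ ((1:ℝ)/2) * B ^ ((1:ℝ)/2) := by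
        rw [PAux.rpow_half_sq]; exact hBA
      have hhalf : B ^ ((1:ℝ)/2) ≤ A ^ ((1:ℝ)/2) :=
        (ENNReal.mul_le_mul_iff_left hBh0 hBht).1 h2
      calc A ^ ((1:ℝ)/2) * B ^ ((1:ℝ)/2)
          ≤ A ^ ((1:ℝ)/2) * A ^ ((1:ℝ)/2) := by gcongr
        _ = A := PAux.rpow_half_sq A
end

section
/- For every complex-valued function g that is three times continuously differentiable on [0,1], one has |(d/dr)(r·g(r))(1)| ≤ 2·(∫₀¹ |(d/dr)(r·g(r))|²·(1/r) dr)^{1/4}·(∫₀¹ |(𝓛g)(r)|²·r dr)^{1/4} + 4·(∫₀¹ |(d/dr)(r·g(r))|²·(1/r) dr)^{1/2}, where the integrals are allowed to be +∞ (in which case the inequality holds trivially). (Lemma A.2, estimate (estLinfty).) -/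
open MeasureTheory Filter

set_option maxHeartbeats 1000000

/-- If the weighted integral of `‖u‖²/r` vanishes and `u` is continuous on `(0,1]`,
then `u 1 = 0`. -/
lemma aux_zero (u : ℝ → ℂ) (hu_cont : ContinuousOn u (Set.Ioc (0:ℝ) 1))
    (hA0 : (∫⁻ r in Set.Ioo (0:ℝ) 1, ENNReal.ofReal (‖u r‖ ^ 2 / r)) = 0) :
    u 1 = 0 := by
  have hc : ContinuousOn (fun r => ‖u r‖ ^ 2 / r) (Set.Ioo (0:ℝ) 1) :=
    (((hu_cont.mono Set.Ioo_subset_Ioc_self).norm.pow 2).div continuousOn_id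
      (fun r hr => ne_of_gt hr.1))
  have hmu : AEMeasurable (fun r => ENNReal.ofReal (‖u r‖ ^ 2 / r))
      (volume.restrict (Set.Ioo (0:ℝ) 1)) :=
    ENNReal.measurable_ofReal.comp_aemeasurable (hc.aemeasurable measurableSet_Ioo)
  have h1 := (lintegral_eq_zero_iff' hmu).1 hA0
  have h2 : u =ᵐ[volume.restrict (Set.Ioo (0:ℝ) 1)] 0 := by
    filter_upwards [h1, ae_restrict_mem measurableSet_Ioo] with r hr hrmem
    have : ‖u r‖ ^ 2 / r ≤ 0 := ENNReal.ofReal_eq_zero.mp hr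
    have hr0 : 0 < r := hrmem.1
    have : ‖u r‖ ^ 2 ≤ 0 := by
      rw [div_le_iff₀ hr0] at this; simpa using this
    have : ‖u r‖ = 0 := by nlinarith [norm_nonneg (u r), sq_nonneg ‖u r‖]
    simpa using this
  have h3 : u =ᵐ[volume.restrict (Set.Ioc (0:ℝ) 1)] 0 := by
    rwa [Measure.restrict_congr_set Ioo_ae_eq_Ioc] at h2
  have h4 : Set.EqOn u 0 (Set.Ioc (0:ℝ) 1) := by
    apply Measure.eqOn_of_ae_eq h3 hu_cont continuousOn_const
    rw [interior_Ioc, closure_Ioo (by norm_num : (0:ℝ) ≠ 1)]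
    exact Set.Ioc_subset_Icc_self
  simpa using h4 (by constructor <;> norm_num : (1:ℝ) ∈ Set.Ioc (0:ℝ) 1)

/-- The main quantitative estimate, in real form. -/
lemma aux_main (u uu L : ℝ → ℂ) (A B : ENNReal)
    (h_cont : ContinuousOn u (Set.Ioc (0:ℝ) 1))
    (huu_cont : ContinuousOn uu (Set.Ioc (0:ℝ) 1))
    (hL_cont : ContinuousOn L (Set.Ioc (0:ℝ) 1))
    (hderiv : ∀ r ∈ Set.Ioc (0:ℝ) 1, HasDerivWithinAt u (uu r) (Set.Ioc (0:ℝ) 1) r)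
    (hkey : ∀ r ∈ Set.Ioc (0:ℝ) 1, uu r = (r:ℂ)⁻¹ * u r + r * L r)
    (hA : (∫⁻ r in Set.Ioo (0:ℝ) 1, ENNReal.ofReal (‖u r‖ ^ 2 / r)) = A)
    (hB : (∫⁻ r in Set.Ioo (0:ℝ) 1, ENNReal.ofReal (‖L r‖ ^ 2 * r)) = B)
    (hAt : A ≠ ⊤) (hBt : B ≠ ⊤) :
    ‖u 1‖ ^ 2 ≤ 3 * A.toReal + 2 * Real.sqrt (A.toReal * B.toReal) := by
  set S := Set.Ioc (0:ℝ) 1 with hSdef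
  set Ar := A.toReal with hArdef
  set Br := B.toReal with hBrdef
  have hArnn : 0 ≤ Ar := ENNReal.toReal_nonneg
  have hBrnn : 0 ≤ Br := ENNReal.toReal_nonneg
  set F₁ : ℝ → ℝ := fun r => ‖u r‖ ^ 2 / r with hF₁def
  set F₂ : ℝ → ℝ := fun r => ‖L r‖ ^ 2 * r with hF₂def
  have hnormsq : ∀ z : ℂ, ‖z‖ ^ 2 = z.re ^ 2 + z.im ^ 2 := by
    intro z; rw [Complex.sq_norm, Complex.normSq_apply]; ring
  have hF1contS : ContinuousOn F₁ S :=
    ((h_cont.norm.pow 2).div continuousOn_id (fun r hr => ne_of_gt hr.1))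
  have hF2contS : ContinuousOn F₂ S := (hL_cont.norm.pow 2).mul continuousOn_id
  -- ae inclusion of Ioc a 1 into Ioo 0 1, for 0 < a
  have haes : ∀ a : ℝ, 0 < a → (Set.Ioc a 1 : Set ℝ) ≤ᵐ[volume] Set.Ioo (0:ℝ) 1 := by
    intro a ha0
    rw [ae_le_set]
    refine measure_mono_null ?_ (measure_singleton (1:ℝ))
    intro x hx
    simp only [Set.mem_diff, Set.mem_Ioc, Set.mem_Ioo, not_and, not_lt] at hx
    have h1 : x = 1 := le_antisymm hx.1.2 (hx.2 (lt_trans ha0 hx.1.1))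
    simp [h1]
  apply le_of_forall_pos_le_add
  intro ε hε
  -- choose a good point a
  obtain ⟨a, haI, haA⟩ : ∃ a ∈ Set.Ioo (0:ℝ) 1, F₁ a ≤ Ar + ε := by
    by_contra hcon
    push_neg at hcon
    have h1 : ENNReal.ofReal (Ar + ε) * volume (Set.Ioo (0:ℝ) 1) ≤ A := by
      rw [← hA, ← setLIntegral_const]
      exact setLIntegral_mono' measurableSet_Ioo
        (fun r hr => ENNReal.ofReal_le_ofReal (hcon r hr).le)
    rw [Real.volume_Ioo] at h1
    norm_num at h1
    have h2 : Ar + ε ≤ Ar := by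
      have h3 : ENNReal.ofReal (Ar + ε) ≤ ENNReal.ofReal Ar := by
        rwa [ENNReal.ofReal_toReal hAt]
      exact (ENNReal.ofReal_le_ofReal_iff hArnn).1 h3
    linarith
  have ha0 : 0 < a := haI.1
  have ha1 : a < 1 := haI.2
  have hIccS : Set.Icc a 1 ⊆ S := fun x hx => ⟨lt_of_lt_of_le ha0 hx.1, hx.2⟩
  have haU : ‖u a‖ ^ 2 ≤ Ar + ε := by
    have h1 : ‖u a‖ ^ 2 ≤ (Ar + ε) * a := by
      have := (div_le_iff₀ ha0).1 haA; linarith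
    nlinarith [norm_nonneg (u a), sq_nonneg ‖u a‖]
  set ψ : ℝ → ℝ := fun r => 2 * ((u r).re * (uu r).re + (u r).im * (uu r).im) with hψdef
  have hψcont : ContinuousOn ψ (Set.Icc a 1) := by
    apply ContinuousOn.mul continuousOn_const
    exact ((Complex.continuous_re.comp_continuousOn (h_cont.mono hIccS)).mul
      (Complex.continuous_re.comp_continuousOn (huu_cont.mono hIccS))).add
      ((Complex.continuous_im.comp_continuousOn (h_cont.mono hIccS)).mul
      (Complex.continuous_im.comp_continuousOn (huu_cont.mono hIccS)))
  -- FTC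
  have hftc : ∫ y in a..1, ψ y = ‖u 1‖ ^ 2 - ‖u a‖ ^ 2 := by
    have hcont : ContinuousOn (fun r => ‖u r‖ ^ 2) (Set.Icc a 1) :=
      ((h_cont.mono hIccS).norm.pow 2)
    have hder : ∀ x ∈ Set.Ioo a 1, HasDerivWithinAt (fun r => ‖u r‖ ^ 2) (ψ x) (Set.Ioi x) x := by
      intro x hx
      have hxS : x ∈ S := ⟨lt_trans ha0 hx.1, hx.2.le⟩
      have hS_nhds : S ∈ nhds x :=
        Filter.mem_of_superset (isOpen_Ioo.mem_nhds ⟨hxS.1, hx.2⟩) Set.Ioo_subset_Ioc_self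
      have hu_at : HasDerivAt u (uu x) x := (hderiv x hxS).hasDerivAt hS_nhds
      have hre : HasDerivAt (fun r => (u r).re) ((uu x).re) x :=
        Complex.reCLM.hasFDerivAt.comp_hasDerivAt x hu_at
      have him : HasDerivAt (fun r => (u r).im) ((uu x).im) x :=
        Complex.imCLM.hasFDerivAt.comp_hasDerivAt x hu_at
      have h2 : HasDerivAt (fun r => (u r).re ^ 2 + (u r).im ^ 2) (ψ x) x := by
        have h3 := (hre.pow 2).add (him.pow 2)
        refine h3.congr_deriv ?_
        simp [hψdef]; ring
      have h3 : HasDerivAt (fun r => ‖u r‖ ^ 2) (ψ x) x := by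
        simp only [hnormsq]; exact h2
      exact h3.hasDerivWithinAt
    have hint : IntervalIntegrable ψ volume a 1 := hψcont.intervalIntegrable_of_Icc ha1.le
    exact intervalIntegral.integral_eq_sub_of_hasDeriv_right_of_le ha1.le hcont hder hint
  -- pointwise bound
  have hpt : ∀ r ∈ Set.Icc a 1, ψ r ≤ 2 * F₁ r + 2 * (Real.sqrt (F₁ r) * Real.sqrt (F₂ r)) := by
    intro r hr
    have hrS : r ∈ S := hIccS hr
    have hr0 : 0 < r := hrS.1
    have hr1 : r ≤ 1 := hrS.2
    have hkr := hkey r hrS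
    have hre : (uu r).re = r⁻¹ * (u r).re + r * (L r).re := by
      rw [hkr]
      simp [Complex.add_re, ← Complex.ofReal_inv, Complex.re_ofReal_mul]
    have him : (uu r).im = r⁻¹ * (u r).im + r * (L r).im := by
      rw [hkr]
      simp [Complex.add_im, ← Complex.ofReal_inv, Complex.im_ofReal_mul]
    set P := ‖u r‖ * ‖L r‖ with hPdef
    have hPnn : 0 ≤ P := by positivity
    have hCS : (u r).re * (L r).re + (u r).im * (L r).im ≤ P := by
      have e1 := hnormsq (u r)
      have e2 := hnormsq (L r)
      have h2 : ((u r).re * (L r).re + (u r).im * (L r).im) ^ 2 ≤ P ^ 2 := by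
        rw [hPdef, mul_pow, e1, e2]
        nlinarith [sq_nonneg ((u r).re * (L r).im - (u r).im * (L r).re)]
      nlinarith [h2, hPnn]
    have hsql : Real.sqrt (F₁ r) * Real.sqrt (F₂ r) = P := by
      rw [← Real.sqrt_mul (by positivity)]
      have h4 : F₁ r * F₂ r = P ^ 2 := by
        simp only [hF₁def, hF₂def, hPdef]
        rw [div_mul_eq_mul_div, div_eq_iff hr0.ne']
        ring
      rw [h4, Real.sqrt_sq hPnn]
    rw [hsql]
    have h5 : r * ((u r).re * (L r).re + (u r).im * (L r).im) ≤ r * P :=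
      mul_le_mul_of_nonneg_left hCS hr0.le
    have h6 : r * P ≤ P := by nlinarith
    have h7 : ψ r = 2 * (r⁻¹ * ((u r).re ^ 2 + (u r).im ^ 2))
        + 2 * (r * ((u r).re * (L r).re + (u r).im * (L r).im)) := by
      rw [hψdef]; simp only [hre, him]; field_simp; ring
    have h8 : 2 * (r⁻¹ * ((u r).re ^ 2 + (u r).im ^ 2)) = 2 * F₁ r := by
      rw [hF₁def]; simp only [hnormsq]; field_simp
    rw [h7, h8]
    linarith
  -- integral bound 1
  have hInt1 : ∫ y in a..1, F₁ y ≤ Ar := by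
    rw [intervalIntegral.integral_of_le ha1.le]
    have hnn : 0 ≤ᵐ[volume.restrict (Set.Ioc a 1)] F₁ := by
      filter_upwards [ae_restrict_mem measurableSet_Ioc] with r hr
      have : 0 < r := lt_trans ha0 hr.1
      positivity
    have hmeas : AEStronglyMeasurable F₁ (volume.restrict (Set.Ioc a 1)) :=
      (hF1contS.mono (fun x hx => ⟨lt_trans ha0 hx.1, hx.2⟩)).aestronglyMeasurable measurableSet_Ioc
    rw [integral_eq_lintegral_of_nonneg_ae hnn hmeas]
    have hsub : (∫⁻ r in Set.Ioc a 1, ENNReal.ofReal (F₁ r)) ≤ A :=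
      (lintegral_mono_set' (haes a ha0)).trans_eq hA
    exact ENNReal.toReal_mono hAt hsub
  -- integral bound 2 (Cauchy-Schwarz)
  have hInt2 : ∫ y in a..1, Real.sqrt (F₁ y) * Real.sqrt (F₂ y) ≤ Real.sqrt (Ar * Br) := by
    rw [intervalIntegral.integral_of_le ha1.le]
    have hnn : 0 ≤ᵐ[volume.restrict (Set.Ioc a 1)]
        (fun y => Real.sqrt (F₁ y) * Real.sqrt (F₂ y)) := by
      filter_upwards with r
      positivity
    have hmeas : AEStronglyMeasurable (fun y => Real.sqrt (F₁ y) * Real.sqrt (F₂ y))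
        (volume.restrict (Set.Ioc a 1)) := by
      apply ContinuousOn.aestronglyMeasurable _ measurableSet_Ioc
      exact ((hF1contS.mono (fun x hx => ⟨lt_trans ha0 hx.1, hx.2⟩)).sqrt).mul
        ((hF2contS.mono (fun x hx => ⟨lt_trans ha0 hx.1, hx.2⟩)).sqrt)
    rw [integral_eq_lintegral_of_nonneg_ae hnn hmeas]
    set F : ℝ → ENNReal := fun r => (ENNReal.ofReal (F₁ r)) ^ ((1:ℝ)/2) with hFdef
    set G : ℝ → ENNReal := fun r => (ENNReal.ofReal (F₂ r)) ^ ((1:ℝ)/2) with hGdef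
    have hFae : AEMeasurable F (volume.restrict (Set.Ioo (0:ℝ) 1)) := by
      exact (ENNReal.measurable_ofReal.comp_aemeasurable
        ((hF1contS.mono Set.Ioo_subset_Ioc_self).aemeasurable measurableSet_Ioo)).pow_const _
    have hGae : AEMeasurable G (volume.restrict (Set.Ioo (0:ℝ) 1)) := by
      exact (ENNReal.measurable_ofReal.comp_aemeasurable
        ((hF2contS.mono Set.Ioo_subset_Ioc_self).aemeasurable measurableSet_Ioo)).pow_const _
    have hcongr : (∫⁻ r in Set.Ioo (0:ℝ) 1, ENNReal.ofReal (Real.sqrt (F₁ r) * Real.sqrt (F₂ r)))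
        = ∫⁻ r in Set.Ioo (0:ℝ) 1, (F * G) r := by
      apply setLIntegral_congr_fun measurableSet_Ioo
      intro r hr
      have hr0 : 0 < r := hr.1
      have hf1nn : 0 ≤ F₁ r := by rw [hF₁def]; positivity
      have hf2nn : 0 ≤ F₂ r := by rw [hF₂def]; positivity
      beta_reduce
      rw [ENNReal.ofReal_mul (Real.sqrt_nonneg _), hFdef, hGdef]
      simp only [Pi.mul_apply]
      rw [Real.sqrt_eq_rpow, Real.sqrt_eq_rpow,
        ENNReal.ofReal_rpow_of_nonneg hf1nn (by norm_num),
        ENNReal.ofReal_rpow_of_nonneg hf2nn (by norm_num)]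
    have hconj : Real.HolderConjugate 2 2 := by
      constructor <;> norm_num
    have hholder := ENNReal.lintegral_mul_le_Lp_mul_Lq
      (volume.restrict (Set.Ioo (0:ℝ) 1)) hconj hFae hGae
    have hFsq : ∀ r : ℝ, F r ^ (2:ℝ) = ENNReal.ofReal (F₁ r) := by
      intro r
      rw [hFdef, ← ENNReal.rpow_mul]
      norm_num
    have hGsq : ∀ r : ℝ, G r ^ (2:ℝ) = ENNReal.ofReal (F₂ r) := by
      intro r
      rw [hGdef, ← ENNReal.rpow_mul]
      norm_num
    simp only [hFsq, hGsq] at hholder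
    have hsub : (∫⁻ r in Set.Ioc a 1, ENNReal.ofReal (Real.sqrt (F₁ r) * Real.sqrt (F₂ r)))
        ≤ A ^ ((1:ℝ)/2) * B ^ ((1:ℝ)/2) := by
      calc (∫⁻ r in Set.Ioc a 1, ENNReal.ofReal (Real.sqrt (F₁ r) * Real.sqrt (F₂ r)))
          ≤ ∫⁻ r in Set.Ioo (0:ℝ) 1, ENNReal.ofReal (Real.sqrt (F₁ r) * Real.sqrt (F₂ r)) :=
            lintegral_mono_set' (haes a ha0)
        _ = ∫⁻ r in Set.Ioo (0:ℝ) 1, (F * G) r := hcongr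
        _ ≤ (∫⁻ r in Set.Ioo (0:ℝ) 1, ENNReal.ofReal (F₁ r)) ^ ((1:ℝ)/2)
            * (∫⁻ r in Set.Ioo (0:ℝ) 1, ENNReal.ofReal (F₂ r)) ^ ((1:ℝ)/2) := by
              simpa using hholder
        _ = A ^ ((1:ℝ)/2) * B ^ ((1:ℝ)/2) := by rw [hA, hB]
    have hne : A ^ ((1:ℝ)/2) * B ^ ((1:ℝ)/2) ≠ ⊤ :=
      ENNReal.mul_ne_top (ENNReal.rpow_ne_top_of_nonneg (by norm_num) hAt)
        (ENNReal.rpow_ne_top_of_nonneg (by norm_num) hBt)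
    have h9 := ENNReal.toReal_mono hne hsub
    calc (∫⁻ r in Set.Ioc a 1, ENNReal.ofReal (Real.sqrt (F₁ r) * Real.sqrt (F₂ r))).toReal
        ≤ (A ^ ((1:ℝ)/2) * B ^ ((1:ℝ)/2)).toReal := h9
      _ = Real.sqrt (Ar * Br) := by
          rw [ENNReal.toReal_mul, ← ENNReal.toReal_rpow, ← ENNReal.toReal_rpow,
            Real.sqrt_mul hArnn, Real.sqrt_eq_rpow, Real.sqrt_eq_rpow]
  -- combine
  have hcomb : ∫ y in a..1, ψ y ≤ 2 * Ar + 2 * Real.sqrt (Ar * Br) := by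
    have hI1 : IntervalIntegrable ψ volume a 1 := hψcont.intervalIntegrable_of_Icc ha1.le
    have hcont2 : ContinuousOn (fun y => 2 * F₁ y + 2 * (Real.sqrt (F₁ y) * Real.sqrt (F₂ y)))
        (Set.Icc a 1) := by
      apply ContinuousOn.add
      · exact continuousOn_const.mul (hF1contS.mono hIccS)
      · exact continuousOn_const.mul (((hF1contS.mono hIccS).sqrt).mul ((hF2contS.mono hIccS).sqrt))
    have hI2 : IntervalIntegrable (fun y => 2 * F₁ y + 2 * (Real.sqrt (F₁ y) * Real.sqrt (F₂ y)))
        volume a 1 := hcont2.intervalIntegrable_of_Icc ha1.le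
    have hmono := intervalIntegral.integral_mono_on ha1.le hI1 hI2 hpt
    have hIF1 : IntervalIntegrable F₁ volume a 1 :=
      (hF1contS.mono hIccS).intervalIntegrable_of_Icc ha1.le
    have hIFs : IntervalIntegrable (fun y => Real.sqrt (F₁ y) * Real.sqrt (F₂ y)) volume a 1 :=
      (((hF1contS.mono hIccS).sqrt).mul ((hF2contS.mono hIccS).sqrt)).intervalIntegrable_of_Icc ha1.le
    have hsplit : ∫ y in a..1, (2 * F₁ y + 2 * (Real.sqrt (F₁ y) * Real.sqrt (F₂ y)))
        = 2 * (∫ y in a..1, F₁ y) + 2 * ∫ y in a..1, Real.sqrt (F₁ y) * Real.sqrt (F₂ y) := by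
      rw [intervalIntegral.integral_add (hIF1.const_mul 2) (hIFs.const_mul 2),
        intervalIntegral.integral_const_mul, intervalIntegral.integral_const_mul]
    rw [hsplit] at hmono
    linarith
  linarith [hftc, haU, hcomb]

/-- Lemma A.2, estimate (estLinfty): for `g` three times continuously differentiable
on `[0,1]`,
`|(d/dr)(r g)(1)| ≤ 2 (∫₀¹ |(d/dr)(r g)|² (1/r) dr)^{1/4} (∫₀¹ |𝓛g|² r dr)^{1/4}
  + 4 (∫₀¹ |(d/dr)(r g)|² (1/r) dr)^{1/2}`, the integrals possibly `+∞`. -/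
theorem boundary_estimate (g : ℝ → ℂ) (hg : ContDiffOn ℝ 3 g (Set.Icc 0 1)) :
    ENNReal.ofReal ‖dz (fun s => (s : ℂ) * g s) 1‖
      ≤ 2 * (wInt (fun r => ‖dz (fun s => (s : ℂ) * g s) r‖ ^ 2 / r)) ^ ((1 : ℝ) / 4)
            * (wInt (fun r => ‖Lop g r‖ ^ 2 * r)) ^ ((1 : ℝ) / 4)
        + 4 * (wInt (fun r => ‖dz (fun s => (s : ℂ) * g s) r‖ ^ 2 / r)) ^ ((1 : ℝ) / 2) := by
  classical
  set S := Set.Ioc (0:ℝ) 1 with hSdef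
  have hgS : ContDiffOn ℝ 3 g S := hg.mono Set.Ioc_subset_Icc_self
  have hUD : UniqueDiffOn ℝ S := uniqueDiffOn_Ioc 0 1
  set u := dz (fun s => (s : ℂ) * g s) with hudef
  have hg1 : ContDiffOn ℝ 2 (dz g) S := hgS.derivWithin hUD (by norm_num)
  have hg2 : ContDiffOn ℝ 1 (dz (dz g)) S := hg1.derivWithin hUD (by norm_num)
  have hG : ContDiffOn ℝ 3 (fun s : ℝ => (s:ℂ) * g s) S :=
    (Complex.ofRealCLM.contDiff.contDiffOn).mul hgS
  have hu2 : ContDiffOn ℝ 2 u S := hG.derivWithin hUD (by norm_num)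
  have hgd : DifferentiableOn ℝ g S := hgS.differentiableOn (by norm_num)
  have hg1d : DifferentiableOn ℝ (dz g) S := hg1.differentiableOn (by norm_num)
  have hud : DifferentiableOn ℝ u S := hu2.differentiableOn (by norm_num)
  have hu_cont : ContinuousOn u S := hu2.continuousOn
  have hu'c : ContDiffOn ℝ 1 (dz u) S := hu2.derivWithin hUD (by norm_num)
  have hu'_cont : ContinuousOn (dz u) S := hu'c.continuousOn
  have hL_cont : ContinuousOn (Lop g) S := by
    apply ContinuousOn.sub
    · apply ContinuousOn.add hg2.continuousOn
      apply ContinuousOn.mul _ hg1.continuousOn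
      apply ContinuousOn.inv₀ (Complex.continuous_ofReal.continuousOn)
      intro r hr
      exact_mod_cast ne_of_gt hr.1
    · apply ContinuousOn.mul _ hgS.continuousOn
      apply ContinuousOn.inv₀ ((Complex.continuous_ofReal.continuousOn).pow 2)
      intro r hr
      have : (r:ℂ) ≠ 0 := by exact_mod_cast ne_of_gt hr.1
      exact pow_ne_zero 2 this
  have hid : ∀ r ∈ S, HasDerivWithinAt (fun s : ℝ => (s:ℂ)) 1 S r := by
    intro r hr
    simpa using ((hasDerivAt_id r).ofReal_comp).hasDerivWithinAt (s := S)
  have hu_eq : ∀ r ∈ S, u r = g r + r * dz g r := by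
    intro r hr
    have h2 : HasDerivWithinAt g (dz g r) S r := (hgd r hr).hasDerivWithinAt
    have := ((hid r hr).mul h2).derivWithin (hUD r hr)
    rw [hudef, dz]; exact this.trans (by ring)
  have hu'_eq : ∀ r ∈ S, dz u r = 2 * dz g r + r * dz (dz g) r := by
    intro r hr
    have hEq : Set.EqOn u (fun s => g s + (s:ℂ) * dz g s) S := fun s hs => hu_eq s hs
    have h1 : dz u r = derivWithin (fun s => g s + (s:ℂ) * dz g s) S r :=
      derivWithin_congr hEq (hEq hr)
    have h2 : HasDerivWithinAt (fun s => g s + (s:ℂ) * dz g s)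
        (dz g r + (1 * dz g r + r * dz (dz g) r)) S r :=
      (hgd r hr).hasDerivWithinAt.add ((hid r hr).mul (hg1d r hr).hasDerivWithinAt)
    rw [h1, h2.derivWithin (hUD r hr)]; ring
  have hkey : ∀ r ∈ S, dz u r = (r:ℂ)⁻¹ * u r + r * Lop g r := by
    intro r hr
    have hr0 : (r:ℂ) ≠ 0 := by exact_mod_cast (ne_of_gt hr.1)
    rw [hu'_eq r hr, hu_eq r hr, Lop]
    field_simp
    ring
  have hderiv : ∀ r ∈ S, HasDerivWithinAt u (dz u r) S r :=
    fun r hr => (hud r hr).hasDerivWithinAt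
  set A := wInt (fun r => ‖u r‖ ^ 2 / r) with hAdef
  set B := wInt (fun r => ‖Lop g r‖ ^ 2 * r) with hBdef
  have hAint : (∫⁻ r in Set.Ioo (0:ℝ) 1, ENNReal.ofReal (‖u r‖ ^ 2 / r)) = A := rfl
  have hBint : (∫⁻ r in Set.Ioo (0:ℝ) 1, ENNReal.ofReal (‖Lop g r‖ ^ 2 * r)) = B := rfl
  by_cases hAt : A = ⊤
  · rw [hAt, ENNReal.top_rpow_of_pos (by norm_num : (0:ℝ) < 1/2),
      ENNReal.mul_top (by norm_num), add_top]
    exact le_top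
  by_cases hA0 : A = 0
  · have h1 : u 1 = 0 := aux_zero u hu_cont (hAint.trans hA0)
    rw [h1]
    simp
  by_cases hBt : B = ⊤
  · rw [hBt, ENNReal.top_rpow_of_pos (by norm_num : (0:ℝ) < 1/4), ENNReal.mul_top, top_add]
    · exact le_top
    · simp [ENNReal.rpow_eq_zero_iff, hA0, hAt]
  -- main case
  have hmain := aux_main u (dz u) (Lop g) A B hu_cont hu'_cont hL_cont hderiv hkey
    hAint hBint hAt hBt
  set Ar := A.toReal with hArdef
  set Br := B.toReal with hBrdef
  have hArnn : 0 ≤ Ar := ENNReal.toReal_nonneg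
  have hBrnn : 0 ≤ Br := ENNReal.toReal_nonneg
  have hreal : ‖u 1‖ ≤ 2 * Ar ^ ((1:ℝ)/4) * Br ^ ((1:ℝ)/4) + 4 * Ar ^ ((1:ℝ)/2) := by
    set x := Ar ^ ((1:ℝ)/4) with hx
    set y := Br ^ ((1:ℝ)/4) with hy
    have hxnn : 0 ≤ x := Real.rpow_nonneg hArnn _
    have hynn : 0 ≤ y := Real.rpow_nonneg hBrnn _
    have hx4 : x ^ 4 = Ar := by
      rw [hx, ← Real.rpow_natCast (Ar ^ ((1:ℝ)/4)) 4, ← Real.rpow_mul hArnn]; norm_num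
    have hy4 : y ^ 4 = Br := by
      rw [hy, ← Real.rpow_natCast (Br ^ ((1:ℝ)/4)) 4, ← Real.rpow_mul hBrnn]; norm_num
    have hx2 : Ar ^ ((1:ℝ)/2) = x ^ 2 := by
      rw [hx, ← Real.rpow_natCast (Ar ^ ((1:ℝ)/4)) 2, ← Real.rpow_mul hArnn]; norm_num
    have hs : Real.sqrt (Ar * Br) = x ^ 2 * y ^ 2 := by
      rw [← hx4, ← hy4]
      rw [show x^4*y^4 = (x^2*y^2)^2 by ring]
      exact Real.sqrt_sq (by positivity)
    rw [hx2]
    rw [hs, ← hx4] at hmain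
    have hw : 0 ≤ ‖u 1‖ := norm_nonneg _
    have hR : 0 ≤ 2*x*y + 4*x^2 := by positivity
    have hsq : ‖u 1‖^2 ≤ (2*x*y + 4*x^2)^2 := by
      nlinarith [mul_nonneg (mul_nonneg hxnn hxnn) (mul_nonneg hxnn hynn), sq_nonneg (x*y)]
    nlinarith [hsq, hw, hR]
  have e1 : A ^ ((1:ℝ)/4) = ENNReal.ofReal (Ar ^ ((1:ℝ)/4)) := by
    rw [← ENNReal.ofReal_toReal hAt, ← hArdef, ENNReal.ofReal_rpow_of_nonneg hArnn (by norm_num)]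
  have e2 : B ^ ((1:ℝ)/4) = ENNReal.ofReal (Br ^ ((1:ℝ)/4)) := by
    rw [← ENNReal.ofReal_toReal hBt, ← hBrdef, ENNReal.ofReal_rpow_of_nonneg hBrnn (by norm_num)]
  have e3 : A ^ ((1:ℝ)/2) = ENNReal.ofReal (Ar ^ ((1:ℝ)/2)) := by
    rw [← ENNReal.ofReal_toReal hAt, ← hArdef, ENNReal.ofReal_rpow_of_nonneg hArnn (by norm_num)]
  rw [e1, e2, e3, ← ENNReal.ofReal_ofNat 2, ← ENNReal.ofReal_ofNat 4,
    ← ENNReal.ofReal_mul (by norm_num), ← ENNReal.ofReal_mul (by positivity),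
    ← ENNReal.ofReal_mul (by norm_num), ← ENNReal.ofReal_add (by positivity) (by positivity)]
  exact ENNReal.ofReal_le_ofReal hreal
end

section
/- For every complex-valued function g that is three times continuously differentiable on [0,1] and satisfies g(0) = g(1) = 0, one has |(d/dr)(r·g(r))(1)| ≤ 2·√3·(∫₀¹ |g(r)|²·r dr)^{1/8}·(∫₀¹ |(𝓛g)(r)|²·r dr)^{3/8}, where the second integral is allowed to be +∞ (in which case the inequality holds trivially). (Lemma A.2, estimate (estLinfty1).) -/
open MeasureTheory Filter
open Set

section AUX

lemma germ_eq {r : ℝ} (hr : r ∈ Set.Ioc (0:ℝ) 1) :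
    Set.Ioc (0:ℝ) 1 =ᶠ[nhds r] Set.Icc (0:ℝ) 1 := by
  filter_upwards [isOpen_Ioi.mem_nhds (show r ∈ Set.Ioi (0:ℝ) from hr.1)] with y hy
  simp only [Set.mem_Ioc, Set.mem_Icc, eq_iff_iff]
  exact ⟨fun h => ⟨le_of_lt h.1, h.2⟩, fun h => ⟨hy, h.2⟩⟩

lemma dz_eq_G1 (g : ℝ → ℂ) {r : ℝ} (hr : r ∈ Set.Ioc (0:ℝ) 1) :
    dz g r = derivWithin g (Set.Icc 0 1) r := derivWithin_congr_set (germ_eq hr)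

lemma dzdz_eq_G2 (g : ℝ → ℂ) {r : ℝ} (hr : r ∈ Set.Ioc (0:ℝ) 1) :
    dz (dz g) r = derivWithin (derivWithin g (Set.Icc 0 1)) (Set.Icc 0 1) r := by
  have h1 : dz (dz g) r = derivWithin (derivWithin g (Set.Icc 0 1)) (Set.Ioc 0 1) r :=
    derivWithin_congr (fun y hy => dz_eq_G1 g hy) (dz_eq_G1 g hr)
  rw [h1]; exact derivWithin_congr_set (germ_eq hr)

section reg
variable {g : ℝ → ℂ} (hg : ContDiffOn ℝ 3 g (Set.Icc 0 1))
include hg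

omit hg in
lemma hI : UniqueDiffOn ℝ (Set.Icc (0:ℝ) 1) := uniqueDiffOn_Icc one_pos

lemma G1_contDiff : ContDiffOn ℝ 2 (derivWithin g (Set.Icc 0 1)) (Set.Icc 0 1) :=
  hg.derivWithin (uniqueDiffOn_Icc one_pos) (by norm_num)

lemma G2_cont : ContinuousOn (derivWithin (derivWithin g (Set.Icc 0 1)) (Set.Icc 0 1)) (Set.Icc 0 1) :=
  (((G1_contDiff hg).derivWithin (uniqueDiffOn_Icc one_pos) (m := 1) (by norm_num)).continuousOn)

lemma G1_cont : ContinuousOn (derivWithin g (Set.Icc 0 1)) (Set.Icc 0 1) :=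
  (G1_contDiff hg).continuousOn

lemma g_hasDeriv {r : ℝ} (hr : r ∈ Set.Icc (0:ℝ) 1) :
    HasDerivWithinAt g (derivWithin g (Set.Icc 0 1) r) (Set.Icc 0 1) r :=
  ((hg.differentiableOn (by norm_num)) r hr).hasDerivWithinAt

lemma G1_hasDeriv {r : ℝ} (hr : r ∈ Set.Icc (0:ℝ) 1) :
    HasDerivWithinAt (derivWithin g (Set.Icc 0 1))
      (derivWithin (derivWithin g (Set.Icc 0 1)) (Set.Icc 0 1) r) (Set.Icc 0 1) r :=
  (((G1_contDiff hg).differentiableOn (by norm_num)) r hr).hasDerivWithinAt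

lemma g_hasDerivAt {r : ℝ} (hr : r ∈ Set.Ioo (0:ℝ) 1) :
    HasDerivAt g (derivWithin g (Set.Icc 0 1) r) r :=
  (g_hasDeriv hg (Set.Ioo_subset_Icc_self hr)).hasDerivAt (Icc_mem_nhds hr.1 hr.2)

lemma G1_hasDerivAt {r : ℝ} (hr : r ∈ Set.Ioo (0:ℝ) 1) :
    HasDerivAt (derivWithin g (Set.Icc 0 1))
      (derivWithin (derivWithin g (Set.Icc 0 1)) (Set.Icc 0 1) r) r :=
  (G1_hasDeriv hg (Set.Ioo_subset_Icc_self hr)).hasDerivAt (Icc_mem_nhds hr.1 hr.2)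

omit hg in
lemma Lop_eq {r : ℝ} (hr : r ∈ Set.Ioc (0:ℝ) 1) :
    Lop g r = derivWithin (derivWithin g (Set.Icc 0 1)) (Set.Icc 0 1) r
      + ((r:ℂ))⁻¹ * derivWithin g (Set.Icc 0 1) r - (((r:ℂ))^2)⁻¹ * g r := by
  rw [Lop, dzdz_eq_G2 g hr, dz_eq_G1 g hr]

omit hg in
lemma dz_rg (h1 : g 1 = 0) (hgd : DifferentiableOn ℝ g (Set.Icc 0 1)) :
    dz (fun s => (s : ℂ) * g s) 1 = derivWithin g (Set.Icc 0 1) 1 := by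
  have h1m : (1:ℝ) ∈ Set.Icc (0:ℝ) 1 := by norm_num
  have hcoe : HasDerivWithinAt (fun s : ℝ => (s:ℂ)) 1 (Set.Icc 0 1) 1 := by
    simpa using ((hasDerivAt_id (1:ℝ)).ofReal_comp).hasDerivWithinAt
  have hgw : HasDerivWithinAt g (derivWithin g (Set.Icc 0 1) 1) (Set.Icc 0 1) 1 :=
    (hgd 1 h1m).hasDerivWithinAt
  have hprod : HasDerivWithinAt (fun s : ℝ => (s:ℂ) * g s) _ (Set.Icc 0 1) 1 := hcoe.mul hgw
  have : dz (fun s => (s : ℂ) * g s) 1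
      = derivWithin (fun s : ℝ => (s:ℂ) * g s) (Set.Icc 0 1) 1 :=
    derivWithin_congr_set (germ_eq (by norm_num))
  rw [this, hprod.derivWithin (uniqueDiffOn_Icc one_pos 1 h1m), h1]
  push_cast
  ring
end reg

noncomputable def E2 (g : ℝ → ℂ) : ℝ → ℂ := fun s =>
  (s:ℂ)^2 * derivWithin (derivWithin g (Set.Icc 0 1)) (Set.Icc 0 1) s
    + (s:ℂ) * derivWithin g (Set.Icc 0 1) s - g s

lemma hasDerivAt_coe (s : ℝ) : HasDerivAt (fun s : ℝ => (s:ℂ)) 1 s := by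
  simpa using (hasDerivAt_id s).ofReal_comp

lemma hasDerivAt_coe_pow (n : ℕ) (s : ℝ) :
    HasDerivAt (fun s : ℝ => (s:ℂ)^n) (n*(s:ℂ)^(n-1)) s :=
  (hasDerivAt_pow n ((s:ℂ))).comp_ofReal

section ftc
variable {g : ℝ → ℂ} (hg : ContDiffOn ℝ 3 g (Set.Icc 0 1))
include hg

lemma E2_cont : ContinuousOn (E2 g) (Set.Icc 0 1) := by
  apply ContinuousOn.sub
  apply ContinuousOn.add
  · exact (ContinuousOn.pow (Complex.continuous_ofReal.continuousOn) 2).mul (G2_cont hg)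
  · exact (Complex.continuous_ofReal.continuousOn).mul (G1_cont hg)
  · exact hg.continuousOn

lemma key_identity (h1 : g 1 = 0) {a : ℝ} (ha : a ∈ Set.Ico (0:ℝ) 1) :
    ∫ s in a..1, (((s:ℂ)-(a:ℂ))^2 * E2 g s / 2 - (s:ℂ)*(4*(s:ℂ)-3*(a:ℂ)) * g s)
      = ((1:ℂ)-(a:ℂ))^2/2 * derivWithin g (Set.Icc 0 1) 1 := by
  set G1 := derivWithin g (Set.Icc 0 1) with hG1def
  set G2 := derivWithin G1 (Set.Icc 0 1) with hG2def
  set Φ : ℝ → ℂ := fun s =>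
    ((s:ℂ)-(a:ℂ))^2 * ((s:ℂ)^2 * G1 s)/2
      - (3*(s:ℂ)^3 - 4*(a:ℂ)*(s:ℂ)^2 + (a:ℂ)^2*(s:ℂ)) * g s / 2 with hΦdef
  have hcont : ContinuousOn Φ (Set.Icc a 1) := by
    apply ContinuousOn.mono _ (Set.Icc_subset_Icc_left ha.1)
    apply ContinuousOn.sub <;> apply ContinuousOn.div_const
    · exact ((Complex.continuous_ofReal.continuousOn.sub continuousOn_const).pow 2).mul
        ((Complex.continuous_ofReal.continuousOn.pow 2).mul (G1_cont hg))
    · apply ContinuousOn.mul _ hg.continuousOn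
      fun_prop
  have hderiv : ∀ s ∈ Set.Ioo a 1, HasDerivAt Φ
      (((s:ℂ)-(a:ℂ))^2 * E2 g s / 2 - (s:ℂ)*(4*(s:ℂ)-3*(a:ℂ)) * g s) s := by
    intro s hs
    have hs0 : s ∈ Set.Ioo (0:ℝ) 1 := ⟨lt_of_le_of_lt ha.1 hs.1, hs.2⟩
    have hgd := g_hasDerivAt hg hs0
    have hG1d := G1_hasDerivAt hg hs0
    have q1 := ((((hasDerivAt_id ((s:ℂ))).sub_const (a:ℂ)).pow 2).comp_ofReal :
      HasDerivAt (fun y : ℝ => ((y:ℂ)-(a:ℂ))^2) _ s)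
    have h1' := (q1.mul ((hasDerivAt_coe_pow 2 s).mul hG1d)).div_const (2:ℂ)
    have hpoly := ((((hasDerivAt_coe_pow 3 s).const_mul (3:ℂ)).sub
      ((hasDerivAt_coe_pow 2 s).const_mul (4*(a:ℂ)))).add ((hasDerivAt_coe s).const_mul ((a:ℂ)^2)))
    have h2' := (hpoly.mul hgd).div_const (2:ℂ)
    have := h1'.sub h2'
    refine this.congr_deriv ?_
    simp only [E2, ← hG1def, ← hG2def, id_eq, Pi.mul_apply, Pi.pow_apply, Pi.sub_apply, Pi.add_apply]
    push_cast
    ring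
  have hint : IntervalIntegrable
      (fun s : ℝ => ((s:ℂ)-(a:ℂ))^2 * E2 g s / 2 - (s:ℂ)*(4*(s:ℂ)-3*(a:ℂ)) * g s) volume a 1 := by
    apply ContinuousOn.intervalIntegrable
    rw [Set.uIcc_of_le (le_of_lt ha.2)]
    apply ContinuousOn.mono _ (Set.Icc_subset_Icc_left ha.1)
    apply ContinuousOn.sub
    · exact (((Complex.continuous_ofReal.continuousOn.sub continuousOn_const).pow 2).mul
        (E2_cont hg)).div_const 2
    · exact (Complex.continuous_ofReal.continuousOn.mul (by fun_prop)).mul hg.continuousOn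
  have := intervalIntegral.integral_eq_sub_of_hasDeriv_right_of_le (le_of_lt ha.2) hcont
    (fun s hs => (hderiv s hs).hasDerivWithinAt) hint
  rw [this, hΦdef]
  simp only [h1]
  push_cast
  ring

lemma plain_identity (h0 : g 0 = 0) (h1 : g 1 = 0) :
    ∫ s in (0:ℝ)..1, E2 g s = derivWithin g (Set.Icc 0 1) 1 := by
  set G1 := derivWithin g (Set.Icc 0 1) with hG1def
  set G2 := derivWithin G1 (Set.Icc 0 1) with hG2def
  set ψ : ℝ → ℂ := fun s => (s:ℂ)^2 * G1 s - (s:ℂ) * g s with hψdef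
  have hcont : ContinuousOn ψ (Set.Icc 0 1) :=
    ((Complex.continuous_ofReal.continuousOn.pow 2).mul (G1_cont hg)).sub
      (Complex.continuous_ofReal.continuousOn.mul hg.continuousOn)
  have hderiv : ∀ s ∈ Set.Ioo (0:ℝ) 1, HasDerivAt ψ (E2 g s) s := by
    intro s hs
    have hgd := g_hasDerivAt hg hs
    have hG1d := G1_hasDerivAt hg hs
    have := (((hasDerivAt_coe_pow 2 s).mul hG1d)).sub ((hasDerivAt_coe s).mul hgd)
    refine this.congr_deriv ?_
    simp only [E2, ← hG1def, ← hG2def]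
    ring
  have hint : IntervalIntegrable (E2 g) volume 0 1 := by
    apply ContinuousOn.intervalIntegrable
    rw [Set.uIcc_of_le zero_le_one]
    exact E2_cont hg
  have := intervalIntegral.integral_eq_sub_of_hasDeriv_right_of_le zero_le_one hcont
    (fun s hs => (hderiv s hs).hasDerivWithinAt) hint
  rw [this, hψdef]
  simp [h0, h1]
end ftc

lemma CS (S : Set ℝ) (u v : ℝ → ℝ)
    (hu : AEMeasurable u (volume.restrict S)) (hv : AEMeasurable v (volume.restrict S)) :
    ∫⁻ x in S, ENNReal.ofReal (u x * v x)
      ≤ (∫⁻ x in S, ENNReal.ofReal ((u x)^2)) ^ ((1:ℝ)/2)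
        * (∫⁻ x in S, ENNReal.ofReal ((v x)^2)) ^ ((1:ℝ)/2) := by
  have h2 : Real.HolderConjugate 2 2 := Real.HolderConjugate.two_two
  have hu' : AEMeasurable (fun x => ENNReal.ofReal |u x|) (volume.restrict S) :=
    (ENNReal.measurable_ofReal.comp_aemeasurable (continuous_abs.measurable.comp_aemeasurable hu))
  have hv' : AEMeasurable (fun x => ENNReal.ofReal |v x|) (volume.restrict S) :=
    (ENNReal.measurable_ofReal.comp_aemeasurable (continuous_abs.measurable.comp_aemeasurable hv))
  calc ∫⁻ x in S, ENNReal.ofReal (u x * v x)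
      ≤ ∫⁻ x in S, ENNReal.ofReal (|u x|) * ENNReal.ofReal (|v x|) := by
        apply lintegral_mono; intro x
        dsimp only
        rw [← ENNReal.ofReal_mul (abs_nonneg _), ← abs_mul]
        exact ENNReal.ofReal_le_ofReal (le_abs_self _)
    _ ≤ (∫⁻ x in S, ENNReal.ofReal (|u x|) ^ (2:ℝ)) ^ ((1:ℝ)/2)
        * (∫⁻ x in S, ENNReal.ofReal (|v x|) ^ (2:ℝ)) ^ ((1:ℝ)/2) :=
        ENNReal.lintegral_mul_le_Lp_mul_Lq _ h2 hu' hv'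
    _ = _ := by
        have key : ∀ (w : ℝ → ℝ) (x : ℝ),
            ENNReal.ofReal (|w x|) ^ (2:ℝ) = ENNReal.ofReal ((w x)^2) := by
          intro w x
          rw [show ((2:ℝ)) = ((2:ℕ):ℝ) by norm_num, ENNReal.rpow_natCast,
            ← ENNReal.ofReal_pow (abs_nonneg _), sq_abs]
        congr 1
        · congr 1; exact lintegral_congr (fun x => key u x)
        · congr 1; exact lintegral_congr (fun x => key v x)

lemma term_bound {S : Set ℝ} (hSm : MeasurableSet S) {u v : ℝ → ℝ}
    (hu : AEMeasurable u (volume.restrict S)) (hv : AEMeasurable v (volume.restrict S))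
    {C w m : ℝ} (hC : 0 ≤ C) (hw : 0 ≤ w) (hm : 0 ≤ m) (hvol : volume S ≤ ENNReal.ofReal m)
    (hu2 : ∀ x ∈ S, (u x)^2 ≤ C)
    (hv2 : ∫⁻ x in S, ENNReal.ofReal ((v x)^2) ≤ ENNReal.ofReal w) :
    ∫⁻ x in S, ENNReal.ofReal (u x * v x)
      ≤ ENNReal.ofReal (Real.sqrt (C*m) * Real.sqrt w) := by
  calc ∫⁻ x in S, ENNReal.ofReal (u x * v x)
      ≤ (∫⁻ x in S, ENNReal.ofReal ((u x)^2)) ^ ((1:ℝ)/2)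
        * (∫⁻ x in S, ENNReal.ofReal ((v x)^2)) ^ ((1:ℝ)/2) := CS S u v hu hv
    _ ≤ (ENNReal.ofReal C * ENNReal.ofReal m) ^ ((1:ℝ)/2)
        * (ENNReal.ofReal w) ^ ((1:ℝ)/2) := by
        refine mul_le_mul' (ENNReal.rpow_le_rpow ?_ (by norm_num))
          (ENNReal.rpow_le_rpow hv2 (by norm_num))
        calc ∫⁻ x in S, ENNReal.ofReal ((u x)^2)
            ≤ ∫⁻ _ in S, ENNReal.ofReal C :=
              setLIntegral_mono_ae' hSm (ae_of_all _ fun x hx =>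
                ENNReal.ofReal_le_ofReal (hu2 x hx))
          _ = ENNReal.ofReal C * volume S := setLIntegral_const S _
          _ ≤ ENNReal.ofReal C * ENNReal.ofReal m := mul_le_mul_right hvol _
    _ = ENNReal.ofReal (Real.sqrt (C*m) * Real.sqrt w) := by
        rw [← ENNReal.ofReal_mul hC,
          ENNReal.ofReal_rpow_of_nonneg (mul_nonneg hC hm) (by norm_num),
          ENNReal.ofReal_rpow_of_nonneg hw (by norm_num),
          ← ENNReal.ofReal_mul (Real.rpow_nonneg (mul_nonneg hC hm) _)]
        rw [Real.sqrt_eq_rpow, Real.sqrt_eq_rpow]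

lemma E2_eq_Lop (g : ℝ → ℂ) {s : ℝ} (hs : s ∈ Set.Ioc (0:ℝ) 1) :
    E2 g s = (s:ℂ)^2 * Lop g s := by
  have hs0 : (s:ℂ) ≠ 0 := Complex.ofReal_ne_zero.2 (ne_of_gt hs.1)
  rw [Lop_eq hs, E2]
  field_simp

section est
variable {g : ℝ → ℂ} (hg : ContDiffOn ℝ 3 g (Set.Icc 0 1))
include hg

lemma g_aemeas {S : Set ℝ} (hSm : MeasurableSet S) (hS : S ⊆ Set.Icc 0 1) :
    AEMeasurable (fun s => Real.sqrt s * ‖g s‖) (volume.restrict S) :=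
  Real.continuous_sqrt.aemeasurable.mul
    (((hg.continuousOn.mono hS).aemeasurable hSm).norm)

lemma Lop_aemeas {S : Set ℝ} (hSm : MeasurableSet S) (hS : S ⊆ Set.Ioc 0 1) :
    AEMeasurable (fun s => Real.sqrt s * ‖Lop g s‖) (volume.restrict S) := by
  have hF : ContinuousOn (fun s : ℝ => (((s:ℝ):ℂ))⁻¹) S := by
    apply ContinuousOn.inv₀ (Complex.continuous_ofReal.continuousOn)
    exact fun x hx => Complex.ofReal_ne_zero.2 (ne_of_gt (hS hx).1)
  have hFc : ContinuousOn (fun s : ℝ =>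
      derivWithin (derivWithin g (Set.Icc 0 1)) (Set.Icc 0 1) s
        + ((s:ℂ))⁻¹ * derivWithin g (Set.Icc 0 1) s - (((s:ℂ))^2)⁻¹ * g s) S := by
    apply ContinuousOn.sub
    · exact ((G2_cont hg).mono (hS.trans Set.Ioc_subset_Icc_self)).add
        (hF.mul ((G1_cont hg).mono (hS.trans Set.Ioc_subset_Icc_self)))
    · exact (ContinuousOn.inv₀ ((Complex.continuous_ofReal.continuousOn).pow 2)
        (fun x hx => pow_ne_zero 2 (Complex.ofReal_ne_zero.2 (ne_of_gt (hS hx).1)))).mul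
        (hg.continuousOn.mono (hS.trans Set.Ioc_subset_Icc_self))
  have heq : (fun s => Real.sqrt s * ‖Lop g s‖)
      =ᵐ[volume.restrict S] (fun s => Real.sqrt s *
        ‖derivWithin (derivWithin g (Set.Icc 0 1)) (Set.Icc 0 1) s
          + ((s:ℂ))⁻¹ * derivWithin g (Set.Icc 0 1) s - (((s:ℂ))^2)⁻¹ * g s‖) := by
    filter_upwards [ae_restrict_mem hSm] with x hx
    rw [Lop_eq (hS hx)]
  exact (aemeasurable_congr heq).2
    (Real.continuous_sqrt.aemeasurable.mul ((hFc.aemeasurable hSm).norm))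

omit hg in
lemma v_g_bound {a : ℝ} (ha : 0 ≤ a) :
    ∫⁻ s in Set.Ioo a 1, ENNReal.ofReal ((Real.sqrt s * ‖g s‖)^2)
      ≤ wInt (fun r => ‖g r‖ ^ 2 * r) := by
  have h1 : ∫⁻ s in Set.Ioo a 1, ENNReal.ofReal ((Real.sqrt s * ‖g s‖)^2)
      = ∫⁻ s in Set.Ioo a 1, ENNReal.ofReal (‖g s‖^2 * s) := by
    apply setLIntegral_congr_fun measurableSet_Ioo
    intro s hs
    dsimp only
    rw [mul_pow, Real.sq_sqrt (le_trans ha (le_of_lt hs.1))]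
    ring_nf
  rw [h1, wInt]
  exact lintegral_mono_set (Set.Ioo_subset_Ioo_left ha)

omit hg in
lemma v_Lop_bound {a : ℝ} (ha : 0 ≤ a) :
    ∫⁻ s in Set.Ioo a 1, ENNReal.ofReal ((Real.sqrt s * ‖Lop g s‖)^2)
      ≤ wInt (fun r => ‖Lop g r‖ ^ 2 * r) := by
  have h1 : ∫⁻ s in Set.Ioo a 1, ENNReal.ofReal ((Real.sqrt s * ‖Lop g s‖)^2)
      = ∫⁻ s in Set.Ioo a 1, ENNReal.ofReal (‖Lop g s‖^2 * s) := by
    apply setLIntegral_congr_fun measurableSet_Ioo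
    intro s hs
    dsimp only
    rw [mul_pow, Real.sq_sqrt (le_trans ha (le_of_lt hs.1))]
    ring_nf
  rw [h1, wInt]
  exact lintegral_mono_set (Set.Ioo_subset_Ioo_left ha)
end est

lemma pointwise_bound (g : ℝ → ℂ) {a : ℝ} (ha : 0 ≤ a) {s : ℝ} (hs : s ∈ Set.Ioo a 1) :
    ‖((s:ℂ)-(a:ℂ))^2 * E2 g s / 2 - (s:ℂ)*(4*(s:ℂ)-3*(a:ℂ)) * g s‖
      ≤ (Real.sqrt s*(4*s-3*a)) * (Real.sqrt s*‖g s‖)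
        + ((s-a)^2*s*Real.sqrt s/2) * (Real.sqrt s*‖Lop g s‖) := by
  have hs0 : 0 < s := lt_of_le_of_lt ha hs.1
  have hsa : a < s := hs.1
  have h4 : 0 ≤ 4*s-3*a := by nlinarith
  have hss : Real.sqrt s * Real.sqrt s = s := Real.mul_self_sqrt hs0.le
  rw [E2_eq_Lop g ⟨hs0, hs.2.le⟩]
  refine le_trans (norm_sub_le _ _) (le_of_eq ?_)
  have e1 : ‖((s:ℂ)-(a:ℂ))^2 * ((s:ℂ)^2 * Lop g s) / 2‖ = (s-a)^2*s^2*‖Lop g s‖/2 := by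
    rw [show ((s:ℂ)-(a:ℂ)) = (((s-a):ℝ):ℂ) by push_cast; ring]
    simp only [norm_div, norm_mul, norm_pow, Complex.norm_real, Real.norm_eq_abs,
      abs_of_nonneg (sub_nonneg.2 hsa.le), abs_of_nonneg hs0.le, Complex.norm_ofNat]
    ring
  have e2 : ‖(s:ℂ)*(4*(s:ℂ)-3*(a:ℂ)) * g s‖ = s*(4*s-3*a)*‖g s‖ := by
    rw [show (4*(s:ℂ)-3*(a:ℂ)) = (((4*s-3*a):ℝ):ℂ) by push_cast; ring]
    simp only [norm_mul, Complex.norm_real, Real.norm_eq_abs, abs_of_nonneg h4,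
      abs_of_nonneg hs0.le]
  rw [e1, e2,
    show (Real.sqrt s*(4*s-3*a)) * (Real.sqrt s*‖g s‖)
      = (Real.sqrt s*Real.sqrt s)*((4*s-3*a)*‖g s‖) by ring, hss,
    show ((s-a)^2*s*Real.sqrt s/2)*(Real.sqrt s*‖Lop g s‖)
      = (Real.sqrt s*Real.sqrt s)*((s-a)^2*s*‖Lop g s‖/2) by ring, hss]
  ring

section estimates
variable {g : ℝ → ℂ} (hg : ContDiffOn ℝ 3 g (Set.Icc 0 1))
include hg

lemma estI (h1 : g 1 = 0) {a : ℝ} (ha : a ∈ Set.Ico (0:ℝ) 1)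
    (hA : wInt (fun r => ‖g r‖^2*r) ≠ ⊤) (hB : wInt (fun r => ‖Lop g r‖^2*r) ≠ ⊤) :
    ‖derivWithin g (Set.Icc 0 1) 1‖
      ≤ 8*Real.sqrt (1-a)*Real.sqrt (wInt (fun r => ‖g r‖^2*r)).toReal/(1-a)^2
        + Real.sqrt (1-a)*Real.sqrt (wInt (fun r => ‖Lop g r‖^2*r)).toReal := by
  set Ar := (wInt (fun r => ‖g r‖^2*r)).toReal with hArdef
  set Br := (wInt (fun r => ‖Lop g r‖^2*r)).toReal with hBrdef
  have hAr : 0 ≤ Ar := ENNReal.toReal_nonneg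
  have hBr : 0 ≤ Br := ENNReal.toReal_nonneg
  set δ := 1 - a with hδdef
  have hδ : 0 < δ := by simp only [hδdef]; linarith [ha.2]
  have hδ1 : δ ≤ 1 := by simp only [hδdef]; linarith [ha.1]
  clear_value Ar Br δ
  set f : ℝ → ℂ := fun s =>
    ((s:ℂ)-(a:ℂ))^2 * E2 g s / 2 - (s:ℂ)*(4*(s:ℂ)-3*(a:ℂ)) * g s with hfdef
  have hfc : ContinuousOn f (Set.Icc a 1) := by
    apply ContinuousOn.mono _ (Set.Icc_subset_Icc_left ha.1)
    apply ContinuousOn.sub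
    · exact (((Complex.continuous_ofReal.continuousOn.sub continuousOn_const).pow 2).mul
        (E2_cont hg)).div_const 2
    · exact (Complex.continuous_ofReal.continuousOn.mul (by fun_prop)).mul hg.continuousOn
  -- Step A : the identity
  have hkey := key_identity hg h1 ha
  have hcast : ((1:ℂ)-(a:ℂ))^2/2 = (((δ^2/2 : ℝ)):ℂ) := by
    rw [hδdef]; push_cast; ring
  have hnorm : δ^2/2 * ‖derivWithin g (Set.Icc 0 1) 1‖ = ‖∫ s in a..1, f s‖ := by
    rw [hfdef, hkey, hcast, norm_mul, Complex.norm_real, Real.norm_eq_abs,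
      abs_of_nonneg (by positivity)]
  -- Step B : bring to a set integral
  have hB2 : ‖∫ s in a..1, f s‖ ≤ ∫ s in Set.Ioo a 1, ‖f s‖ := by
    refine le_trans (intervalIntegral.norm_integral_le_integral_norm (le_of_lt ha.2)) ?_
    rw [intervalIntegral.integral_of_le (le_of_lt ha.2), integral_Ioc_eq_integral_Ioo]
  -- Step C : to a lintegral
  have hfm : AEStronglyMeasurable (fun s => ‖f s‖) (volume.restrict (Set.Ioo a 1)) :=
    ((hfc.mono (fun x hx => ⟨le_of_lt hx.1, le_of_lt hx.2⟩)).norm).aestronglyMeasurable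
      measurableSet_Ioo
  have hC2 : ∫ s in Set.Ioo a 1, ‖f s‖
      = (∫⁻ s in Set.Ioo a 1, ENNReal.ofReal ‖f s‖).toReal := by
    rw [integral_eq_lintegral_of_nonneg_ae (ae_of_all _ (fun s => norm_nonneg _)) hfm]
  -- Step D : the lintegral bound
  set u1 : ℝ → ℝ := fun s => Real.sqrt s*(4*s-3*a) with hu1def
  set v1 : ℝ → ℝ := fun s => Real.sqrt s*‖g s‖ with hv1def
  set u2 : ℝ → ℝ := fun s => (s-a)^2*s*Real.sqrt s/2 with hu2def
  set v2 : ℝ → ℝ := fun s => Real.sqrt s*‖Lop g s‖ with hv2def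
  have hu1m : AEMeasurable u1 (volume.restrict (Set.Ioo a 1)) := by fun_prop
  have hu2m : AEMeasurable u2 (volume.restrict (Set.Ioo a 1)) := by fun_prop
  have hv1m : AEMeasurable v1 (volume.restrict (Set.Ioo a 1)) :=
    g_aemeas hg measurableSet_Ioo (fun x hx => ⟨le_trans ha.1 (le_of_lt hx.1), le_of_lt hx.2⟩)
  have hv2m : AEMeasurable v2 (volume.restrict (Set.Ioo a 1)) :=
    Lop_aemeas hg measurableSet_Ioo (fun x hx => ⟨lt_of_le_of_lt ha.1 hx.1, le_of_lt hx.2⟩)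
  have hvol : volume (Set.Ioo a 1) ≤ ENNReal.ofReal δ := by
    rw [Real.volume_Ioo, hδdef]
  have hterm1 : ∫⁻ s in Set.Ioo a 1, ENNReal.ofReal (u1 s * v1 s)
      ≤ ENNReal.ofReal (Real.sqrt (16*δ) * Real.sqrt Ar) := by
    refine term_bound measurableSet_Ioo hu1m hv1m (by norm_num) hAr hδ.le hvol ?_ ?_
    · intro x hx
      have hx0 : 0 < x := lt_of_le_of_lt ha.1 hx.1
      have hsq : Real.sqrt x^2 = x := Real.sq_sqrt hx0.le
      have h4 : 0 ≤ 4*x-3*a := by nlinarith [hx.1, ha.1]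
      have h4' : 4*x-3*a ≤ 4 := by nlinarith [hx.2, ha.1]
      simp only [hu1def]
      rw [mul_pow, hsq]
      nlinarith [hx.2]
    · rw [hArdef]; exact (v_g_bound ha.1).trans_eq ((ENNReal.ofReal_toReal hA).symm)
  have hterm2 : ∫⁻ s in Set.Ioo a 1, ENNReal.ofReal (u2 s * v2 s)
      ≤ ENNReal.ofReal (Real.sqrt ((δ^4/4)*δ) * Real.sqrt Br) := by
    refine term_bound measurableSet_Ioo hu2m hv2m (by positivity) hBr hδ.le hvol ?_ ?_
    · intro x hx
      have hx0 : 0 < x := lt_of_le_of_lt ha.1 hx.1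
      have hsq : Real.sqrt x^2 = x := Real.sq_sqrt hx0.le
      have hxa : 0 ≤ x - a := le_of_lt (sub_pos.2 hx.1)
      have hxδ : x - a ≤ δ := by simp only [hδdef]; linarith [hx.2]
      simp only [hu2def]
      rw [div_pow, mul_pow, mul_pow, hsq]
      have h2 : ((x-a)^2)^2 ≤ δ^4 := by
        have := pow_le_pow_left₀ hxa hxδ 4
        nlinarith [this]
      have h3 : x^2 * x ≤ 1 := by nlinarith [hx.2, hx0.le]
      have h4 := mul_le_mul h2 h3 (by positivity) (by positivity)
      calc ((x-a)^2)^2 * x^2 * x / 2^2 = (((x-a)^2)^2 * (x^2*x))/4 := by ring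
        _ ≤ (δ^4 * 1)/4 := by linarith
        _ = δ^4/4 := by ring
    · rw [hBrdef]; exact (v_Lop_bound (g := g) ha.1).trans_eq ((ENNReal.ofReal_toReal hB).symm)
  have hD : ∫⁻ s in Set.Ioo a 1, ENNReal.ofReal ‖f s‖
      ≤ ENNReal.ofReal (4*Real.sqrt δ*Real.sqrt Ar + δ^2*Real.sqrt δ/2*Real.sqrt Br) := by
    calc ∫⁻ s in Set.Ioo a 1, ENNReal.ofReal ‖f s‖
        ≤ ∫⁻ s in Set.Ioo a 1,
            (ENNReal.ofReal (u1 s * v1 s) + ENNReal.ofReal (u2 s * v2 s)) := by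
          refine setLIntegral_mono_ae' measurableSet_Ioo (ae_of_all _ (fun s hs => ?_))
          refine le_trans (ENNReal.ofReal_le_ofReal ?_) ENNReal.ofReal_add_le
          exact pointwise_bound g ha.1 hs
      _ = (∫⁻ s in Set.Ioo a 1, ENNReal.ofReal (u1 s * v1 s))
          + ∫⁻ s in Set.Ioo a 1, ENNReal.ofReal (u2 s * v2 s) :=
          lintegral_add_left' (ENNReal.measurable_ofReal.comp_aemeasurable (hu1m.mul hv1m)) _
      _ ≤ ENNReal.ofReal (Real.sqrt (16*δ) * Real.sqrt Ar)
          + ENNReal.ofReal (Real.sqrt ((δ^4/4)*δ) * Real.sqrt Br) := add_le_add hterm1 hterm2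
      _ = ENNReal.ofReal (4*Real.sqrt δ*Real.sqrt Ar + δ^2*Real.sqrt δ/2*Real.sqrt Br) := by
          rw [← ENNReal.ofReal_add (by positivity) (by positivity)]
          congr 1
          rw [show (16*δ) = 4^2*δ by norm_num, Real.sqrt_mul (by positivity),
            Real.sqrt_sq (by norm_num),
            show ((δ^4/4)*δ) = (δ^2*Real.sqrt δ/2)^2 by
              rw [div_pow, mul_pow, Real.sq_sqrt hδ.le]; ring,
            Real.sqrt_sq (by positivity)]
  -- Step E : put it together
  have hE : δ^2/2 * ‖derivWithin g (Set.Icc 0 1) 1‖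
      ≤ 4*Real.sqrt δ*Real.sqrt Ar + δ^2*Real.sqrt δ/2*Real.sqrt Br := by
    rw [hnorm]
    refine le_trans hB2 (le_trans (le_of_eq hC2) ?_)
    exact ENNReal.toReal_le_of_le_ofReal (by positivity) hD
  calc ‖derivWithin g (Set.Icc 0 1) 1‖
      = (2/δ^2) * (δ^2/2 * ‖derivWithin g (Set.Icc 0 1) 1‖) := by
        field_simp
    _ ≤ (2/δ^2) * (4*Real.sqrt δ*Real.sqrt Ar + δ^2*Real.sqrt δ/2*Real.sqrt Br) := by
        apply mul_le_mul_of_nonneg_left hE (by positivity)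
    _ = 8*Real.sqrt δ*Real.sqrt Ar/δ^2 + Real.sqrt δ*Real.sqrt Br := by
        field_simp
        ring
end estimates

section estII
variable {g : ℝ → ℂ} (hg : ContDiffOn ℝ 3 g (Set.Icc 0 1))
include hg

lemma estII (h0 : g 0 = 0) (h1 : g 1 = 0)
    (hB : wInt (fun r => ‖Lop g r‖^2*r) ≠ ⊤) :
    ‖derivWithin g (Set.Icc 0 1) 1‖
      ≤ Real.sqrt (wInt (fun r => ‖Lop g r‖^2*r)).toReal := by
  set Br := (wInt (fun r => ‖Lop g r‖^2*r)).toReal with hBrdef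
  have hBr : 0 ≤ Br := ENNReal.toReal_nonneg
  have hkey := plain_identity hg h0 h1
  set u : ℝ → ℝ := fun s => s * Real.sqrt s with hudef
  set v : ℝ → ℝ := fun s => Real.sqrt s * ‖Lop g s‖ with hvdef
  have hum : AEMeasurable u (volume.restrict (Set.Ioo (0:ℝ) 1)) := by fun_prop
  have hvm : AEMeasurable v (volume.restrict (Set.Ioo (0:ℝ) 1)) :=
    Lop_aemeas hg measurableSet_Ioo (fun x hx => ⟨hx.1, le_of_lt hx.2⟩)
  have hpt : ∀ s ∈ Set.Ioo (0:ℝ) 1, ‖E2 g s‖ ≤ u s * v s := by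
    intro s hs
    have hss : Real.sqrt s * Real.sqrt s = s := Real.mul_self_sqrt hs.1.le
    rw [E2_eq_Lop g ⟨hs.1, hs.2.le⟩, norm_mul, norm_pow, Complex.norm_real,
      Real.norm_eq_abs, abs_of_nonneg hs.1.le]
    refine le_of_eq ?_
    rw [hudef, hvdef,
      show s * Real.sqrt s * (Real.sqrt s * ‖Lop g s‖)
        = s * (Real.sqrt s * Real.sqrt s) * ‖Lop g s‖ by ring, hss]
    ring
  have hEm : AEStronglyMeasurable (fun s => ‖E2 g s‖) (volume.restrict (Set.Ioo (0:ℝ) 1)) :=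
    (((E2_cont hg).mono Set.Ioo_subset_Icc_self).norm).aestronglyMeasurable measurableSet_Ioo
  have hC2 : ∫ s in Set.Ioo (0:ℝ) 1, ‖E2 g s‖
      = (∫⁻ s in Set.Ioo (0:ℝ) 1, ENNReal.ofReal ‖E2 g s‖).toReal := by
    rw [integral_eq_lintegral_of_nonneg_ae (ae_of_all _ (fun s => norm_nonneg _)) hEm]
  have hD : ∫⁻ s in Set.Ioo (0:ℝ) 1, ENNReal.ofReal ‖E2 g s‖
      ≤ ENNReal.ofReal (Real.sqrt (1*1) * Real.sqrt Br) := by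
    calc ∫⁻ s in Set.Ioo (0:ℝ) 1, ENNReal.ofReal ‖E2 g s‖
        ≤ ∫⁻ s in Set.Ioo (0:ℝ) 1, ENNReal.ofReal (u s * v s) :=
          setLIntegral_mono_ae' measurableSet_Ioo (ae_of_all _ (fun s hs =>
            ENNReal.ofReal_le_ofReal (hpt s hs)))
      _ ≤ ENNReal.ofReal (Real.sqrt (1*1) * Real.sqrt Br) := by
          refine term_bound measurableSet_Ioo hum hvm (by norm_num) hBr (by norm_num)
            (by rw [Real.volume_Ioo]; norm_num) ?_ ?_
          · intro x hx
            have hsq : Real.sqrt x^2 = x := Real.sq_sqrt hx.1.le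
            rw [hudef]
            simp only
            rw [mul_pow, hsq]
            nlinarith [hx.1.le, hx.2]
          · rw [hBrdef]
            exact (v_Lop_bound (g := g) (le_refl 0)).trans_eq ((ENNReal.ofReal_toReal hB).symm)
  calc ‖derivWithin g (Set.Icc 0 1) 1‖ = ‖∫ s in (0:ℝ)..1, E2 g s‖ := by rw [hkey]
    _ ≤ ∫ s in Set.Ioo (0:ℝ) 1, ‖E2 g s‖ := by
        refine le_trans (intervalIntegral.norm_integral_le_integral_norm zero_le_one) ?_
        rw [intervalIntegral.integral_of_le zero_le_one, integral_Ioc_eq_integral_Ioo]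
    _ ≤ Real.sqrt (1*1) * Real.sqrt Br := by
        rw [hC2]
        exact ENNReal.toReal_le_of_le_ofReal (by positivity) hD
    _ = Real.sqrt Br := by norm_num
end estII

section final
variable {g : ℝ → ℂ} (hg : ContDiffOn ℝ 3 g (Set.Icc 0 1))
include hg

lemma A_finite : wInt (fun r => ‖g r‖^2*r) ≠ ⊤ := by
  obtain ⟨M, hM⟩ := isCompact_Icc.exists_bound_of_continuousOn hg.continuousOn
  have h1 : wInt (fun r => ‖g r‖^2*r) ≤ ENNReal.ofReal (M^2) * volume (Set.Ioo (0:ℝ) 1) := by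
    rw [wInt]
    refine (setLIntegral_mono_ae' measurableSet_Ioo (ae_of_all _ (fun x hx => ?_))).trans_eq
      (setLIntegral_const _ (ENNReal.ofReal (M^2)))
    refine ENNReal.ofReal_le_ofReal ?_
    have hb := hM x (Set.Ioo_subset_Icc_self hx)
    have h2 : 0 ≤ ‖g x‖ := norm_nonneg _
    nlinarith [hx.1.le, hx.2.le]
  refine ne_of_lt (lt_of_le_of_lt h1 ?_)
  rw [Real.volume_Ioo]
  exact ENNReal.mul_lt_top ENNReal.ofReal_lt_top ENNReal.ofReal_lt_top

lemma vanish (h1 : g 1 = 0) (hA : wInt (fun r => ‖g r‖^2*r) = 0) :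
    dz (fun s => (s:ℂ) * g s) 1 = 0 := by
  have hmeas : AEMeasurable (fun r => ENNReal.ofReal (‖g r‖^2*r))
      (volume.restrict (Set.Ioo (0:ℝ) 1)) := by
    refine ENNReal.measurable_ofReal.comp_aemeasurable ?_
    exact ((((hg.continuousOn.mono Set.Ioo_subset_Icc_self).aemeasurable
      measurableSet_Ioo).norm.pow_const 2).mul aemeasurable_id)
  have hae := (lintegral_eq_zero_iff' hmeas).1 hA
  have hae' : ∀ᵐ x ∂(volume : Measure ℝ),
      x ∈ Set.Ioo (0:ℝ) 1 → ENNReal.ofReal (‖g x‖^2*x) = 0 :=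
    (ae_restrict_iff' measurableSet_Ioo).1 hae
  have hgz : ∀ r ∈ Set.Ioo (0:ℝ) 1, g r = 0 := by
    by_contra hcon
    push_neg at hcon
    obtain ⟨r₀, hr₀, hne⟩ := hcon
    set V := Set.Ioo (0:ℝ) 1 ∩ g⁻¹' {(0:ℂ)}ᶜ with hVdef
    have hVo : IsOpen V :=
      (hg.continuousOn.mono Set.Ioo_subset_Icc_self).isOpen_inter_preimage isOpen_Ioo
        isOpen_compl_singleton
    have hVnull : volume V = 0 := by
      refine measure_mono_null (fun x hx => ?_) (ae_iff.1 hae')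
      simp only [Set.mem_setOf_eq, Classical.not_imp]
      refine ⟨hx.1, ?_⟩
      have hgx : g x ≠ 0 := hx.2
      have hpos : 0 < ‖g x‖^2 * x := mul_pos (pow_pos (norm_pos_iff.2 hgx) 2) hx.1.1
      exact (ENNReal.ofReal_pos.mpr hpos).ne'
    exact absurd hVnull (ne_of_gt (hVo.measure_pos volume ⟨r₀, hr₀, hne⟩))
  have hEq : Set.EqOn (fun s : ℝ => (s:ℂ) * g s) (fun _ => (0:ℂ)) (Set.Ioc 0 1) := by
    intro x hx
    rcases eq_or_lt_of_le hx.2 with h|h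
    · simp [h, h1]
    · simp [hgz x ⟨hx.1, h⟩]
  rw [dz, derivWithin_congr hEq (by simp [h1]),
    derivWithin_fun_const]
  rfl
end final


end AUX

/-- Lemma A.2, estimate (estLinfty1): for `g` three times continuously differentiable
on `[0,1]` with `g(0) = g(1) = 0`,
`|(d/dr)(r g)(1)| ≤ 2√3 (∫₀¹ |g|² r dr)^{1/8} (∫₀¹ |𝓛g|² r dr)^{3/8}`,
the second integral possibly `+∞`. -/
theorem boundary_estimate_dirichlet (g : ℝ → ℂ) (hg : ContDiffOn ℝ 3 g (Set.Icc 0 1))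
    (h0 : g 0 = 0) (h1 : g 1 = 0) :
    ENNReal.ofReal ‖dz (fun s => (s : ℂ) * g s) 1‖
      ≤ ENNReal.ofReal (2 * Real.sqrt 3)
          * (wInt (fun r => ‖g r‖ ^ 2 * r)) ^ ((1 : ℝ) / 8)
          * (wInt (fun r => ‖Lop g r‖ ^ 2 * r)) ^ ((3 : ℝ) / 8) := by
  have h2sqrt3 : (3:ℝ) ≤ 2*Real.sqrt 3 := by
    nlinarith [Real.sq_sqrt (show (0:ℝ) ≤ 3 by norm_num), Real.sqrt_nonneg 3]
  have h1sqrt3 : (1:ℝ) ≤ Real.sqrt 3 := by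
    nlinarith [Real.sq_sqrt (show (0:ℝ) ≤ 3 by norm_num), Real.sqrt_nonneg 3]
  set A := wInt (fun r => ‖g r‖ ^ 2 * r) with hAdef
  set B := wInt (fun r => ‖Lop g r‖ ^ 2 * r) with hBdef
  have hAtop : A ≠ ⊤ := A_finite hg
  by_cases hBtop : B = ⊤
  · by_cases hA0 : A = 0
    · rw [vanish hg h1 hA0]
      simp
    · rw [hBtop, ENNReal.top_rpow_of_pos (by norm_num : (0:ℝ) < 3/8), ENNReal.mul_top
        (mul_ne_zero (ENNReal.ofReal_pos.mpr (by positivity)).ne'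
          (ENNReal.rpow_pos (pos_iff_ne_zero.2 hA0) hAtop).ne')]
      exact le_top
  · -- B finite
    have hdz : dz (fun s => (s:ℂ) * g s) 1 = derivWithin g (Set.Icc 0 1) 1 :=
      dz_rg h1 (hg.differentiableOn (by norm_num))
    set Ar := A.toReal with hArdef
    set Br := B.toReal with hBrdef
    have hAr : 0 ≤ Ar := ENNReal.toReal_nonneg
    have hBr : 0 ≤ Br := ENNReal.toReal_nonneg
    set x := Ar ^ ((1:ℝ)/8) with hxdef
    set y := Br ^ ((1:ℝ)/8) with hydef
    have hx0 : 0 ≤ x := Real.rpow_nonneg hAr _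
    have hy0 : 0 ≤ y := Real.rpow_nonneg hBr _
    have hx4 : x^4 = Real.sqrt Ar := by
      rw [hxdef, ← Real.rpow_natCast (Ar ^ ((1:ℝ)/8)) 4, ← Real.rpow_mul hAr,
        Real.sqrt_eq_rpow]
      norm_num
    have hy4 : y^4 = Real.sqrt Br := by
      rw [hydef, ← Real.rpow_natCast (Br ^ ((1:ℝ)/8)) 4, ← Real.rpow_mul hBr,
        Real.sqrt_eq_rpow]
      norm_num
    have hy3 : y^3 = Br ^ ((3:ℝ)/8) := by
      rw [hydef, ← Real.rpow_natCast (Br ^ ((1:ℝ)/8)) 3, ← Real.rpow_mul hBr]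
      norm_num
    set N := ‖derivWithin g (Set.Icc 0 1) 1‖ with hNdef
    have hx2 : x^2 = Ar ^ ((1:ℝ)/4) := by
      rw [hxdef, ← Real.rpow_natCast (Ar ^ ((1:ℝ)/8)) 2, ← Real.rpow_mul hAr]
      norm_num
    have hy2 : y^2 = Br ^ ((1:ℝ)/4) := by
      rw [hydef, ← Real.rpow_natCast (Br ^ ((1:ℝ)/8)) 2, ← Real.rpow_mul hBr]
      norm_num
    clear_value Ar Br x y N
    have hmain : N ≤ 2*Real.sqrt 3 * (x * y^3) := by
      by_cases hcase : Br ≤ 256*Ar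
      · -- use estII
        have hb : N ≤ Real.sqrt Br := by
          have hb' := estII hg h0 h1 hBtop
          rw [← hNdef, ← hBrdef] at hb'
          exact hb'
        have hyx : y ≤ 2*x := by
          have h1' : Br ^ ((1:ℝ)/8) ≤ (256*Ar) ^ ((1:ℝ)/8) :=
            Real.rpow_le_rpow hBr hcase (by norm_num)
          have h2' : ((256:ℝ)*Ar) ^ ((1:ℝ)/8) = (256:ℝ)^((1:ℝ)/8) * x := by
            rw [Real.mul_rpow (by norm_num) hAr, hxdef]
          have h3' : ((256:ℝ))^((1:ℝ)/8) = 2 := by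
            rw [show (256:ℝ) = 2^(8:ℕ) by norm_num, ← Real.rpow_natCast 2 8,
              ← Real.rpow_mul (by norm_num)]
            norm_num
          rw [hydef]
          rw [h2', h3'] at h1'
          linarith
        calc N ≤ Real.sqrt Br := hb
          _ = y*y^3 := by rw [← hy4]; ring
          _ ≤ (2*x)*y^3 := mul_le_mul_of_nonneg_right hyx (by positivity)
          _ ≤ 2*Real.sqrt 3 * (x*y^3) := by nlinarith [mul_nonneg hx0 (pow_nonneg hy0 3)]
      · push_neg at hcase
        by_cases hAr0 : Ar = 0
        · -- N = 0 via ε-argument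
          have hBr0 : 0 < Br := by rw [hAr0] at hcase; linarith
          have hN0 : N ≤ 0 := by
            by_contra hc
            push_neg at hc
            set d := min 1 (N^2/(4*Br)) with hddef
            have hd0 : 0 < d := lt_min one_pos (by positivity)
            have hd1 : d ≤ 1 := min_le_left _ _
            have ha : 1 - d ∈ Set.Ico (0:ℝ) 1 := ⟨by linarith, by linarith⟩
            have hest := estI hg h1 ha hAtop hBtop
            rw [sub_sub_cancel, ← hNdef, ← hArdef, ← hBrdef] at hest
            rw [hAr0, Real.sqrt_zero] at hest
            have hsd : Real.sqrt d ≤ N/(2*Real.sqrt Br) := by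
              refine (Real.sqrt_le_sqrt (min_le_right _ _)).trans (le_of_eq ?_)
              rw [show N^2/(4*Br) = (N/(2*Real.sqrt Br))^2 by
                  rw [div_pow, mul_pow, Real.sq_sqrt hBr0.le]; norm_num,
                Real.sqrt_sq (by positivity)]
            have hfin : Real.sqrt d * Real.sqrt Br ≤ N/2 := by
              have he : (N/(2*Real.sqrt Br))*Real.sqrt Br = N/2 := by
                have : Real.sqrt Br ≠ 0 := by positivity
                field_simp
              calc Real.sqrt d * Real.sqrt Br
                  ≤ (N/(2*Real.sqrt Br))*Real.sqrt Br :=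
                    mul_le_mul_of_nonneg_right hsd (Real.sqrt_nonneg _)
                _ = N/2 := he
            simp only [mul_zero, zero_div] at hest
            linarith
          have : 0 ≤ 2*Real.sqrt 3 * (x*y^3) := by positivity
          linarith
        · -- main interpolation case
          have hArpos : 0 < Ar := lt_of_le_of_ne hAr (Ne.symm hAr0)
          have hBrpos : 0 < Br := by nlinarith
          have hxpos : 0 < x := hxdef ▸ Real.rpow_pos_of_pos hArpos _
          have hypos : 0 < y := hydef ▸ Real.rpow_pos_of_pos hBrpos _
          have h4xy : 4*x^2 ≤ y^2 := by
            have h1' : (256*Ar) ^ ((1:ℝ)/4) ≤ Br ^ ((1:ℝ)/4) :=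
              Real.rpow_le_rpow (by positivity) hcase.le (by norm_num)
            have h2' : ((256:ℝ)*Ar) ^ ((1:ℝ)/4) = (256:ℝ)^((1:ℝ)/4) * Ar ^ ((1:ℝ)/4) :=
              Real.mul_rpow (by norm_num) hAr
            have h3' : ((256:ℝ))^((1:ℝ)/4) = 4 := by
              rw [show (256:ℝ) = 4^(4:ℕ) by norm_num, ← Real.rpow_natCast 4 4,
                ← Real.rpow_mul (by norm_num)]
              norm_num
            rw [hx2, hy2]
            rw [h2', h3'] at h1'
            linarith
          set d := 4*x^2/y^2 with hddef
          have hd0 : 0 < d := by positivity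
          have hd1 : d ≤ 1 := by
            rw [hddef, div_le_one (by positivity)]
            exact h4xy
          have ha : 1 - d ∈ Set.Ico (0:ℝ) 1 := ⟨by linarith, by linarith⟩
          have hest := estI hg h1 ha hAtop hBtop
          rw [sub_sub_cancel, ← hNdef, ← hArdef, ← hBrdef] at hest
          have hsd : Real.sqrt d = 2*x/y := by
            rw [hddef, show 4*x^2/y^2 = (2*x/y)^2 by rw [div_pow, mul_pow]; norm_num,
              Real.sqrt_sq (by positivity)]
          have hcomp : 8*Real.sqrt d*Real.sqrt Ar/d^2 + Real.sqrt d*Real.sqrt Br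
              = 3*(x*y^3) := by
            rw [hsd, ← hx4, ← hy4, hddef]
            field_simp
            ring
          rw [hcomp] at hest
          nlinarith [mul_nonneg hx0 (pow_nonneg hy0 3)]
    -- conclude in ENNReal
    rw [hdz]
    have hA' : A ^ ((1:ℝ)/8) = ENNReal.ofReal x := by
      rw [← ENNReal.ofReal_toReal hAtop, ← hArdef,
        ENNReal.ofReal_rpow_of_nonneg hAr (by norm_num), ← hxdef]
    have hB' : B ^ ((3:ℝ)/8) = ENNReal.ofReal (y^3) := by
      rw [← ENNReal.ofReal_toReal hBtop, ← hBrdef,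
        ENNReal.ofReal_rpow_of_nonneg hBr (by norm_num), ← hy3]
    rw [hA', hB', ← ENNReal.ofReal_mul (by positivity), ← ENNReal.ofReal_mul (by positivity)]
    have hmain' := hmain
    rw [hNdef] at hmain'
    refine ENNReal.ofReal_le_ofReal (le_trans hmain' (le_of_eq (by ring)))
end

section
/- There exists a constant C > 0 such that for every complex-valued continuously differentiable function g on [0,1] with g(0) = 0, one has ∫₀¹ |g(r)|²·r dr ≤ C·∫₀¹ |(d/dr)(r·g(r))|²·((1−r²)/r) dr. (Lemma A.3, a Hardy–Littlewood–Pólya type inequality.) -/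
open MeasureTheory Filter

private lemma log_div_bound {r : ℝ} (h0 : 0 < r) (h1 : r < 1) :
    -Real.log (1 - r) / r ≤ 2 / Real.sqrt (1 - r) := by
  have h1r : 0 < 1 - r := by linarith
  set y := Real.sqrt (1 - r) with hy
  have hy0 : 0 < y := Real.sqrt_pos.2 h1r
  have hy2 : y ^ 2 = 1 - r := Real.sq_sqrt h1r.le
  have hy1 : y ≤ 1 := by nlinarith
  have hlog : Real.log (1 - r) = 2 * Real.log y := by
    rw [← hy2, Real.log_pow]; push_cast; ring
  have hlb : Real.log y⁻¹ ≤ y⁻¹ - 1 := Real.log_le_sub_one_of_pos (by positivity)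
  rw [Real.log_inv] at hlb
  have key : -Real.log y * y ≤ 1 - y := by
    have := mul_le_mul_of_nonneg_right hlb hy0.le
    calc -Real.log y * y ≤ (y⁻¹ - 1) * y := this
    _ = 1 - y := by field_simp
  rw [div_le_div_iff₀ h0 hy0]
  nlinarith

private lemma inv_integrable {r : ℝ} (h0 : 0 < r) (h1 : r < 1) :
    IntervalIntegrable (fun s => (1 - s : ℝ)⁻¹) volume 0 r := by
  apply ContinuousOn.intervalIntegrable
  apply ContinuousOn.inv₀ (continuousOn_const.sub continuousOn_id)
  intro y hy
  rw [Set.uIcc_of_le h0.le] at hy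
  simp only [Pi.sub_apply, id_eq]
  have := hy.2; intro h; nlinarith [hy.1]

private lemma ftc_log {r : ℝ} (h0 : 0 < r) (h1 : r < 1) :
    ∫ s in (0:ℝ)..r, (1 - s)⁻¹ = -Real.log (1 - r) := by
  have hderiv : ∀ x ∈ Set.uIcc (0:ℝ) r,
      HasDerivAt (fun s => -Real.log (1 - s)) (1 - x)⁻¹ x := by
    intro x hx
    rw [Set.uIcc_of_le h0.le] at hx
    have hx1 : (1 : ℝ) - x ≠ 0 := by have := hx.2; intro h; nlinarith [hx.1]
    have h := ((Real.hasDerivAt_log hx1).comp x (((hasDerivAt_id x).const_sub 1)))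
    have h2 := h.neg
    refine h2.congr_deriv ?_
    ring
  rw [intervalIntegral.integral_eq_sub_of_hasDerivAt hderiv (inv_integrable h0 h1)]
  simp

private lemma sqrt_integrable :
    IntegrableOn (fun r : ℝ => 2 / Real.sqrt (1 - r)) (Set.Ioo (0:ℝ) 1) := by
  have h0 : IntervalIntegrable (fun u : ℝ => 2 * u ^ (-(1/2) : ℝ)) volume 0 1 :=
    (intervalIntegral.intervalIntegrable_rpow' (by norm_num)).const_mul 2
  have h1 : IntervalIntegrable (fun u : ℝ => 2 / Real.sqrt u) volume 0 1 := by
    rw [intervalIntegrable_iff_integrableOn_Ioc_of_le zero_le_one] at h0 ⊢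
    apply h0.congr_fun ?_ measurableSet_Ioc
    intro u hu
    show 2 * u ^ (-(1/2) : ℝ) = 2 / Real.sqrt u
    rw [Real.sqrt_eq_rpow, Real.rpow_neg hu.1.le]; ring
  have h2 : IntervalIntegrable (fun r : ℝ => 2 / Real.sqrt (1 - r)) volume 0 1 := by
    have := (h1.comp_sub_left 1).symm
    norm_num at this
    exact this
  exact ((intervalIntegrable_iff_integrableOn_Ioc_of_le zero_le_one).1 h2).mono_set
    Set.Ioo_subset_Ioc_self

private lemma sqrt_value :
    ∫ r in Set.Ioo (0:ℝ) 1, 2 / Real.sqrt (1 - r) = 4 := by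
  rw [← integral_Ioc_eq_integral_Ioo, ← intervalIntegral.integral_of_le zero_le_one]
  rw [intervalIntegral.integral_comp_sub_left (fun u => 2 / Real.sqrt u) 1]
  norm_num
  have heq : ∫ u in (0:ℝ)..1, 2 / Real.sqrt u = ∫ u in (0:ℝ)..1, 2 * u ^ (-(1/2) : ℝ) := by
    apply intervalIntegral.integral_congr
    intro u hu
    rw [Set.uIcc_of_le zero_le_one] at hu
    show 2 / Real.sqrt u = 2 * u ^ (-(1/2) : ℝ)
    rw [Real.sqrt_eq_rpow, Real.rpow_neg hu.1]; ring
  rw [heq, intervalIntegral.integral_const_mul, integral_rpow (Or.inl (by norm_num))]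
  rw [Real.zero_rpow (by norm_num), Real.one_rpow]
  norm_num

private lemma sqrt_lintegral :
    ∫⁻ r in Set.Ioo (0:ℝ) 1, ENNReal.ofReal (2 / Real.sqrt (1 - r)) = ENNReal.ofReal 4 := by
  rw [← ofReal_integral_eq_lintegral_ofReal sqrt_integrable
    (Filter.Eventually.of_forall fun r => by positivity), sqrt_value]

private lemma ennreal_half_sq (a : ENNReal) : a ^ (1/2 : ℝ) * a ^ (1/2 : ℝ) = a := by
  rw [← pow_two, ← ENNReal.rpow_natCast (a ^ (1/2 : ℝ)) 2, ← ENNReal.rpow_mul]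
  norm_num

/-- Lemma A.3, a Hardy–Littlewood–Pólya type inequality: there is `C > 0` such that
for every `g` continuously differentiable on `[0,1]` with `g(0) = 0`,
`∫₀¹ |g|² r dr ≤ C ∫₀¹ |(d/dr)(r g)|² (1−r²)/r dr`. -/
theorem hardy_littlewood_polya_type :
    ∃ C : ℝ, 0 < C ∧ ∀ g : ℝ → ℂ, ContDiffOn ℝ 1 g (Set.Icc 0 1) → g 0 = 0 →
      wInt (fun r => ‖g r‖ ^ 2 * r)
        ≤ ENNReal.ofReal C
            * wInt (fun r => ‖dz (fun s => (s : ℂ) * g s) r‖ ^ 2 * ((1 - r ^ 2) / r)) := by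
  refine ⟨4, by norm_num, ?_⟩
  intro g hg hg0
  set f : ℝ → ℂ := fun s => (s : ℂ) * g s with hf_def
  have hf : ContDiffOn ℝ 1 f (Set.Icc 0 1) :=
    (Complex.ofRealCLM.contDiff.contDiffOn).mul hg
  set D : ℝ → ℂ := derivWithin f (Set.Icc 0 1) with hD_def
  have hDcont : ContinuousOn D (Set.Icc 0 1) :=
    hf.continuousOn_derivWithin (uniqueDiffOn_Icc one_pos) le_rfl
  have hDeriv : ∀ x ∈ Set.Ioo (0:ℝ) 1, HasDerivAt f (D x) x := by
    intro x hx
    have hmem : Set.Icc (0:ℝ) 1 ∈ nhds x := Icc_mem_nhds hx.1 hx.2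
    have hdiff : DifferentiableAt ℝ f x :=
      ((hf.differentiableOn one_ne_zero) x (Set.Ioo_subset_Icc_self hx)).differentiableAt hmem
    rw [hD_def, derivWithin_of_mem_nhds hmem]
    exact hdiff.hasDerivAt
  have hdzD : ∀ x ∈ Set.Ioo (0:ℝ) 1, dz f x = D x := by
    intro x hx
    have hmem : Set.Icc (0:ℝ) 1 ∈ nhds x := Icc_mem_nhds hx.1 hx.2
    have hmem' : Set.Ioc (0:ℝ) 1 ∈ nhds x := Ioc_mem_nhds hx.1 hx.2
    rw [dz, derivWithin_of_mem_nhds hmem', hD_def, derivWithin_of_mem_nhds hmem]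
  set I : ENNReal := wInt (fun r => ‖dz f r‖ ^ 2 * ((1 - r ^ 2) / r)) with hI_def
  by_cases hItop : I = ⊤
  · rw [hItop, ENNReal.mul_top (by norm_num : ENNReal.ofReal 4 ≠ 0)]
    exact le_top
  have hI_eq : I = ∫⁻ s in Set.Ioo (0:ℝ) 1,
      ENNReal.ofReal (‖D s‖ ^ 2 * ((1 - s ^ 2) / s)) := by
    rw [hI_def, wInt]
    exact setLIntegral_congr_fun measurableSet_Ioo
      (fun s hs => by rw [hdzD s hs])
  have key : ∀ r ∈ Set.Ioo (0:ℝ) 1,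
      ENNReal.ofReal (‖g r‖ ^ 2 * r) ≤ I * ENNReal.ofReal (2 / Real.sqrt (1 - r)) := by
    intro r hr
    obtain ⟨hr0, hr1⟩ := hr
    have hsub : Set.Icc (0:ℝ) r ⊆ Set.Icc 0 1 := Set.Icc_subset_Icc le_rfl hr1.le
    have hsub' : Set.Ioo (0:ℝ) r ⊆ Set.Icc 0 1 := Set.Ioo_subset_Icc_self.trans hsub
    have hint : IntervalIntegrable D volume 0 r := by
      apply ContinuousOn.intervalIntegrable
      rw [Set.uIcc_of_le hr0.le]
      exact hDcont.mono hsub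
    have hFTC : ∫ s in (0:ℝ)..r, D s = f r := by
      have h0 : f 0 = 0 := by simp [hf_def, hg0]
      have heq := intervalIntegral.integral_eq_sub_of_hasDeriv_right_of_le hr0.le
        (hf.continuousOn.mono hsub)
        (fun x hx => (hDeriv x ⟨hx.1, hx.2.trans hr1⟩).hasDerivWithinAt)
        hint
      rw [heq, h0, sub_zero]
    have hnorm : ‖f r‖ ≤ ∫ s in (0:ℝ)..r, ‖D s‖ := by
      rw [← hFTC]; exact intervalIntegral.norm_integral_le_integral_norm hr0.le
    have hintN : IntegrableOn (fun s => ‖D s‖) (Set.Ioo 0 r) volume :=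
      ((intervalIntegrable_iff_integrableOn_Ioc_of_le hr0.le).1 hint.norm).mono_set
        Set.Ioo_subset_Ioc_self
    have h1 : ENNReal.ofReal ‖f r‖ ≤ ∫⁻ s in Set.Ioo (0:ℝ) r, ENNReal.ofReal ‖D s‖ := by
      calc ENNReal.ofReal ‖f r‖ ≤ ENNReal.ofReal (∫ s in (0:ℝ)..r, ‖D s‖) :=
            ENNReal.ofReal_le_ofReal hnorm
        _ = ENNReal.ofReal (∫ s in Set.Ioo (0:ℝ) r, ‖D s‖) := by
            rw [intervalIntegral.integral_of_le hr0.le, integral_Ioc_eq_integral_Ioo]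
        _ = _ := ofReal_integral_eq_lintegral_ofReal hintN
            (Filter.Eventually.of_forall fun s => norm_nonneg _)
    -- Hölder / Cauchy-Schwarz
    set F1 : ℝ → ENNReal :=
      fun s => ENNReal.ofReal (‖D s‖ * Real.sqrt ((1 - s ^ 2) / s)) with hF1
    set F2 : ℝ → ENNReal := fun s => ENNReal.ofReal (Real.sqrt (s / (1 - s ^ 2))) with hF2
    have hwmeas : Measurable fun s : ℝ => Real.sqrt ((1 - s ^ 2) / s) :=
      Real.continuous_sqrt.measurable.comp
        ((measurable_const.sub (measurable_id.pow_const 2)).div measurable_id)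
    have hmF1 : AEMeasurable F1 (volume.restrict (Set.Ioo (0:ℝ) r)) :=
      ENNReal.measurable_ofReal.comp_aemeasurable
        (((hDcont.mono hsub').norm.aemeasurable measurableSet_Ioo).mul hwmeas.aemeasurable)
    have hmF2 : AEMeasurable F2 (volume.restrict (Set.Ioo (0:ℝ) r)) :=
      (ENNReal.measurable_ofReal.comp (Real.continuous_sqrt.measurable.comp
        (measurable_id.div (measurable_const.sub (measurable_id.pow_const 2))))).aemeasurable
    have hconj : Real.HolderConjugate 2 2 := Real.holderConjugate_iff.mpr ⟨one_lt_two, by norm_num⟩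
    have hHolder := ENNReal.lintegral_mul_le_Lp_mul_Lq
      (volume.restrict (Set.Ioo (0:ℝ) r)) hconj hmF1 hmF2
    -- rewrite the three integrals
    have hprod : ∫⁻ s in Set.Ioo (0:ℝ) r, (F1 * F2) s
        = ∫⁻ s in Set.Ioo (0:ℝ) r, ENNReal.ofReal ‖D s‖ := by
      apply setLIntegral_congr_fun measurableSet_Ioo
      intro s hs
      have hs0 : 0 < s := hs.1
      have hs1 : 0 < 1 - s ^ 2 := by nlinarith [hs.2]
      have hwpos : 0 ≤ (1 - s ^ 2) / s := by positivity
      have hsqrt : Real.sqrt ((1 - s ^ 2) / s) * Real.sqrt (s / (1 - s ^ 2)) = 1 := by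
        rw [← Real.sqrt_mul hwpos]
        rw [show (1 - s ^ 2) / s * (s / (1 - s ^ 2)) = 1 by field_simp]
        exact Real.sqrt_one
      show F1 s * F2 s = _
      rw [hF1, hF2, ← ENNReal.ofReal_mul (by positivity), mul_assoc, hsqrt, mul_one]
    have hsq1 : ∫⁻ s in Set.Ioo (0:ℝ) r, F1 s ^ (2:ℝ)
        = ∫⁻ s in Set.Ioo (0:ℝ) r, ENNReal.ofReal (‖D s‖ ^ 2 * ((1 - s ^ 2) / s)) := by
      apply setLIntegral_congr_fun measurableSet_Ioo
      intro s hs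
      dsimp only
      have hs0 : 0 < s := hs.1
      have hs1 : 0 < 1 - s ^ 2 := by nlinarith [hs.2]
      have hwpos : 0 ≤ (1 - s ^ 2) / s := by positivity
      rw [hF1, ENNReal.ofReal_rpow_of_nonneg (by positivity) (by norm_num)]
      congr 1
      rw [show ((2:ℝ)) = ((2:ℕ):ℝ) by norm_num, Real.rpow_natCast]
      rw [mul_pow, Real.sq_sqrt hwpos]
    have hsq2 : ∫⁻ s in Set.Ioo (0:ℝ) r, F2 s ^ (2:ℝ)
        = ∫⁻ s in Set.Ioo (0:ℝ) r, ENNReal.ofReal (s / (1 - s ^ 2)) := by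
      apply setLIntegral_congr_fun measurableSet_Ioo
      intro s hs
      dsimp only
      have hs0 : 0 < s := hs.1
      have hs1 : 0 < 1 - s ^ 2 := by nlinarith [hs.2]
      rw [hF2, ENNReal.ofReal_rpow_of_nonneg (Real.sqrt_nonneg _) (by norm_num)]
      congr 1
      rw [show ((2:ℝ)) = ((2:ℕ):ℝ) by norm_num, Real.rpow_natCast]
      exact Real.sq_sqrt (by positivity)
    have hA : ∫⁻ s in Set.Ioo (0:ℝ) r, ENNReal.ofReal (‖D s‖ ^ 2 * ((1 - s ^ 2) / s)) ≤ I := by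
      rw [hI_eq]
      exact lintegral_mono_set (Set.Ioo_subset_Ioo le_rfl hr1.le)
    have hB : ∫⁻ s in Set.Ioo (0:ℝ) r, ENNReal.ofReal (s / (1 - s ^ 2))
        ≤ ENNReal.ofReal (-Real.log (1 - r)) := by
      have hmono : ∫⁻ s in Set.Ioo (0:ℝ) r, ENNReal.ofReal (s / (1 - s ^ 2))
          ≤ ∫⁻ s in Set.Ioo (0:ℝ) r, ENNReal.ofReal ((1 - s)⁻¹) := by
        apply lintegral_mono_ae
        rw [ae_restrict_iff' measurableSet_Ioo]
        apply Filter.Eventually.of_forall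
        intro s hs
        apply ENNReal.ofReal_le_ofReal
        have hs0 : 0 < s := hs.1
        have hsr : s < r := hs.2
        have hs1 : 0 < 1 - s := by linarith
        have hs2 : 0 < 1 - s ^ 2 := by nlinarith
        rw [div_le_iff₀ hs2, inv_mul_eq_div, le_div_iff₀ hs1]
        nlinarith
      refine hmono.trans ?_
      have hintinv : IntegrableOn (fun s : ℝ => (1 - s)⁻¹) (Set.Ioo 0 r) volume :=
        ((intervalIntegrable_iff_integrableOn_Ioc_of_le hr0.le).1
          (inv_integrable hr0 hr1)).mono_set Set.Ioo_subset_Ioc_self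
      have hnn : 0 ≤ᵐ[volume.restrict (Set.Ioo (0:ℝ) r)] fun s : ℝ => (1 - s)⁻¹ := by
        rw [Filter.EventuallyLE, ae_restrict_iff' measurableSet_Ioo]
        refine Filter.Eventually.of_forall fun s hs => ?_
        have : (0:ℝ) ≤ 1 - s := by have := hs.2; linarith
        simpa using inv_nonneg.2 this
      rw [← ofReal_integral_eq_lintegral_ofReal hintinv hnn]
      apply ENNReal.ofReal_le_ofReal
      rw [← integral_Ioc_eq_integral_Ioo, ← intervalIntegral.integral_of_le hr0.le,
        ftc_log hr0 hr1]
    -- combine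
    have h2 : ENNReal.ofReal ‖f r‖
        ≤ I ^ (1/2 : ℝ) * (ENNReal.ofReal (-Real.log (1 - r))) ^ (1/2 : ℝ) := by
      refine h1.trans ?_
      calc ∫⁻ s in Set.Ioo (0:ℝ) r, ENNReal.ofReal ‖D s‖
          = ∫⁻ s in Set.Ioo (0:ℝ) r, (F1 * F2) s := hprod.symm
        _ ≤ (∫⁻ s in Set.Ioo (0:ℝ) r, F1 s ^ (2:ℝ)) ^ (1/(2:ℝ))
              * (∫⁻ s in Set.Ioo (0:ℝ) r, F2 s ^ (2:ℝ)) ^ (1/(2:ℝ)) := hHolder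
        _ ≤ I ^ (1/2 : ℝ) * (ENNReal.ofReal (-Real.log (1 - r))) ^ (1/2 : ℝ) := by
            rw [hsq1, hsq2]
            exact mul_le_mul' (ENNReal.rpow_le_rpow hA (by norm_num))
              (ENNReal.rpow_le_rpow hB (by norm_num))
    have h3 : ENNReal.ofReal (‖f r‖ ^ 2) ≤ I * ENNReal.ofReal (-Real.log (1 - r)) := by
      have hm := mul_le_mul' h2 h2
      rw [← ENNReal.ofReal_mul (norm_nonneg _), ← pow_two] at hm
      calc ENNReal.ofReal (‖f r‖ ^ 2) ≤ _ := hm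
        _ = I * ENNReal.ofReal (-Real.log (1 - r)) := by
            rw [mul_mul_mul_comm, ennreal_half_sq, ennreal_half_sq]
    have hfr : ‖f r‖ ^ 2 = ‖g r‖ ^ 2 * r * r := by
      rw [hf_def]
      simp only [norm_mul, Complex.norm_real, Real.norm_eq_abs, abs_of_pos hr0]
      ring
    have h4 : ENNReal.ofReal (‖g r‖ ^ 2 * r) * ENNReal.ofReal r
        = ENNReal.ofReal (‖f r‖ ^ 2) := by
      rw [← ENNReal.ofReal_mul (by positivity), hfr]
    have h5 : ENNReal.ofReal (‖g r‖ ^ 2 * r)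
        ≤ I * ENNReal.ofReal (-Real.log (1 - r)) / ENNReal.ofReal r := by
      rw [ENNReal.le_div_iff_mul_le
        (Or.inl (by simp [hr0] : ENNReal.ofReal r ≠ 0)) (Or.inl ENNReal.ofReal_ne_top)]
      rw [h4]
      exact h3
    calc ENNReal.ofReal (‖g r‖ ^ 2 * r)
        ≤ I * ENNReal.ofReal (-Real.log (1 - r)) / ENNReal.ofReal r := h5
      _ = I * (ENNReal.ofReal (-Real.log (1 - r)) / ENNReal.ofReal r) := mul_div_assoc _ _ _
      _ = I * ENNReal.ofReal (-Real.log (1 - r) / r) := by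
          rw [ENNReal.ofReal_div_of_pos hr0]
      _ ≤ I * ENNReal.ofReal (2 / Real.sqrt (1 - r)) :=
          mul_le_mul_right (ENNReal.ofReal_le_ofReal (log_div_bound hr0 hr1)) I
  calc wInt (fun r => ‖g r‖ ^ 2 * r)
      ≤ ∫⁻ r in Set.Ioo (0:ℝ) 1, I * ENNReal.ofReal (2 / Real.sqrt (1 - r)) := by
        rw [wInt]
        apply lintegral_mono_ae
        rw [ae_restrict_iff' measurableSet_Ioo]
        exact Filter.Eventually.of_forall key
    _ = I * ∫⁻ r in Set.Ioo (0:ℝ) 1, ENNReal.ofReal (2 / Real.sqrt (1 - r)) :=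
        lintegral_const_mul' I _ hItop
    _ = I * ENNReal.ofReal 4 := by rw [sqrt_lintegral]
    _ = ENNReal.ofReal 4 * I := mul_comm _ _
end

section
/- There exists a constant C > 0 such that for every complex-valued function g that is twice continuously differentiable on [0,1], ∫₀¹ |g(r)|²·r dr ≤ C·(∫₀¹ (1−r²)·|g(r)|²·r dr)^{2/3}·(∫₀¹ |(d/dr)(r·g(r))|²·(1/r) dr)^{1/3} + C·∫₀¹ (1−r²)·|g(r)|²·r dr, where the middle factor is allowed to be +∞. (Lemma A.4, first weighted interpolation inequality.) -/
open MeasureTheory Filter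
open Set intervalIntegral

set_option maxHeartbeats 1000000 in
/-- Core real inequality. -/
lemma key_ineq (g : ℝ → ℂ) (hg : ContDiffOn ℝ 2 g (Set.Icc 0 1)) (D : ℝ)
    (hDle : ∀ a b : ℝ, 0 < a → a ≤ b → b < 1 →
      ∫ t in a..b, ‖derivWithin (fun s : ℝ => (s : ℂ) * g s) (Set.Icc 0 1) t‖ ^ 2 ≤ D)
    (ε : ℝ) (hε1 : 0 < ε) (hε2 : ε ≤ 1 / 4) :
    (∫ r in Set.Ioo (0:ℝ) 1, ‖g r‖ ^ 2 * r) ≤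
      6 * (∫ r in Set.Ioo (0:ℝ) 1, (1 - r ^ 2) * ‖g r‖ ^ 2 * r) / ε + 16 * ε ^ 2 * D := by
  set f : ℝ → ℂ := fun s : ℝ => (s : ℂ) * g s with hf_def
  set F : ℝ → ℂ := derivWithin f (Set.Icc 0 1) with hF_def
  have hgc : ContinuousOn g (Icc 0 1) := hg.continuousOn
  have hf : ContDiffOn ℝ 1 f (Icc 0 1) := by
    exact (Complex.ofRealCLM.contDiff.contDiffOn (s := Icc 0 1)).mul (hg.of_le one_le_two)
  have hfc : ContinuousOn f (Icc 0 1) := hf.continuousOn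
  have hFc : ContinuousOn F (Icc 0 1) :=
    hf.continuousOn_derivWithin (uniqueDiffOn_Icc one_pos) le_rfl
  have hder : ∀ r ∈ Ioo (0:ℝ) 1, HasDerivAt f (F r) r := by
    intro r hr
    have h1 : DifferentiableWithinAt ℝ f (Icc 0 1) r :=
      (hf.differentiableOn one_ne_zero) r (Ioo_subset_Icc_self hr)
    exact h1.hasDerivWithinAt.hasDerivAt (Icc_mem_nhds hr.1 hr.2)
  set φ : ℝ → ℝ := fun r => ‖f r‖ ^ 2 with hφ_def
  set ψ : ℝ → ℝ := fun r => 2 * (inner ℝ (f r) (F r) : ℝ) with hψ_def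
  have hφval : ∀ r : ℝ, 0 ≤ r → φ r = ‖g r‖ ^ 2 * r ^ 2 := by
    intro r hr
    simp only [hφ_def, hf_def, norm_mul, Complex.norm_real, Real.norm_eq_abs,
      abs_of_nonneg hr, mul_pow]
    ring
  have hφcont : ContinuousOn φ (Icc 0 1) := (hfc.norm).pow 2
  have hφder : ∀ r ∈ Ioo (0:ℝ) 1, HasDerivAt φ (ψ r) r := by
    intro r hr
    have h := (hder r hr).inner ℝ (hder r hr)
    have h2 : (inner ℝ (f r) (F r) : ℝ) + (inner ℝ (F r) (f r) : ℝ) = ψ r := by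
      simp only [hψ_def]
      linear_combination (real_inner_comm (f r) (F r) : (inner ℝ (F r) (f r) : ℝ) = inner ℝ (f r) (F r))
    rw [h2] at h
    have e : φ = fun t => inner ℝ (f t) (f t) := by
      funext t
      rw [real_inner_self_eq_norm_sq]
    rw [e]; exact h
  have hψcont : ContinuousOn ψ (Icc 0 1) :=
    (continuousOn_const.mul (hfc.inner hFc))
  have hψbound : ∀ r ∈ Icc (0:ℝ) 1, ψ r ≤ 1 / (4 * ε) * ‖f r‖ ^ 2 + 4 * ε * ‖F r‖ ^ 2 := by
    intro r _
    have h1 : |(inner ℝ (f r) (F r) : ℝ)| ≤ ‖f r‖ * ‖F r‖ := abs_real_inner_le_norm _ _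
    have h2 : (inner ℝ (f r) (F r) : ℝ) ≤ ‖f r‖ * ‖F r‖ := (le_abs_self _).trans h1
    have h3 : 1 / (4 * ε) * ‖f r‖ ^ 2 + 4 * ε * ‖F r‖ ^ 2 - 2 * (‖f r‖ * ‖F r‖)
        = (‖f r‖ - 4 * ε * ‖F r‖) ^ 2 / (4 * ε) := by
      field_simp
      ring
    have h4 : (0:ℝ) ≤ (‖f r‖ - 4 * ε * ‖F r‖) ^ 2 / (4 * ε) :=
      div_nonneg (sq_nonneg _) (by positivity)
    simp only [hψ_def]
    nlinarith [h2]
  have hFTC : ∀ s r : ℝ, s ∈ Ioo (0:ℝ) 1 → r ∈ Ioo (0:ℝ) 1 → s ≤ r →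
      φ r = φ s + ∫ t in s..r, ψ t := by
    intro s r hs hr hsr
    have hsub : uIcc s r ⊆ Ioo (0:ℝ) 1 := by
      rw [uIcc_of_le hsr]
      exact Icc_subset_Ioo hs.1 hr.2
    have h := integral_eq_sub_of_hasDerivAt (f := φ) (f' := ψ) (a := s) (b := r)
      (fun x hx => hφder x (hsub hx))
      ((hψcont.mono (hsub.trans Ioo_subset_Icc_self)).intervalIntegrable)
    linarith [h]
  -- integrability of the two main integrands
  have hAcont : ContinuousOn (fun r : ℝ => ‖g r‖ ^ 2 * r) (Icc 0 1) :=
    (hgc.norm.pow 2).mul continuousOn_id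
  have hBcont : ContinuousOn (fun r : ℝ => (1 - r ^ 2) * ‖g r‖ ^ 2 * r) (Icc 0 1) :=
    ((continuousOn_const.sub (continuousOn_id.pow 2)).mul (hgc.norm.pow 2)).mul continuousOn_id
  have hA_int : IntegrableOn (fun r : ℝ => ‖g r‖ ^ 2 * r) (Ioo 0 1) :=
    (hAcont.integrableOn_compact isCompact_Icc).mono_set Ioo_subset_Icc_self
  have hB_int : IntegrableOn (fun r : ℝ => (1 - r ^ 2) * ‖g r‖ ^ 2 * r) (Ioo 0 1) :=
    (hBcont.integrableOn_compact isCompact_Icc).mono_set Ioo_subset_Icc_self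
  set A := ∫ r in Set.Ioo (0:ℝ) 1, ‖g r‖ ^ 2 * r with hA_def
  set B := ∫ r in Set.Ioo (0:ℝ) 1, (1 - r ^ 2) * ‖g r‖ ^ 2 * r with hB_def
  have hAnn : 0 ≤ᵐ[volume.restrict (Ioo (0:ℝ) 1)] fun r : ℝ => ‖g r‖ ^ 2 * r := by
    filter_upwards [ae_restrict_mem measurableSet_Ioo] with r hr
    simpa using mul_nonneg (sq_nonneg ‖g r‖) hr.1.le
  have hBnn : 0 ≤ᵐ[volume.restrict (Ioo (0:ℝ) 1)] fun r : ℝ => (1 - r ^ 2) * ‖g r‖ ^ 2 * r := by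
    filter_upwards [ae_restrict_mem measurableSet_Ioo] with r hr
    have : (0:ℝ) ≤ (1 - r ^ 2) := by nlinarith [hr.1, hr.2]
    simpa using mul_nonneg (mul_nonneg this (sq_nonneg ‖g r‖)) hr.1.le
  -- the minimizing point s₀
  have hle12 : (1 - 2*ε : ℝ) ≤ 1 - ε := by linarith
  have hIccsub : Icc (1 - 2*ε) (1 - ε) ⊆ Icc (0:ℝ) 1 := Icc_subset_Icc (by linarith) (by linarith)
  obtain ⟨s₀, hs₀mem, hs₀min⟩ := (isCompact_Icc (a := 1 - 2*ε) (b := 1 - ε)).exists_isMinOn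
    (nonempty_Icc.mpr hle12) (hφcont.mono hIccsub)
  have hs₀Ioo : s₀ ∈ Ioo (0:ℝ) 1 := ⟨by linarith [hs₀mem.1], by linarith [hs₀mem.2]⟩
  have hφII : IntervalIntegrable φ volume (1 - 2*ε) (1 - ε) :=
    (hφcont.mono (by rw [uIcc_of_le hle12]; exact hIccsub)).intervalIntegrable
  have hstep1 : ε * φ s₀ ≤ ∫ s in (1 - 2*ε)..(1 - ε), φ s := by
    have hconst : ∫ s in (1 - 2*ε)..(1 - ε), φ s₀ = ε * φ s₀ := by
      rw [intervalIntegral.integral_const, smul_eq_mul]; ring_nf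
    calc ε * φ s₀ = ∫ s in (1 - 2*ε)..(1 - ε), φ s₀ := hconst.symm
      _ ≤ ∫ s in (1 - 2*ε)..(1 - ε), φ s :=
          intervalIntegral.integral_mono_on hle12 intervalIntegrable_const hφII
            (fun x hx => isMinOn_iff.mp hs₀min x hx)
  have hstep2 : ∫ s in (1 - 2*ε)..(1 - ε), φ s ≤ (1/ε) * B := by
    have hII2 : IntervalIntegrable (fun s : ℝ => (1/ε) * ((1 - s ^ 2) * ‖g s‖ ^ 2 * s))
        volume (1 - 2*ε) (1 - ε) :=
      ((continuousOn_const.mul (hBcont.mono hIccsub)).mono (by rw [uIcc_of_le hle12])).intervalIntegrable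
    have h1 : ∫ s in (1 - 2*ε)..(1 - ε), φ s
        ≤ ∫ s in (1 - 2*ε)..(1 - ε), (1/ε) * ((1 - s ^ 2) * ‖g s‖ ^ 2 * s) := by
      apply intervalIntegral.integral_mono_on hle12 hφII hII2
      intro s hs
      have hs' : s ∈ Icc (0:ℝ) 1 := hIccsub hs
      have h1s : ε ≤ 1 - s ^ 2 := by nlinarith [hs.2, hs'.1]
      rw [hφval s hs'.1]
      have hg2 : (0:ℝ) ≤ ‖g s‖ ^ 2 := sq_nonneg _
      have h5 : (1/ε) * ε = 1 := by field_simp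
      have hεinv : 1 ≤ (1/ε) * (1 - s ^ 2) := by
        nlinarith [mul_le_mul_of_nonneg_left h1s (by positivity : (0:ℝ) ≤ 1/ε)]
      nlinarith [mul_nonneg hg2 hs'.1, hs'.1, hs'.2, mul_nonneg (mul_nonneg hg2 hs'.1) (sub_nonneg.mpr hεinv)]
    have h2 : ∫ s in (1 - 2*ε)..(1 - ε), (1/ε) * ((1 - s ^ 2) * ‖g s‖ ^ 2 * s)
        = (1/ε) * ∫ s in (1 - 2*ε)..(1 - ε), (1 - s ^ 2) * ‖g s‖ ^ 2 * s :=
      intervalIntegral.integral_const_mul _ _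
    have h3 : ∫ s in (1 - 2*ε)..(1 - ε), (1 - s ^ 2) * ‖g s‖ ^ 2 * s ≤ B := by
      rw [intervalIntegral.integral_of_le hle12]
      refine setIntegral_mono_set hB_int hBnn ?_
      refine (HasSubset.Subset.eventuallyLE ?_)
      exact fun x hx => ⟨by linarith [hx.1], by linarith [hx.2]⟩
    calc ∫ s in (1 - 2*ε)..(1 - ε), φ s ≤ _ := h1
      _ = _ := h2
      _ ≤ (1/ε) * B := mul_le_mul_of_nonneg_left h3 (by positivity)
  have hφs₀ : φ s₀ ≤ B / ε ^ 2 := by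
    have h := hstep1.trans hstep2
    rw [le_div_iff₀ (by positivity : (0:ℝ) < ε ^ 2)]
    have h' := mul_le_mul_of_nonneg_left h hε1.le
    have e1 : ε * ((1/ε) * B) = B := by field_simp
    nlinarith [h']
  -- bound on ∫ ‖f‖² over subintervals
  have hfA : ∀ s r : ℝ, s ∈ Ioo (0:ℝ) 1 → r ∈ Ioo (0:ℝ) 1 → s ≤ r →
      ∫ t in s..r, ‖f t‖ ^ 2 ≤ A := by
    intro s r hs hr hsr
    have hsub : Icc s r ⊆ Icc (0:ℝ) 1 := Icc_subset_Icc hs.1.le hr.2.le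
    have hII1 : IntervalIntegrable (fun t : ℝ => ‖f t‖ ^ 2) volume s r :=
      (((hfc.norm.pow 2)).mono (by rw [uIcc_of_le hsr]; exact hsub)).intervalIntegrable
    have hII2 : IntervalIntegrable (fun t : ℝ => ‖g t‖ ^ 2 * t) volume s r :=
      ((hAcont).mono (by rw [uIcc_of_le hsr]; exact hsub)).intervalIntegrable
    calc ∫ t in s..r, ‖f t‖ ^ 2 ≤ ∫ t in s..r, ‖g t‖ ^ 2 * t := by
          apply intervalIntegral.integral_mono_on hsr hII1 hII2
          intro t ht
          have ht' : t ∈ Icc (0:ℝ) 1 := hsub ht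
          have := hφval t ht'.1
          simp only [hφ_def] at this
          rw [this]
          nlinarith [mul_nonneg (mul_nonneg (sq_nonneg ‖g t‖) ht'.1) (sub_nonneg.mpr ht'.2)]
      _ ≤ A := by
          rw [intervalIntegral.integral_of_le hsr]
          refine setIntegral_mono_set hA_int hAnn (HasSubset.Subset.eventuallyLE ?_)
          exact fun x hx => ⟨lt_of_lt_of_le hs.1 hx.1.le, lt_of_le_of_lt hx.2 hr.2⟩
  -- pointwise bound near 1
  have hmain : ∀ r ∈ Ioo (1 - ε) 1, φ r ≤ B / ε ^ 2 + (1/(4*ε) * A + 4 * ε * D) := by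
    intro r hr
    have hrI : r ∈ Ioo (0:ℝ) 1 := ⟨by linarith [hr.1], hr.2⟩
    have hs₀r : s₀ ≤ r := by linarith [hs₀mem.2, hr.1]
    have hsub : Icc s₀ r ⊆ Icc (0:ℝ) 1 := Icc_subset_Icc hs₀Ioo.1.le hrI.2.le
    have huIcc : uIcc s₀ r = Icc s₀ r := uIcc_of_le hs₀r
    have hII1 : IntervalIntegrable (fun t : ℝ => ‖f t‖ ^ 2) volume s₀ r :=
      ((hfc.norm.pow 2).mono (by rw [huIcc]; exact hsub)).intervalIntegrable
    have hII2 : IntervalIntegrable (fun t : ℝ => ‖F t‖ ^ 2) volume s₀ r :=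
      ((hFc.norm.pow 2).mono (by rw [huIcc]; exact hsub)).intervalIntegrable
    have hIIψ : IntervalIntegrable ψ volume s₀ r :=
      (hψcont.mono (by rw [huIcc]; exact hsub)).intervalIntegrable
    have hIIrhs : IntervalIntegrable
        (fun t : ℝ => 1/(4*ε) * ‖f t‖ ^ 2 + 4 * ε * ‖F t‖ ^ 2) volume s₀ r :=
      (hII1.const_mul _).add (hII2.const_mul _)
    rw [hFTC s₀ r hs₀Ioo hrI hs₀r]
    have h1 : ∫ t in s₀..r, ψ t
        ≤ ∫ t in s₀..r, (1/(4*ε) * ‖f t‖ ^ 2 + 4 * ε * ‖F t‖ ^ 2) :=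
      intervalIntegral.integral_mono_on hs₀r hIIψ hIIrhs (fun t ht => hψbound t (hsub ht))
    have h2 : ∫ t in s₀..r, (1/(4*ε) * ‖f t‖ ^ 2 + 4 * ε * ‖F t‖ ^ 2)
        = 1/(4*ε) * (∫ t in s₀..r, ‖f t‖ ^ 2) + 4 * ε * (∫ t in s₀..r, ‖F t‖ ^ 2) := by
      rw [intervalIntegral.integral_add (hII1.const_mul _) (hII2.const_mul _),
        intervalIntegral.integral_const_mul, intervalIntegral.integral_const_mul]
    have h3 : 1/(4*ε) * (∫ t in s₀..r, ‖f t‖ ^ 2) ≤ 1/(4*ε) * A :=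
      mul_le_mul_of_nonneg_left (hfA s₀ r hs₀Ioo hrI hs₀r) (by positivity)
    have h4 : 4 * ε * (∫ t in s₀..r, ‖F t‖ ^ 2) ≤ 4 * ε * D :=
      mul_le_mul_of_nonneg_left (hDle s₀ r hs₀Ioo.1 hs₀r hrI.2) (by positivity)
    linarith [hφs₀]
  -- split the integral
  have hsub1 : Ioc (0:ℝ) (1 - ε) ⊆ Ioo (0:ℝ) 1 := fun x hx => ⟨hx.1, by linarith [hx.2]⟩
  have hsub2 : Ioo (1 - ε) 1 ⊆ Ioo (0:ℝ) 1 := fun x hx => ⟨by linarith [hx.1], hx.2⟩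
  have hsplitset : Ioc (0:ℝ) (1 - ε) ∪ Ioo (1 - ε) 1 = Ioo (0:ℝ) 1 :=
    Set.Ioc_union_Ioo_eq_Ioo (by linarith) (by linarith)
  have hdisj : Disjoint (Ioc (0:ℝ) (1 - ε)) (Ioo (1 - ε) 1) :=
    Set.disjoint_left.mpr fun x hx hx' => absurd hx.2 (not_le.mpr hx'.1)
  have hAsplit : A = (∫ r in Ioc (0:ℝ) (1 - ε), ‖g r‖ ^ 2 * r)
      + ∫ r in Ioo (1 - ε) 1, ‖g r‖ ^ 2 * r := by
    rw [hA_def, ← hsplitset]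
    exact setIntegral_union hdisj measurableSet_Ioo (hA_int.mono_set hsub1) (hA_int.mono_set hsub2)
  have hpiece1 : ∫ r in Ioc (0:ℝ) (1 - ε), ‖g r‖ ^ 2 * r ≤ (1/ε) * B := by
    have hle : ∫ r in Ioc (0:ℝ) (1 - ε), ‖g r‖ ^ 2 * r
        ≤ ∫ r in Ioc (0:ℝ) (1 - ε), (1/ε) * ((1 - r ^ 2) * ‖g r‖ ^ 2 * r) := by
      apply setIntegral_mono_on (hA_int.mono_set hsub1)
        ((hB_int.mono_set hsub1).const_mul _) measurableSet_Ioc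
      intro r hr
      have h1s : ε ≤ 1 - r ^ 2 := by nlinarith [hr.1, hr.2]
      have hg2 : (0:ℝ) ≤ ‖g r‖ ^ 2 := sq_nonneg _
      have h5 : (1/ε) * ε = 1 := by field_simp
      have hεinv : 1 ≤ (1/ε) * (1 - r ^ 2) := by
        nlinarith [mul_le_mul_of_nonneg_left h1s (by positivity : (0:ℝ) ≤ 1/ε)]
      nlinarith [mul_nonneg hg2 hr.1.le, mul_nonneg (mul_nonneg hg2 hr.1.le) (sub_nonneg.mpr hεinv)]
    have heq : ∫ r in Ioc (0:ℝ) (1 - ε), (1/ε) * ((1 - r ^ 2) * ‖g r‖ ^ 2 * r)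
        = (1/ε) * ∫ r in Ioc (0:ℝ) (1 - ε), (1 - r ^ 2) * ‖g r‖ ^ 2 * r :=
      integral_const_mul _ _
    have h3 : ∫ r in Ioc (0:ℝ) (1 - ε), (1 - r ^ 2) * ‖g r‖ ^ 2 * r ≤ B :=
      setIntegral_mono_set hB_int hBnn (HasSubset.Subset.eventuallyLE hsub1)
    calc _ ≤ _ := hle
      _ = _ := heq
      _ ≤ (1/ε) * B := mul_le_mul_of_nonneg_left h3 (by positivity)
  have hpiece2 : ∫ r in Ioo (1 - ε) 1, ‖g r‖ ^ 2 * r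
      ≤ ε * (2 * (B / ε ^ 2 + (1/(4*ε) * A + 4 * ε * D))) := by
    set c : ℝ := 2 * (B / ε ^ 2 + (1/(4*ε) * A + 4 * ε * D)) with hc_def
    have hle : ∫ r in Ioo (1 - ε) 1, ‖g r‖ ^ 2 * r ≤ ∫ _r in Ioo (1 - ε) 1, c := by
      apply setIntegral_mono_on (hA_int.mono_set hsub2) ?_ measurableSet_Ioo
      · intro r hr
        have hrI : r ∈ Ioo (0:ℝ) 1 := hsub2 hr
        have hφr := hmain r hr
        rw [hφval r hrI.1.le] at hφr
        have hg2 : (0:ℝ) ≤ ‖g r‖ ^ 2 := sq_nonneg _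
        rw [hc_def]
        nlinarith [hr.1, hrI.2, mul_nonneg hg2 hrI.1.le]
      · exact integrableOn_const (by rw [Real.volume_Ioo]; exact ENNReal.ofReal_ne_top)
    have heq : ∫ _r in Ioo (1 - ε) 1, c = ε * c := by
      rw [setIntegral_const, Real.volume_real_Ioo_of_le (by linarith : 1 - ε ≤ 1), smul_eq_mul]
      ring_nf
    calc _ ≤ _ := hle
      _ = ε * c := heq
  have expand : ε * (2 * (B / ε ^ 2 + (1/(4*ε) * A + 4 * ε * D)))
      = 2 * (B/ε) + A/2 + 8 * ε ^ 2 * D := by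
    field_simp
    ring
  have hfinal : A ≤ (1/ε) * B + ε * (2 * (B / ε ^ 2 + (1/(4*ε) * A + 4 * ε * D))) := by
    calc A = _ := hAsplit
      _ ≤ _ := add_le_add hpiece1 hpiece2
  rw [expand] at hfinal
  have e1 : (1/ε) * B = B/ε := by ring
  have e2 : 6 * B / ε = 6 * (B/ε) := by ring
  linarith [hfinal, e1, e2]

set_option maxHeartbeats 1000000 in
/-- Lemma A.4, first weighted interpolation inequality: there is `C > 0` such that
for every `g` twice continuously differentiable on `[0,1]`,
`∫₀¹ |g|² r dr ≤ C (∫₀¹ (1−r²)|g|² r dr)^{2/3} (∫₀¹ |(d/dr)(r g)|² (1/r) dr)^{1/3}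
  + C ∫₀¹ (1−r²)|g|² r dr`, the middle factor possibly `+∞`. -/
theorem weighted_interpolation_first :
    ∃ C : ℝ, 0 < C ∧ ∀ g : ℝ → ℂ, ContDiffOn ℝ 2 g (Set.Icc 0 1) →
      wInt (fun r => ‖g r‖ ^ 2 * r)
        ≤ ENNReal.ofReal C * (wInt (fun r => (1 - r ^ 2) * ‖g r‖ ^ 2 * r)) ^ ((2 : ℝ) / 3)
              * (wInt (fun r => ‖dz (fun s => (s : ℂ) * g s) r‖ ^ 2 / r)) ^ ((1 : ℝ) / 3)
          + ENNReal.ofReal C * wInt (fun r => (1 - r ^ 2) * ‖g r‖ ^ 2 * r) := by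
  refine ⟨25, by norm_num, ?_⟩
  intro g hg
  set f : ℝ → ℂ := fun s : ℝ => (s : ℂ) * g s with hf_def
  set F : ℝ → ℂ := derivWithin f (Set.Icc 0 1) with hF_def
  have hgc : ContinuousOn g (Set.Icc 0 1) := hg.continuousOn
  have hf : ContDiffOn ℝ 1 f (Set.Icc 0 1) :=
    (Complex.ofRealCLM.contDiff.contDiffOn (s := Set.Icc 0 1)).mul (hg.of_le one_le_two)
  have hFc : ContinuousOn F (Set.Icc 0 1) :=
    hf.continuousOn_derivWithin (uniqueDiffOn_Icc one_pos) le_rfl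
  have hAcont : ContinuousOn (fun r : ℝ => ‖g r‖ ^ 2 * r) (Set.Icc 0 1) :=
    (hgc.norm.pow 2).mul continuousOn_id
  have hBcont : ContinuousOn (fun r : ℝ => (1 - r ^ 2) * ‖g r‖ ^ 2 * r) (Set.Icc 0 1) :=
    ((continuousOn_const.sub (continuousOn_id.pow 2)).mul (hgc.norm.pow 2)).mul continuousOn_id
  have hA_int : IntegrableOn (fun r : ℝ => ‖g r‖ ^ 2 * r) (Set.Ioo 0 1) :=
    (hAcont.integrableOn_compact isCompact_Icc).mono_set Set.Ioo_subset_Icc_self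
  have hB_int : IntegrableOn (fun r : ℝ => (1 - r ^ 2) * ‖g r‖ ^ 2 * r) (Set.Ioo 0 1) :=
    (hBcont.integrableOn_compact isCompact_Icc).mono_set Set.Ioo_subset_Icc_self
  have hAnn : 0 ≤ᵐ[volume.restrict (Set.Ioo (0:ℝ) 1)] fun r : ℝ => ‖g r‖ ^ 2 * r := by
    filter_upwards [ae_restrict_mem measurableSet_Ioo] with r hr
    simpa using mul_nonneg (sq_nonneg ‖g r‖) hr.1.le
  have hBnn : 0 ≤ᵐ[volume.restrict (Set.Ioo (0:ℝ) 1)]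
      fun r : ℝ => (1 - r ^ 2) * ‖g r‖ ^ 2 * r := by
    filter_upwards [ae_restrict_mem measurableSet_Ioo] with r hr
    have : (0:ℝ) ≤ 1 - r ^ 2 := by nlinarith [hr.1, hr.2]
    simpa using mul_nonneg (mul_nonneg this (sq_nonneg ‖g r‖)) hr.1.le
  set A := ∫ r in Set.Ioo (0:ℝ) 1, ‖g r‖ ^ 2 * r with hA_def
  set B := ∫ r in Set.Ioo (0:ℝ) 1, (1 - r ^ 2) * ‖g r‖ ^ 2 * r with hB_def
  have hA_eq : wInt (fun r => ‖g r‖ ^ 2 * r) = ENNReal.ofReal A := by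
    unfold wInt
    exact (ofReal_integral_eq_lintegral_ofReal hA_int hAnn).symm
  have hB_eq : wInt (fun r => (1 - r ^ 2) * ‖g r‖ ^ 2 * r) = ENNReal.ofReal B := by
    unfold wInt
    exact (ofReal_integral_eq_lintegral_ofReal hB_int hBnn).symm
  by_cases hB0 : wInt (fun r => (1 - r ^ 2) * ‖g r‖ ^ 2 * r) = 0
  · -- degenerate case : B = 0 forces the left side to vanish
    have hBm : AEMeasurable (fun r : ℝ => ENNReal.ofReal ((1 - r ^ 2) * ‖g r‖ ^ 2 * r))
        (volume.restrict (Set.Ioo (0:ℝ) 1)) :=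
      ENNReal.measurable_ofReal.comp_aemeasurable
        ((hBcont.mono Set.Ioo_subset_Icc_self).aemeasurable measurableSet_Ioo)
    have h0 : (fun r : ℝ => ENNReal.ofReal ((1 - r ^ 2) * ‖g r‖ ^ 2 * r))
        =ᵐ[volume.restrict (Set.Ioo (0:ℝ) 1)] 0 := by
      refine (lintegral_eq_zero_iff' hBm).mp ?_
      simpa [wInt] using hB0
    have hLHS : wInt (fun r => ‖g r‖ ^ 2 * r) = 0 := by
      unfold wInt
      rw [← lintegral_zero (μ := volume.restrict (Set.Ioo (0:ℝ) 1))]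
      apply lintegral_congr_ae
      filter_upwards [h0, ae_restrict_mem measurableSet_Ioo] with r h0r hr
      have h1 : (1 - r ^ 2) * ‖g r‖ ^ 2 * r ≤ 0 := by
        simpa [ENNReal.ofReal_eq_zero] using h0r
      have hr2 : (0:ℝ) < 1 - r ^ 2 := by nlinarith [hr.1, hr.2]
      have h2 : ‖g r‖ ^ 2 * r ≤ 0 := by
        nlinarith [mul_nonneg (sq_nonneg ‖g r‖) hr.1.le]
      simpa using ENNReal.ofReal_eq_zero.mpr h2
    rw [hLHS]
    exact zero_le
  · have hBr_pos : 0 < B := by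
      rcases lt_or_ge 0 B with h | h
      · exact h
      · exact absurd (by rw [hB_eq]; exact ENNReal.ofReal_eq_zero.mpr h) hB0
    by_cases hDtop : wInt (fun r => ‖dz f r‖ ^ 2 / r) = ⊤
    · rw [hDtop, hB_eq]
      have h1 : (⊤ : ENNReal) ^ ((1:ℝ)/3) = ⊤ := ENNReal.top_rpow_of_pos (by norm_num)
      rw [h1, ENNReal.mul_top, top_add]
      · exact le_top
      · refine mul_ne_zero ?_ ?_
        · simp only [ne_eq, ENNReal.ofReal_eq_zero, not_le]; norm_num
        · rw [ENNReal.ofReal_rpow_of_nonneg hBr_pos.le (by norm_num : (0:ℝ) ≤ 2/3)]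
          simp only [ne_eq, ENNReal.ofReal_eq_zero, not_le]
          exact Real.rpow_pos_of_pos hBr_pos _
    · -- main case
      have hdzF : ∀ r ∈ Set.Ioo (0:ℝ) 1, dz f r = F r := by
        intro r hr
        have h1 : Set.Ioc (0:ℝ) 1 ∈ nhds r :=
          mem_nhds_iff.mpr ⟨Set.Ioo 0 1, Set.Ioo_subset_Ioc_self, isOpen_Ioo, hr⟩
        have h2 : Set.Icc (0:ℝ) 1 ∈ nhds r := Icc_mem_nhds hr.1 hr.2
        rw [dz, derivWithin_of_mem_nhds h1, hF_def, derivWithin_of_mem_nhds h2]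
      have hDcongr : wInt (fun r => ‖dz f r‖ ^ 2 / r)
          = ∫⁻ r in Set.Ioo (0:ℝ) 1, ENNReal.ofReal (‖F r‖ ^ 2 / r) := by
        unfold wInt
        exact setLIntegral_congr_fun measurableSet_Ioo
          (fun r hr => by simp only [hdzF r hr])
      have hDcont : ContinuousOn (fun r : ℝ => ‖F r‖ ^ 2 / r) (Set.Ioo 0 1) :=
        ((hFc.mono Set.Ioo_subset_Icc_self).norm.pow 2).div continuousOn_id
          (fun r hr => ne_of_gt hr.1)
      have hDnn : 0 ≤ᵐ[volume.restrict (Set.Ioo (0:ℝ) 1)] fun r : ℝ => ‖F r‖ ^ 2 / r := by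
        filter_upwards [ae_restrict_mem measurableSet_Ioo] with r hr
        simpa using div_nonneg (sq_nonneg ‖F r‖) hr.1.le
      have hD_int : IntegrableOn (fun r : ℝ => ‖F r‖ ^ 2 / r) (Set.Ioo 0 1) := by
        constructor
        · exact hDcont.aestronglyMeasurable measurableSet_Ioo
        · rw [hasFiniteIntegral_iff_ofReal hDnn]
          have : (∫⁻ r in Set.Ioo (0:ℝ) 1, ENNReal.ofReal (‖F r‖ ^ 2 / r)) ≠ ⊤ := by
            rw [← hDcongr]; exact hDtop
          exact lt_top_iff_ne_top.mpr this
      set Dr := ∫ r in Set.Ioo (0:ℝ) 1, ‖F r‖ ^ 2 / r with hDr_def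
      have hD_eq : wInt (fun r => ‖dz f r‖ ^ 2 / r) = ENNReal.ofReal Dr := by
        rw [hDcongr]
        exact (ofReal_integral_eq_lintegral_ofReal hD_int hDnn).symm
      have hDr_nn : 0 ≤ Dr := integral_nonneg_of_ae hDnn
      have hDle : ∀ a b : ℝ, 0 < a → a ≤ b → b < 1 →
          ∫ t in a..b, ‖F t‖ ^ 2 ≤ Dr := by
        intro a b ha hab hb
        have hsub : Set.Ioc a b ⊆ Set.Ioo (0:ℝ) 1 :=
          fun x hx => ⟨ha.trans hx.1, lt_of_le_of_lt hx.2 hb⟩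
        have hIccab : Set.Icc a b ⊆ Set.Icc (0:ℝ) 1 :=
          Set.Icc_subset_Icc ha.le (by linarith)
        have hI1 : IntegrableOn (fun t : ℝ => ‖F t‖ ^ 2) (Set.Ioc a b) :=
          (((hFc.mono hIccab).norm.pow 2).integrableOn_compact isCompact_Icc).mono_set
            Set.Ioc_subset_Icc_self
        rw [intervalIntegral.integral_of_le hab]
        calc ∫ t in Set.Ioc a b, ‖F t‖ ^ 2
            ≤ ∫ t in Set.Ioc a b, ‖F t‖ ^ 2 / t := by
              apply setIntegral_mono_on hI1 (hD_int.mono_set hsub) measurableSet_Ioc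
              intro t ht
              have ht0 : (0:ℝ) < t := ha.trans ht.1
              have ht1 : t ≤ 1 := le_of_lt (lt_of_le_of_lt ht.2 hb)
              rw [le_div_iff₀ ht0]
              nlinarith [sq_nonneg ‖F t‖]
          _ ≤ Dr := setIntegral_mono_set hD_int hDnn hsub.eventuallyLE
      set a := B ^ ((1:ℝ)/3) with ha_def
      set b := Dr ^ ((1:ℝ)/3) with hb_def
      have ha : 0 < a := Real.rpow_pos_of_pos hBr_pos _
      have hb : 0 ≤ b := Real.rpow_nonneg hDr_nn _
      set ε := a / (4 * (a + b)) with hε_def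
      have hε1 : 0 < ε := by positivity
      have hε2 : ε ≤ 1/4 := by
        rw [hε_def, div_le_div_iff₀ (by positivity) (by norm_num)]
        linarith
      have hkey := key_ineq g hg Dr hDle ε hε1 hε2

      have ha3 : a ^ (3:ℕ) = B := by
        rw [ha_def, ← Real.rpow_natCast (B ^ ((1:ℝ)/3)) 3, ← Real.rpow_mul hBr_pos.le]
        norm_num
      have hb3 : b ^ (3:ℕ) = Dr := by
        rw [hb_def, ← Real.rpow_natCast (Dr ^ ((1:ℝ)/3)) 3, ← Real.rpow_mul hDr_nn]
        norm_num
      have ha2 : a ^ (2:ℕ) = B ^ ((2:ℝ)/3) := by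
        rw [ha_def, ← Real.rpow_natCast (B ^ ((1:ℝ)/3)) 2, ← Real.rpow_mul hBr_pos.le]
        norm_num
      have h6 : 6 * B / ε = 24 * a ^ 3 + 24 * a ^ 2 * b := by
        rw [← ha3, hε_def]
        field_simp
        ring
      have h16 : 16 * ε ^ 2 * Dr ≤ a ^ 2 * b := by
        rw [← hb3, hε_def]
        have heq : 16 * (a / (4 * (a + b))) ^ 2 * b ^ 3 = a ^ 2 * b ^ 3 / (a + b) ^ 2 := by
          field_simp
          ring
        rw [heq, div_le_iff₀ (by positivity)]
        have hbsq : b ^ 2 ≤ (a + b) ^ 2 := by nlinarith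
        nlinarith [mul_nonneg (mul_nonneg (sq_nonneg a) hb) (sub_nonneg.mpr hbsq)]
      have hfinal : A ≤ 25 * B ^ ((2:ℝ)/3) * Dr ^ ((1:ℝ)/3) + 25 * B := by
        have h1 : A ≤ 24 * a ^ 3 + 24 * a ^ 2 * b + 16 * ε ^ 2 * Dr := by
          rw [← h6]; exact hkey
        have h2 : A ≤ 24 * a ^ 3 + 25 * (a ^ 2 * b) := by linarith
        have h3 : 25 * B ^ ((2:ℝ)/3) * Dr ^ ((1:ℝ)/3) + 25 * B
            = 25 * a ^ 3 + 25 * (a ^ 2 * b) := by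
          rw [← ha2, ← ha3, ← hb_def]
          ring
        have ha3nn : (0:ℝ) ≤ a ^ 3 := by positivity
        linarith
      rw [hA_eq, hB_eq, hD_eq,
        ENNReal.ofReal_rpow_of_nonneg hBr_pos.le (by norm_num : (0:ℝ) ≤ 2/3),
        ENNReal.ofReal_rpow_of_nonneg hDr_nn (by norm_num : (0:ℝ) ≤ 1/3),
        ← ENNReal.ofReal_mul (by norm_num : (0:ℝ) ≤ 25),
        ← ENNReal.ofReal_mul (by positivity),
        ← ENNReal.ofReal_mul (by norm_num : (0:ℝ) ≤ 25),
        ← ENNReal.ofReal_add (by positivity) (by positivity)]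
      exact ENNReal.ofReal_le_ofReal hfinal
end
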